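/- arXiv:2205.13704 — 4 statements merged into one kernel-verified Lean document; each statement's English description precedes it below -/
import Mathlib

section
/- For a finite directed multigraph G, the set Path_G(∞) of infinite paths in G is countable if and only if G has no intersecting cycles. -/
open Filter Topology

variable {V E : Type*}

/-- A nonempty list of edges forms a directed path:
the target of each edge is the source of the next. -/
def IsDiPath (src tgt : E → V) (l : List E) : Prop :=
  l ≠ [] ∧ l.Chain' (fun e f => tgt e = src f)

/-- The path `l` starts at the vertex `v` (the source of its first edge is `v`). -/
def StartsAt (src : E → V) (l : List E) (v : V) : Prop :=
  l.head?.map src = some v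

/-- The path `l` ends at the vertex `w` (the target of its last edge is `w`). -/
def EndsAt (tgt : E → V) (l : List E) (w : V) : Prop :=
  l.getLast?.map tgt = some w

/-- `l` is a closed path: a path such that the target of the last edge
equals the source of the first edge. -/
def IsClosedDiPath (src tgt : E → V) (l : List E) : Prop :=
  IsDiPath src tgt l ∧ ∃ v : V, StartsAt src l v ∧ EndsAt tgt l v

/-- `l` is a simple cycle: a closed path whose edge sources are pairwise distinct. -/
def IsSimpleCycle (src tgt : E → V) (l : List E) : Prop :=
  IsClosedDiPath src tgt l ∧ (l.map src).Nodup

/-- The vertex `v` lies on the cycle `l`, i.e. it is the source of one of its edges. -/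
def OnCycle (src : E → V) (l : List E) (v : V) : Prop :=
  v ∈ l.map src

/-- Two simple cycles are distinct if neither is a cyclic rotation of the other;
the graph has no intersecting cycles if any two distinct simple cycles are
vertex-disjoint. -/
def NoIntersectingCycles (src tgt : E → V) : Prop :=
  ∀ l l' : List E, IsSimpleCycle src tgt l → IsSimpleCycle src tgt l' →
    ¬ l.IsRotated l' → ∀ v : V, ¬ (OnCycle src l v ∧ OnCycle src l' v)

/-- `v ≥ w`: either `v = w` or there is a directed path from `v` to `w`. -/
def Reaches (src tgt : E → V) (v w : V) : Prop :=
  v = w ∨ ∃ l : List E, IsDiPath src tgt l ∧ StartsAt src l v ∧ EndsAt tgt l w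

/-- `v` and `w` are mutually reachable. -/
def MutReach (src tgt : E → V) (v w : V) : Prop :=
  Reaches src tgt v w ∧ Reaches src tgt w v

/-- The number of directed paths of length `n` in the graph starting at `v`. -/
noncomputable def pathCount (src tgt : E → V) (v : V) (n : ℕ) : ℕ :=
  Nat.card {l : List E // l.length = n ∧ IsDiPath src tgt l ∧ StartsAt src l v}

/-- An infinite path in the graph. -/
def IsInfPath (src tgt : E → V) (p : ℕ → E) : Prop :=
  ∀ n : ℕ, tgt (p n) = src (p (n + 1))

/-- The vertex `v` is visited infinitely often by the infinite path `p`. -/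
def VisitedInfOften (src : E → V) (p : ℕ → E) (v : V) : Prop :=
  ∀ N : ℕ, ∃ n ≥ N, src (p n) = v

/-- `v ≥ C`: the vertex `v` reaches some vertex on the cycle `C`. -/
def ReachesCycle (src tgt : E → V) (v : V) (l : List E) : Prop :=
  ∃ w : V, OnCycle src l w ∧ Reaches src tgt v w

/-- `C ≥ C'`: some vertex on the cycle `C` reaches the cycle `C'`. -/
def CycleReachesCycle (src tgt : E → V) (l l' : List E) : Prop :=
  ∃ v : V, OnCycle src l v ∧ ReachesCycle src tgt v l'

/-- Two cycles are vertex-disjoint. -/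
def CyclesDisjoint (src : E → V) (l l' : List E) : Prop :=
  ∀ v : V, ¬ (OnCycle src l v ∧ OnCycle src l' v)

/-- The vertex `v` lies on two distinct simple cycles. -/
def OnTwoCycles (src tgt : E → V) (v : V) : Prop :=
  ∃ l l' : List E, IsSimpleCycle src tgt l ∧ IsSimpleCycle src tgt l' ∧
    ¬ l.IsRotated l' ∧ OnCycle src l v ∧ OnCycle src l' v

/-- The adjacency matrix of the graph, as a real matrix: the `(a, b)` entry is the
number of edges from `a` to `b`. -/
noncomputable def adjMatrix (src tgt : E → V) : Matrix V V ℝ :=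
  Matrix.of fun a b => (Nat.card {e : E // src e = a ∧ tgt e = b} : ℝ)


namespace CIP

/-- A closed walk at `u`, given as a function with length `n`. -/
def FW (src tgt : E → V) (u : V) (w : ℕ → E) (n : ℕ) : Prop :=
  0 < n ∧ (∀ t, t + 1 < n → tgt (w t) = src (w (t + 1))) ∧ src (w 0) = u ∧ tgt (w (n - 1)) = u

lemma FW_shrink (src tgt : E → V) {u : V} {w : ℕ → E} {n : ℕ} (h : FW src tgt u w n)
    {i j : ℕ} (hij : i < j) (hjn : j < n) (hs : src (w i) = src (w j)) :
    ∃ w' n', FW src tgt u w' n' ∧ w' 0 = w 0 ∧ n' < n := by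
  obtain ⟨hn, hch, h0, hl⟩ := h
  rcases Nat.eq_zero_or_pos i with hi | hi
  · subst hi
    refine ⟨w, j, ⟨hij, fun t ht => hch t (by omega), h0, ?_⟩, rfl, hjn⟩
    have hstep := hch (j - 1) (by omega)
    have hj1 : j - 1 + 1 = j := by omega
    rw [hj1] at hstep
    rw [hstep, ← hs, h0]
  · refine ⟨fun t => if t < i then w t else w (t + (j - i)), n - (j - i),
      ⟨by omega, ?_, ?_, ?_⟩, ?_, by omega⟩
    · intro t ht
      rcases lt_trichotomy (t + 1) i with h1 | h1 | h1
      · simp only [if_pos (by omega : t < i), if_pos h1]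
        exact hch t (by omega)
      · simp only [if_pos (by omega : t < i), if_neg (by omega : ¬ t + 1 < i)]
        have he : t + 1 + (j - i) = j := by omega
        rw [he, ← hs, ← h1]
        exact hch t (by omega)
      · simp only [if_neg (by omega : ¬ t < i), if_neg (by omega : ¬ t + 1 < i)]
        have he : t + 1 + (j - i) = t + (j - i) + 1 := by omega
        rw [he]
        exact hch _ (by omega)
    · simp only [if_pos hi]; exact h0
    · show tgt (if n - (j - i) - 1 < i then w (n - (j - i) - 1)
          else w (n - (j - i) - 1 + (j - i))) = u
      rw [if_neg (by omega : ¬ n - (j - i) - 1 < i)]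
      have he : n - (j - i) - 1 + (j - i) = n - 1 := by omega
      rw [he]; exact hl
    · simp only [if_pos hi]

lemma FW_cycle (src tgt : E → V) {u : V} {w : ℕ → E} {n : ℕ} (h : FW src tgt u w n)
    (hinj : Function.Injective (fun i : Fin n => src (w ↑i))) :
    IsSimpleCycle src tgt (List.ofFn fun i : Fin n => w ↑i) ∧
      OnCycle src (List.ofFn fun i : Fin n => w ↑i) u := by
  obtain ⟨hn, hch, h0, hl⟩ := h
  have hlen : (List.ofFn fun i : Fin n => w ↑i).length = n := by simp
  have hchain : (List.ofFn fun i : Fin n => w ↑i).Chain' (fun e f => tgt e = src f) := by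
    refine List.isChain_iff_getElem.2 ?_
    intro i hi
    rw [hlen] at hi
    simp only [List.getElem_ofFn]
    exact hch i (by omega)
  set l := List.ofFn fun i : Fin n => w ↑i with hldef
  have hne : l ≠ [] := by
    intro hx; rw [hx] at hlen; simp at hlen; omega
  have hhead : l.head? = some (w 0) := by
    rw [List.head?_eq_getElem?, hldef, List.getElem?_ofFn]
    simp [List.ofFnNthVal, hn]
  have hlast : l.getLast? = some (w (n - 1)) := by
    rw [List.getLast?_eq_getElem?, hldef]
    rw [List.getElem?_ofFn]
    have : l.length - 1 = n - 1 := by omega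
    simp only [hlen]
    simp [List.ofFnNthVal, (by omega : n - 1 < n)]
  refine ⟨⟨⟨⟨hne, ?_⟩, u, ?_, ?_⟩, ?_⟩, ?_⟩
  · exact hchain
  · rw [StartsAt, hhead]; simp [h0]
  · rw [EndsAt, hlast]; simp [hl]
  · rw [hldef, List.map_ofFn]
    exact List.nodup_ofFn.2 hinj
  · rw [OnCycle, hldef, List.map_ofFn]
    rw [List.mem_ofFn]
    exact ⟨⟨0, hn⟩, h0⟩

lemma key_not_rotated (src : E → V) {u : V} {n m : ℕ} (w₁ w₂ : ℕ → E) (hn : 0 < n)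
    (hm : 0 < m) (hne : w₁ 0 ≠ w₂ 0) (h1 : src (w₁ 0) = u) (h2 : src (w₂ 0) = u)
    (hinj : Function.Injective fun i : Fin n => src (w₁ ↑i)) :
    ¬ (List.ofFn fun i : Fin n => w₁ ↑i).IsRotated (List.ofFn fun i : Fin m => w₂ ↑i) := by
  rintro ⟨k, hk⟩
  have hlen1 : (List.ofFn fun i : Fin n => w₁ ↑i).length = n := by simp
  have hlen2 : (List.ofFn fun i : Fin m => w₂ ↑i).length = m := by simp
  have h0m : (0 : ℕ) < ((List.ofFn fun i : Fin n => w₁ ↑i).rotate k).length := by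
    rw [List.length_rotate, hlen1]; exact hn
  have hget := List.getElem_rotate (List.ofFn fun i : Fin n => w₁ ↑i) k 0 h0m
  simp only [List.length_ofFn] at hget
  have h0m' : (0 : ℕ) < ((List.ofFn fun i : Fin n => w₁ ↑i).rotate k).length := h0m
  rw [hk] at h0m'
  have heq : ((List.ofFn fun i : Fin n => w₁ ↑i).rotate k)[0]'h0m
      = (List.ofFn fun i : Fin m => w₂ ↑i)[0]'h0m' := by
    congr 1 <;> rw [hk]
  rw [hget, List.getElem_ofFn, List.getElem_ofFn] at heq
  -- heq : w₁ ((0 + k) % n) = w₂ 0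
  simp only [Fin.val_mk] at heq
  by_cases hk0 : (0 + k) % n = 0
  · rw [hk0] at heq
    exact hne heq
  · have hu : src (w₁ ((0 + k) % n)) = src (w₁ 0) := by
      rw [heq, h2, h1]
    have hlt : (0 + k) % n < n := Nat.mod_lt _ hn
    have := hinj (a₁ := ⟨(0 + k) % n, hlt⟩) (a₂ := ⟨0, hn⟩) hu
    have : (0 + k) % n = 0 := congrArg Fin.val this
    exact hk0 this

lemma key (src tgt : E → V) (hNIC : NoIntersectingCycles src tgt) :
    ∀ (N n m : ℕ) (w₁ w₂ : ℕ → E) (u : V), n + m ≤ N →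
      FW src tgt u w₁ n → FW src tgt u w₂ m → w₁ 0 = w₂ 0 := by
  intro N
  induction N using Nat.strong_induction_on with
  | _ N IH =>
    intro n m w₁ w₂ u hN h1 h2
    by_contra hne
    by_cases hd1 : ∃ i j, i < j ∧ j < n ∧ src (w₁ i) = src (w₁ j)
    · obtain ⟨i, j, hij, hjn, hs⟩ := hd1
      obtain ⟨w', n', h', h0, hlt⟩ := FW_shrink src tgt h1 hij hjn hs
      exact hne (h0 ▸ IH (n' + m) (by omega) n' m w' w₂ u le_rfl h' h2)
    by_cases hd2 : ∃ i j, i < j ∧ j < m ∧ src (w₂ i) = src (w₂ j)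
    · obtain ⟨i, j, hij, hjm, hs⟩ := hd2
      obtain ⟨w', m', h', h0, hlt⟩ := FW_shrink src tgt h2 hij hjm hs
      exact hne (h0 ▸ IH (n + m') (by omega) n m' w₁ w' u le_rfl h1 h')
    push_neg at hd1 hd2
    have hinj1 : Function.Injective fun i : Fin n => src (w₁ ↑i) := by
      intro a b hab
      rcases lt_trichotomy (a : ℕ) (b : ℕ) with h | h | h
      · exact absurd hab (hd1 a b h b.isLt)
      · exact Fin.ext h
      · exact absurd hab.symm (hd1 b a h a.isLt)
    have hinj2 : Function.Injective fun i : Fin m => src (w₂ ↑i) := by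
      intro a b hab
      rcases lt_trichotomy (a : ℕ) (b : ℕ) with h | h | h
      · exact absurd hab (hd2 a b h b.isLt)
      · exact Fin.ext h
      · exact absurd hab.symm (hd2 b a h a.isLt)
    obtain ⟨hsc1, hon1⟩ := FW_cycle src tgt h1 hinj1
    obtain ⟨hsc2, hon2⟩ := FW_cycle src tgt h2 hinj2
    exact hNIC _ _ hsc1 hsc2
      (key_not_rotated src w₁ w₂ h1.1 h2.1 hne h1.2.2.1 h2.2.2.1 hinj1) u ⟨hon1, hon2⟩

lemma eventually_periodic [Fintype V] [Fintype E] (src tgt : E → V)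
    (hNIC : NoIntersectingCycles src tgt) (p : ℕ → E) (hp : IsInfPath src tgt p) :
    ∃ a k, 0 < k ∧ ∀ n, a ≤ n → p (n + k) = p n := by
  classical
  obtain ⟨N, hN⟩ : ∃ N, ∀ n, N ≤ n → ∃ m, n < m ∧ p m = p n := by
    refine ⟨Finset.univ.sup fun e : E =>
      if h : {t | p t = e}.Finite then (h.toFinset.sup id) + 1 else 0, ?_⟩
    intro n hn
    by_contra hcon
    push_neg at hcon
    have hfin : {t | p t = p n}.Finite := by
      apply Set.Finite.subset (Set.finite_Icc 0 n)
      intro t ht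
      simp only [Set.mem_setOf_eq] at ht
      rcases lt_or_ge n t with h | h
      · exact absurd ht (hcon t h)
      · exact Set.mem_Icc.2 ⟨Nat.zero_le _, h⟩
    have hmem : n ∈ hfin.toFinset := by simp
    have h1 : n + 1 ≤ Finset.univ.sup fun e : E =>
        if h : {t | p t = e}.Finite then (h.toFinset.sup id) + 1 else 0 := by
      refine le_trans ?_ (Finset.le_sup (f := fun e : E =>
        if h : {t | p t = e}.Finite then (h.toFinset.sup id) + 1 else 0)
        (Finset.mem_univ (p n)))
      show n + 1 ≤ if h : {t | p t = p n}.Finite then h.toFinset.sup id + 1 else 0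
      rw [dif_pos hfin]
      have := Finset.le_sup (f := id) hmem
      simpa using this
    omega
  have hdet : ∀ n₁ n₂, N ≤ n₁ → N ≤ n₂ → src (p n₁) = src (p n₂) → p n₁ = p n₂ := by
    intro n₁ n₂ h₁ h₂ hs
    obtain ⟨m₁, hm₁, he₁⟩ := hN n₁ h₁
    obtain ⟨m₂, hm₂, he₂⟩ := hN n₂ h₂
    have hw₁ : FW src tgt (src (p n₁)) (fun t => p (n₁ + t)) (m₁ - n₁) := by
      refine ⟨by omega, ?_, by simp, ?_⟩
      · intro t ht
        have e : n₁ + (t + 1) = n₁ + t + 1 := by omega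
        simp only [e]
        exact hp (n₁ + t)
      · have e : n₁ + (m₁ - n₁ - 1) = m₁ - 1 := by omega
        simp only [e]
        have h' := hp (m₁ - 1)
        have e2 : m₁ - 1 + 1 = m₁ := by omega
        rw [e2] at h'
        rw [h', he₁]
    have hw₂ : FW src tgt (src (p n₁)) (fun t => p (n₂ + t)) (m₂ - n₂) := by
      refine ⟨by omega, ?_, by simpa using hs.symm, ?_⟩
      · intro t ht
        have e : n₂ + (t + 1) = n₂ + t + 1 := by omega
        simp only [e]
        exact hp (n₂ + t)
      · have e : n₂ + (m₂ - n₂ - 1) = m₂ - 1 := by omega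
        simp only [e]
        have h' := hp (m₂ - 1)
        have e2 : m₂ - 1 + 1 = m₂ := by omega
        rw [e2] at h'
        rw [h', he₂, ← hs]
    have := key src tgt hNIC ((m₁ - n₁) + (m₂ - n₂)) _ _ _ _ _ le_rfl hw₁ hw₂
    simpa using this
  obtain ⟨x, y, hxy, hfxy⟩ := Fintype.exists_ne_map_eq_of_card_lt
    (fun i : Fin (Fintype.card V + 1) => src (p (N + ↑i))) (by simp)
  have hwlog : ∃ a b : ℕ, N ≤ a ∧ a < b ∧ src (p a) = src (p b) := by
    rcases lt_trichotomy (x : ℕ) (y : ℕ) with h | h | h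
    · exact ⟨N + ↑x, N + ↑y, by omega, by omega, hfxy⟩
    · exact absurd (Fin.ext h) hxy
    · exact ⟨N + ↑y, N + ↑x, by omega, by omega, hfxy.symm⟩
  obtain ⟨a, b, hNa, hab, hsab⟩ := hwlog
  have hper : ∀ i, p (a + i) = p (b + i) := by
    intro i
    induction i with
    | zero => simpa using hdet a b hNa (by omega) hsab
    | succ i ih =>
      have h₁ : src (p (a + i + 1)) = src (p (b + i + 1)) := by
        rw [← hp (a + i), ← hp (b + i), ih]
      have := hdet (a + i + 1) (b + i + 1) (by omega) (by omega) h₁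
      have e1 : a + (i + 1) = a + i + 1 := by omega
      have e2 : b + (i + 1) = b + i + 1 := by omega
      rw [e1, e2]
      exact this
  refine ⟨a, b - a, by omega, ?_⟩
  intro n hn
  have h := hper (n - a)
  have e1 : a + (n - a) = n := by omega
  have e2 : b + (n - a) = n + (b - a) := by omega
  rw [e1, e2] at h
  exact h.symm

lemma period_mod {p : ℕ → E} {a k : ℕ} (hk : 0 < k)
    (hper : ∀ n, a ≤ n → p (n + k) = p n) :
    ∀ n, a ≤ n → p n = p (a + (n - a) % k) := by
  intro n
  induction n using Nat.strong_induction_on with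
  | _ n IH =>
    intro hn
    by_cases h : n < a + k
    · have e1 : (n - a) % k = n - a := Nat.mod_eq_of_lt (by omega)
      rw [e1]
      have e2 : a + (n - a) = n := by omega
      rw [e2]
    · push_neg at h
      have h1 : p n = p (n - k) := by
        have h2 := hper (n - k) (by omega)
        have e : n - k + k = n := by omega
        rw [e] at h2
        exact h2
      rw [h1, IH (n - k) (by omega) (by omega)]
      have e3 : (n - a) % k = (n - k - a) % k := by
        have e2 : n - a = (n - k - a) + k := by omega
        rw [e2, Nat.add_mod_right]
      rw [e3]

noncomputable def recon (e₀ : E) (z : ℕ × ℕ × List E) : ℕ → E := fun n =>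
  if n < z.1 then z.2.2.getD n e₀ else z.2.2.getD (z.1 + (n - z.1) % z.2.1) e₀

lemma countable_of_NIC [Fintype V] [Fintype E] (src tgt : E → V)
    (hNIC : NoIntersectingCycles src tgt) :
    {p : ℕ → E | IsInfPath src tgt p}.Countable := by
  classical
  rcases isEmpty_or_nonempty E with hE | hE
  · haveI : IsEmpty (ℕ → E) := ⟨fun f => IsEmpty.false (f 0)⟩
    rw [Set.eq_empty_of_isEmpty {p | IsInfPath src tgt p}]
    exact Set.countable_empty
  obtain ⟨e₀⟩ := hE
  refine Set.Countable.mono ?_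
    (Set.countable_iUnion fun z : ℕ × ℕ × List E => Set.countable_singleton (recon e₀ z))
  intro p hp
  obtain ⟨a, k, hk, hper⟩ := eventually_periodic src tgt hNIC p hp
  refine Set.mem_iUnion.2 ⟨(a, k, List.ofFn fun i : Fin (a + k) => p ↑i), ?_⟩
  refine Set.mem_singleton_iff.2 ?_
  have hgetD : ∀ t, t < a + k → (List.ofFn fun i : Fin (a + k) => p ↑i).getD t e₀ = p t := by
    intro t ht
    rw [List.getD_eq_getElem _ _ (by simpa using ht), List.getElem_ofFn]
  funext n
  by_cases hna : n < a
  · rw [recon]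
    simp only [if_pos hna]
    exact (hgetD n (by omega)).symm
  · push_neg at hna
    rw [recon]
    simp only [if_neg (not_lt.2 hna)]
    rw [hgetD _ (by have := Nat.mod_lt (n - a) hk; omega)]
    exact period_mod hk hper n hna

lemma rotate_cycle (src tgt : E → V) {l : List E} {v : V}
    (hsc : IsSimpleCycle src tgt l) (hv : OnCycle src l v) :
    ∃ A : List E, l.IsRotated A ∧ A ≠ [] ∧ A.Chain' (fun e f => tgt e = src f) ∧
      A.head?.map src = some v ∧ A.getLast?.map tgt = some v ∧ (A.map src).Nodup := by
  obtain ⟨⟨⟨hne, hch⟩, u, hstart, hend⟩, hnd⟩ := hsc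
  have hn : 0 < l.length := List.length_pos_iff.2 hne
  obtain ⟨⟨k, hk'⟩, hkv⟩ := List.mem_iff_get.1 hv
  have hk : k < l.length := by simpa using hk'
  rw [List.get_eq_getElem, List.getElem_map] at hkv
  have hkv2 : src (l[k]'hk) = v := hkv
  clear hkv
  rw [StartsAt] at hstart
  rw [EndsAt] at hend
  have hh : l.head? = some (l[0]'hn) := by
    rw [List.head?_eq_getElem?, List.getElem?_eq_getElem hn]
  have hla : l.getLast? = some (l[l.length - 1]'(by omega)) := by
    rw [List.getLast?_eq_getElem?, List.getElem?_eq_getElem (by omega)]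
  rw [hh] at hstart
  rw [hla] at hend
  simp only [Option.map_some, Option.some.injEq] at hstart hend
  have hclose : tgt (l[l.length - 1]'(by omega)) = src (l[0]'hn) := by
    rw [hstart, hend]
  have hchE : ∀ (i : ℕ) (h : i + 1 < l.length),
      tgt (l[i]'(by omega)) = src (l[i+1]'h) := by
    intro i h
    have := List.isChain_iff_getElem.1 hch i (by omega)
    simpa [List.get_eq_getElem] using this
  have hcyc : ∀ (i : ℕ) (h : i < l.length),
      tgt (l[i]'h) = src (l[(i+1) % l.length]'(Nat.mod_lt _ hn)) := by
    intro i h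
    by_cases h2 : i + 1 < l.length
    · have e : (i + 1) % l.length = i + 1 := Nat.mod_eq_of_lt h2
      simp only [e]
      exact hchE i h2
    · have e1 : i = l.length - 1 := by omega
      subst e1
      simp only [show l.length - 1 + 1 = l.length from by omega, Nat.mod_self]
      exact hclose
  refine ⟨l.rotate k, ⟨k, rfl⟩, ?_, ?_, ?_, ?_, ?_⟩
  · intro hx
    have h2 := congrArg List.length hx
    rw [List.length_rotate] at h2
    simp only [List.length_nil] at h2
    omega
  · refine List.isChain_iff_getElem.2 ?_
    intro t ht
    rw [List.length_rotate] at ht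
    rw [List.getElem_rotate, List.getElem_rotate]
    have e : (t + 1 + k) % l.length = ((t + k) % l.length + 1) % l.length := by
      rw [Nat.mod_add_mod]
      congr 1
      omega
    simp only [e]
    exact hcyc ((t + k) % l.length) (Nat.mod_lt _ hn)
  · have h0 : (0:ℕ) < (l.rotate k).length := by rw [List.length_rotate]; omega
    rw [List.head?_eq_getElem?, List.getElem?_eq_getElem h0]
    rw [List.getElem_rotate]
    have e : (0 + k) % l.length = k := by
      rw [Nat.zero_add, Nat.mod_eq_of_lt hk]
    simp only [e, Option.map_some, Option.some.injEq]
    exact hkv2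
  · have h0 : (l.rotate k).length - 1 < (l.rotate k).length := by
      rw [List.length_rotate]; omega
    rw [List.getLast?_eq_getElem?, List.getElem?_eq_getElem h0]
    rw [List.getElem_rotate]
    simp only [Option.map_some, Option.some.injEq, List.length_rotate]
    have hcy := hcyc ((l.length - 1 + k) % l.length) (Nat.mod_lt _ hn)
    have e : ((l.length - 1 + k) % l.length + 1) % l.length = k := by
      rw [Nat.mod_add_mod]
      have e2 : l.length - 1 + k + 1 = l.length + k := by omega
      rw [e2, Nat.add_mod_left, Nat.mod_eq_of_lt hk]
    simp only [e] at hcy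
    rw [hcy, hkv2]
  · rw [List.map_rotate]
    exact (List.rotate_perm (l.map src) k).nodup_iff.2 hnd

lemma block_eq_of_agree (src tgt : E → V) {v : V} {A B : List E} (e₀ : E)
    (hA : A ≠ []) (hAh : A.head?.map src = some v) (hAl : A.getLast?.map tgt = some v)
    (hBh : B.head?.map src = some v)
    (hBch : B.Chain' fun e f => tgt e = src f) (hBnd : (B.map src).Nodup)
    (hlen : A.length ≤ B.length)
    (heq : ∀ t, t < A.length → A.getD t e₀ = B.getD t e₀) :
    A = B := by
  have hApos : 0 < A.length := List.length_pos_iff.2 hA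
  have hBpos : 0 < B.length := by omega
  have heqE : ∀ (t) (h : t < A.length), A[t] = B[t]'(by omega) := by
    intro t h
    have h2 := heq t h
    rwa [List.getD_eq_getElem _ _ h, List.getD_eq_getElem _ _ (by omega)] at h2
  by_cases hl : A.length = B.length
  · exact List.ext_getElem hl (fun n h1 h2 => heqE n h1)
  exfalso
  have hlt : A.length < B.length := by omega
  have hch := List.isChain_iff_getElem.1 hBch (A.length - 1) (by omega)
  have e : A.length - 1 + 1 = A.length := by omega
  simp only [e] at hch
  -- hch : tgt B[A.length - 1] = src B[A.length]
  have hAlast : A.getLast? = some (A[A.length - 1]'(by omega)) := by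
    rw [List.getLast?_eq_getElem?, List.getElem?_eq_getElem (by omega)]
  rw [hAlast] at hAl
  simp only [Option.map_some, Option.some.injEq] at hAl
  have hsrcBi : src (B[A.length]'hlt) = v := by
    rw [← hch, ← heqE (A.length - 1) (by omega), hAl]
  have hAhead : ∀ (L : List E) (hL : 0 < L.length), L.head? = some (L[0]'hL) := by
    intro L hL
    rw [List.head?_eq_getElem?, List.getElem?_eq_getElem hL]
  rw [hAhead B hBpos] at hBh
  simp only [Option.map_some, Option.some.injEq] at hBh
  have hginj := List.nodup_iff_injective_get.1 hBnd
  have h00 : (B.map src).get ⟨0, by simp [hBpos]⟩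
      = (B.map src).get ⟨A.length, by simp [hlt]⟩ := by
    rw [List.get_eq_getElem, List.get_eq_getElem, List.getElem_map, List.getElem_map,
      hBh, hsrcBi]
  have hfin := hginj h00
  have : (0:ℕ) = A.length := congrArg Fin.val hfin
  omega

def Wd (C : Bool → List E) (f : ℕ → Bool) : ℕ → List E
  | 0 => []
  | m + 1 => Wd C f m ++ C (f m)

lemma Wd_length_ge (C : Bool → List E) (hC : ∀ b, C b ≠ []) (f : ℕ → Bool) :
    ∀ m, m ≤ (Wd C f m).length := by
  intro m
  induction m with
  | zero => simp
  | succ m ih =>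
    rw [Wd, List.length_append]
    have := List.length_pos_iff.2 (hC (f m))
    omega

lemma Wd_prefix (C : Bool → List E) (f : ℕ → Bool) {m m' : ℕ} (h : m ≤ m') :
    Wd C f m <+: Wd C f m' := by
  induction m' with
  | zero =>
    have e : m = 0 := by omega
    subst e; exact List.prefix_refl _
  | succ m' ih =>
    rcases Nat.lt_or_ge m (m' + 1) with h2 | h2
    · refine (ih (by omega)).trans ?_
      rw [Wd]
      exact List.prefix_append _ _
    · have e : m = m' + 1 := by omega
      subst e; exact List.prefix_refl _

lemma Wd_congr (C : Bool → List E) (f g : ℕ → Bool) :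
    ∀ m, (∀ i, i < m → f i = g i) → Wd C f m = Wd C g m := by
  intro m
  induction m with
  | zero => intro _; rfl
  | succ m ih =>
    intro h
    rw [Wd, Wd, ih (fun i hi => h i (by omega)), h m (by omega)]

lemma Wd_chain (src tgt : E → V) {v : V} (C : Bool → List E)
    (hCch : ∀ b, (C b).Chain' (fun e f => tgt e = src f))
    (hCh : ∀ b, (C b).head?.map src = some v)
    (hCl : ∀ b, (C b).getLast?.map tgt = some v) (f : ℕ → Bool) :
    ∀ m, (Wd C f m).Chain' (fun e f => tgt e = src f) ∧
      (∀ x ∈ (Wd C f m).getLast?, tgt x = v) := by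
  intro m
  induction m with
  | zero =>
    constructor
    · exact List.isChain_nil
    · intro x hx; simp [Wd] at hx
  | succ m ih =>
    rw [Wd]
    constructor
    · refine ih.1.append (hCch (f m)) ?_
      intro x hx y hy
      obtain ⟨z, hz, hzv⟩ := Option.map_eq_some_iff.1 (hCh (f m))
      rw [hz] at hy
      simp only [Option.mem_def, Option.some.injEq] at hy
      subst hy
      rw [ih.2 x hx, hzv]
    · intro x hx
      rw [List.getLast?_append] at hx
      obtain ⟨z, hz, hzv⟩ := Option.map_eq_some_iff.1 (hCl (f m))
      rw [hz] at hx
      rw [show (some z).or (Wd C f m).getLast? = some z from rfl] at hx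
      simp only [Option.mem_def, Option.some.injEq] at hx
      subst hx
      exact hzv

lemma getD_of_prefix {l l' : List E} (e₀ : E) (h : l <+: l') {n : ℕ} (hn : n < l.length) :
    l'.getD n e₀ = l.getD n e₀ := by
  rw [List.getD_eq_getElem _ _ hn, List.getD_eq_getElem _ _ (lt_of_lt_of_le hn h.length_le)]
  exact (h.getElem hn).symm

lemma not_countable_of_not_NIC [Fintype V] [Fintype E] (src tgt : E → V)
    (h : ¬ NoIntersectingCycles src tgt) :
    ¬ {p : ℕ → E | IsInfPath src tgt p}.Countable := by
  classical
  intro hc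
  rw [NoIntersectingCycles] at h
  push_neg at h
  obtain ⟨l, l', hsc, hsc', hrot, v, hv, hv'⟩ := h
  obtain ⟨A, hArot, hAne, hAch, hAh, hAl, hAnd⟩ := rotate_cycle src tgt hsc hv
  obtain ⟨B, hBrot, hBne, hBch, hBh, hBl, hBnd⟩ := rotate_cycle src tgt hsc' hv'
  have hAB : A ≠ B := by
    intro hx
    exact hrot (hArot.trans (hx ▸ hBrot.symm))
  set e₀ : E := A.head hAne with he₀
  set C : Bool → List E := fun b => cond b A B with hC
  have hCne : ∀ b, C b ≠ [] := by
    intro b; rw [hC]; cases b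
    · exact hBne
    · exact hAne
  have hCch : ∀ b, (C b).Chain' (fun e f => tgt e = src f) := by
    intro b; rw [hC]; cases b
    · exact hBch
    · exact hAch
  have hCh : ∀ b, (C b).head?.map src = some v := by
    intro b; rw [hC]; cases b
    · exact hBh
    · exact hAh
  have hCl : ∀ b, (C b).getLast?.map tgt = some v := by
    intro b; rw [hC]; cases b
    · exact hBl
    · exact hAl
  have hCnd : ∀ b, ((C b).map src).Nodup := by
    intro b; rw [hC]; cases b
    · exact hBnd
    · exact hAnd
  set q : (ℕ → Bool) → ℕ → E := fun f n => (Wd C f (n + 1)).getD n e₀ with hq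
  have hqstable : ∀ (f : ℕ → Bool) (i m : ℕ), i < (Wd C f m).length →
      q f i = (Wd C f m).getD i e₀ := by
    intro f i m him
    simp only [hq]
    rcases le_or_gt (i + 1) m with hm | hm
    · exact (getD_of_prefix e₀ (Wd_prefix C f hm)
        (lt_of_lt_of_le (by omega) (Wd_length_ge C hCne f (i + 1)))).symm
    · exact getD_of_prefix e₀ (Wd_prefix C f (by omega : m ≤ i + 1)) him
  have hqpath : ∀ f, IsInfPath src tgt (q f) := by
    intro f n
    rw [hqstable f n (n + 2) (lt_of_lt_of_le (by omega) (Wd_length_ge C hCne f (n + 2))),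
      hqstable f (n + 1) (n + 2) (lt_of_lt_of_le (by omega) (Wd_length_ge C hCne f (n + 2)))]
    have hlen : n + 1 < (Wd C f (n + 2)).length :=
      lt_of_lt_of_le (by omega) (Wd_length_ge C hCne f (n + 2))
    rw [List.getD_eq_getElem _ _ (by omega), List.getD_eq_getElem _ _ hlen]
    have hchain := (Wd_chain src tgt C hCch hCh hCl f (n + 2)).1
    have := List.isChain_iff_getElem.1 hchain n (by omega)
    simpa [List.get_eq_getElem] using this
  have hqinj : Function.Injective q := by
    intro f g hfg
    by_contra hne
    have hex : ∃ n, f n ≠ g n := Function.ne_iff.1 hne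
    set n := Nat.find hex with hn
    have hfgn : f n ≠ g n := Nat.find_spec hex
    have hmin : ∀ i, i < n → f i = g i := fun i hi => of_not_not (Nat.find_min hex hi)
    have hW : Wd C f n = Wd C g n := Wd_congr C f g n hmin
    have hkey : ∀ t, t < (C (f n)).length → t < (C (g n)).length →
        (C (f n)).getD t e₀ = (C (g n)).getD t e₀ := by
      intro t ht1 ht2
      have hlf : (Wd C f (n + 1)).length = (Wd C f n).length + (C (f n)).length := by
        rw [Wd, List.length_append]
      have hlg : (Wd C g (n + 1)).length = (Wd C f n).length + (C (g n)).length := by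
        rw [Wd, ← hW, List.length_append]
      have h1 : q f ((Wd C f n).length + t) = (C (f n)).getD t e₀ := by
        rw [hqstable f ((Wd C f n).length + t) (n + 1) (by omega)]
        rw [Wd]
        rw [List.getD_eq_getElem _ _ (by rw [List.length_append]; omega),
          List.getD_eq_getElem _ _ ht1]
        rw [List.getElem_append_right (by omega)]
        simp only [Nat.add_sub_cancel_left]
      have h2 : q g ((Wd C f n).length + t) = (C (g n)).getD t e₀ := by
        rw [hqstable g ((Wd C f n).length + t) (n + 1) (by omega)]
        have hWg : Wd C g (n + 1) = Wd C f n ++ C (g n) := by rw [Wd, ← hW]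
        rw [hWg]
        rw [List.getD_eq_getElem _ _ (by rw [List.length_append]; omega),
          List.getD_eq_getElem _ _ ht2]
        rw [List.getElem_append_right (by omega)]
        simp only [Nat.add_sub_cancel_left]
      rw [← h1, ← h2, hfg]
    have hCfg : C (f n) ≠ C (g n) := by
      rw [hC]
      cases hf : f n <;> cases hg : g n
      · exact absurd (hf.trans hg.symm) hfgn
      · exact fun hx => hAB hx.symm
      · exact hAB
      · exact absurd (hf.trans hg.symm) hfgn
    rcases le_total (C (f n)).length (C (g n)).length with hle | hle
    · exact hCfg (block_eq_of_agree src tgt e₀ (hCne (f n)) (hCh (f n)) (hCl (f n))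
        (hCh (g n)) (hCch (g n)) (hCnd (g n)) hle
        (fun t ht => hkey t ht (lt_of_lt_of_le ht hle)))
    · exact hCfg (block_eq_of_agree src tgt e₀ (hCne (g n)) (hCh (g n)) (hCl (g n))
        (hCh (f n)) (hCch (f n)) (hCnd (f n)) hle
        (fun t ht => (hkey t (lt_of_lt_of_le ht hle) ht).symm)).symm
  have hcnt : Countable ↥{p : ℕ → E | IsInfPath src tgt p} := Set.countable_coe_iff.mpr hc
  obtain ⟨ν, hν⟩ := exists_injective_nat ↥{p : ℕ → E | IsInfPath src tgt p}
  refine Function.cantor_injective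
    (fun s : Set ℕ => ν ⟨q (fun n => decide (n ∈ s)), hqpath _⟩) ?_
  intro s s' hss
  have h1 := hν hss
  have h2 : q (fun n => decide (n ∈ s)) = q (fun n => decide (n ∈ s')) :=
    congrArg Subtype.val h1
  have h3 := hqinj h2
  ext x
  exact decide_eq_decide.mp (congrFun h3 x)

end CIP

/-- The set of infinite paths in a finite directed multigraph is
countable if and only if the graph has no intersecting cycles. -/
theorem countable_infPaths_iff_noIntersectingCycles [Fintype V] [Fintype E]
    (src tgt : E → V) :
    {p : ℕ → E | IsInfPath src tgt p}.Countable ↔ NoIntersectingCycles src tgt := by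
  constructor
  · intro hc
    by_contra h
    exact CIP.not_countable_of_not_NIC src tgt h hc
  · exact CIP.countable_of_NIC src tgt
end

section
/- Let G be a finite directed multigraph and suppose two distinct simple cycles of G share a vertex v. Then the set of infinite paths p in G with src (p 0) = v has the cardinality of the continuum. -/
open Filter Topology

variable {V E : Type*}

lemma exists_loop (src tgt : E → V) {l : List E} {v : V}
    (hl : IsSimpleCycle src tgt l) (hvl : OnCycle src l v) :
    ∃ (g : ℕ → E) (m : ℕ) (a : List E), l.IsRotated a ∧ a.length = m ∧ 0 < m ∧
      (∀ n, g (n + m) = g n) ∧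
      (∀ n, tgt (g n) = src (g (n + 1))) ∧
      src (g 0) = v ∧
      (∀ j, 0 < j → j < m → src (g j) ≠ v) ∧
      (∀ j, j < m → a.getD j (g 0) = g j) := by
  obtain ⟨⟨⟨hne, hchain⟩, w, hstart, hend⟩, hnodup⟩ := hl
  set m := l.length with hm
  have hm0 : 0 < m := List.length_pos_iff.mpr hne
  obtain ⟨e, hel, hev⟩ := List.mem_map.mp hvl
  obtain ⟨i, hie⟩ := List.mem_iff_get.mp hel
  -- head and last facts
  have hhead : src (l.getD 0 e) = w := by
    have h1 : l.head? = some (l.getD 0 e) := by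
      rw [List.head?_eq_head hne, List.getD_eq_getElem _ _ hm0]
      simp [List.head_eq_getElem]
    rw [StartsAt, h1] at hstart
    simpa using hstart
  have hlast : tgt (l.getD (m - 1) e) = w := by
    have h1 : l.getLast? = some (l.getD (m - 1) e) := by
      rw [List.getLast?_eq_getLast hne, List.getD_eq_getElem _ _ (by omega)]
      simp [List.getLast_eq_getElem, hm]
    rw [EndsAt, h1] at hend
    simpa using hend
  -- the step fact for l
  have step : ∀ k, k < m → tgt (l.getD k e) = src (l.getD ((k + 1) % m) e) := by
    intro k hk
    rcases Nat.lt_or_ge (k + 1) m with h | h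
    · have h2 := List.isChain_iff_getElem.mp hchain k (by exact h)
      have hmod : (k + 1) % m = k + 1 := Nat.mod_eq_of_lt h
      rw [hmod, List.getD_eq_getElem _ _ hk, List.getD_eq_getElem _ _ h]
      simpa [List.get_eq_getElem] using h2
    · have hk1 : k = m - 1 := by omega
      have hmod : (k + 1) % m = 0 := by
        have : k + 1 = m := by omega
        simp [this]
      rw [hmod, hk1, hlast, hhead]
  have geti : src (l.getD (↑i) e) = v := by
    rw [List.getD_eq_getElem _ _ i.isLt]
    simp only [List.get_eq_getElem] at hie
    rw [hie, hev]
  -- source injectivity from nodup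
  have srcinj : ∀ j k, j < m → k < m → src (l.getD j e) = src (l.getD k e) → j = k := by
    intro j k hj hk hs
    rw [List.getD_eq_getElem _ _ hj, List.getD_eq_getElem _ _ hk] at hs
    have h1 : (l.map src)[j]'(by simpa using hj) = (l.map src)[k]'(by simpa using hk) := by
      simpa using hs
    exact (List.Nodup.getElem_inj_iff hnodup).mp h1
  refine ⟨fun n => l.getD ((n + ↑i) % m) e, m, l.rotate i,
    ⟨i, rfl⟩, List.length_rotate l i, hm0, ?_, ?_, ?_, ?_, ?_⟩
  · intro n
    have h1 : (n + m + ↑i) % m = (n + ↑i) % m := by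
      rw [show n + m + ↑i = (n + ↑i) + m by omega, Nat.add_mod_right]
    simp only [h1]
  · intro n
    have h1 := step ((n + ↑i) % m) (Nat.mod_lt _ hm0)
    have h2 : ((n + ↑i) % m + 1) % m = (n + 1 + ↑i) % m := by
      rw [Nat.mod_add_mod]
      congr 1
      omega
    rw [h1, h2]
  · show src (l.getD ((0 + ↑i) % m) e) = v
    rw [Nat.zero_add, Nat.mod_eq_of_lt (show (i:ℕ) < m from i.isLt)]
    exact geti
  · intro j hj0 hjm hsrc
    have h1 : (j + ↑i) % m = ↑i :=
      srcinj _ _ (Nat.mod_lt _ hm0) i.isLt (hsrc.trans geti.symm)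
    have h2 : j % m = 0 := by
      have h3 : (j + ↑i) % m = (↑i) % m := by rw [h1, Nat.mod_eq_of_lt i.isLt]
      have h4 : j + ↑i ≡ 0 + ↑i [MOD m] := by simpa [Nat.ModEq] using h3
      simpa [Nat.ModEq] using Nat.ModEq.add_right_cancel' _ h4
    have hd : m ∣ j := Nat.dvd_of_mod_eq_zero h2
    have := Nat.le_of_dvd hj0 hd
    omega
  · intro j hj
    rw [List.getD_eq_getElem _ _ (by simpa using hj), List.getElem_rotate]
    show _ = l.getD ((j + ↑i) % m) e
    rw [List.getD_eq_getElem _ _ (Nat.mod_lt _ hm0)]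

/-- If two distinct simple cycles share a vertex `v`, then the set of
infinite paths starting at `v` has the cardinality of the continuum. -/
theorem continuum_infPaths_of_twoCycles [Fintype V] [Fintype E] (src tgt : E → V)
    (v : V) (hv : OnTwoCycles src tgt v) :
    Cardinal.mk {p : ℕ → E // IsInfPath src tgt p ∧ src (p 0) = v} = Cardinal.continuum := by
  obtain ⟨l, l', hl, hl', hrot, hvl, hvl'⟩ := hv
  obtain ⟨g, m, a, hla, ham, hm0, gper, gstep, g0, gnv, gget⟩ := exists_loop src tgt hl hvl
  obtain ⟨h, m', b, hlb, hbm, hm0', hper, hstep, h0, hnv, hget⟩ := exists_loop src tgt hl' hvl'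
  set L := m * m' with hL
  have hL0 : 0 < L := Nat.mul_pos hm0 hm0'
  have gperk : ∀ k n, g (n + k * m) = g n := by
    intro k
    induction k with
    | zero => simp
    | succ k ih =>
      intro n
      rw [show n + (k+1) * m = (n + k * m) + m by ring, gper, ih]
  have hperk : ∀ k n, h (n + k * m') = h n := by
    intro k
    induction k with
    | zero => simp
    | succ k ih =>
      intro n
      rw [show n + (k+1) * m' = (n + k * m') + m' by ring, hper, ih]
  have gmodL : ∀ n, g (n % L) = g n := by
    intro n
    conv_rhs => rw [← Nat.mod_add_div n L]
    rw [show n % L + L * (n / L) = n % L + (n / L * m') * m by rw [hL]; ring, gperk]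
  have hmodL : ∀ n, h (n % L) = h n := by
    intro n
    conv_rhs => rw [← Nat.mod_add_div n L]
    rw [show n % L + L * (n / L) = n % L + (n / L * m) * m' by rw [hL]; ring, hperk]
  -- g and h differ somewhere
  have key : ∀ (g h : ℕ → E) (m m' : ℕ), 0 < m → (∀ n, g (n + m) = g n) →
      src (g 0) = v → (∀ j, 0 < j → j < m' → src (h j) ≠ v) → m < m' → g m ≠ h m := by
    intro g h m m' hm0 gper g0 hnv hlt heq
    have h1 : src (g m) = v := by
      have := gper 0
      simp only [Nat.zero_add] at this
      rw [this, g0]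
    exact hnv m hm0 hlt (heq ▸ h1)
  have hgh : ∃ j, g j ≠ h j := by
    rcases lt_trichotomy m m' with hc | hc | hc
    · exact ⟨m, key g h m m' hm0 gper g0 hnv hc⟩
    · subst hc
      by_contra hall
      push_neg at hall
      apply hrot
      have hab : a = b := by
        apply List.ext_getElem (ham.trans hbm.symm)
        intro j h1 h2
        have e1 : a.getD j (g 0) = g j := gget j (by omega)
        have e2 : b.getD j (h 0) = h j := hget j (by omega)
        rw [List.getD_eq_getElem _ _ h1] at e1
        rw [List.getD_eq_getElem _ _ h2] at e2
        rw [e1, e2, hall j]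
      exact hla.trans (hab ▸ hlb.symm)
    · exact ⟨m', fun hh => key h g m' m hm0' hper h0 gnv hc hh.symm⟩
  obtain ⟨j0, hj0⟩ := hgh
  -- the family of infinite paths
  set f : (ℕ → Bool) → ℕ → E := fun s n => if s (n / L) then h n else g n with hf
  have hstartf : ∀ s, src (f s 0) = v := by
    intro s
    show src (if s (0 / L) then h 0 else g 0) = v
    split
    · exact h0
    · exact g0
  have hinff : ∀ s, IsInfPath src tgt (f s) := by
    intro s n
    by_cases hd : (n + 1) % L = 0
    · have e1 : tgt (f s n) = v := by
        show tgt (if s (n / L) then h n else g n) = v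
        have hgn : g (n + 1) = g 0 := by rw [← gmodL (n+1), hd]
        have hhn : h (n + 1) = h 0 := by rw [← hmodL (n+1), hd]
        split
        · rw [hstep n, hhn, h0]
        · rw [gstep n, hgn, g0]
      have e2 : src (f s (n + 1)) = v := by
        show src (if s ((n + 1) / L) then h (n + 1) else g (n + 1)) = v
        have hgn : g (n + 1) = g 0 := by rw [← gmodL (n+1), hd]
        have hhn : h (n + 1) = h 0 := by rw [← hmodL (n+1), hd]
        split
        · rw [hhn, h0]
        · rw [hgn, g0]
      rw [e1, e2]
    · have hq : (n + 1) / L = n / L :=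
        Nat.succ_div_of_not_dvd (fun hdvd => hd (Nat.eq_zero_of_dvd_of_lt hdvd (by omega) |> absurd <| by
          exact fun _ => by omega))
      show tgt (if s (n / L) then h n else g n) = src (if s ((n+1) / L) then h (n+1) else g (n+1))
      rw [hq]
      split
      · exact hstep n
      · exact gstep n
  -- injectivity
  have hinj : Function.Injective f := by
    intro s t hst
    funext k
    by_contra hk
    set j := j0 % L with hj
    have hjL : j < L := Nat.mod_lt _ hL0
    have hgj : g (k * L + j) = g j0 := by
      rw [show k * L + j = j + (k * m') * m by rw [hj, hL]; ring, gperk, hj, gmodL]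
    have hhj : h (k * L + j) = h j0 := by
      rw [show k * L + j = j + (k * m) * m' by rw [hj, hL]; ring, hperk, hj, hmodL]
    have hdiv : (k * L + j) / L = k := by
      rw [show k * L + j = j + L * k by ring, Nat.add_mul_div_left _ _ hL0,
        Nat.div_eq_of_lt hjL, Nat.zero_add]
    have := congrFun hst (k * L + j)
    simp only [hf] at this
    rw [hdiv] at this
    rcases Bool.eq_false_or_eq_true (s k) with hs | hs <;>
      rcases Bool.eq_false_or_eq_true (t k) with ht | ht <;>
        simp [hs, ht, hgj, hhj] at this hk ⊢
    · exact hj0 this.symm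
    · exact hj0 this
  -- cardinal computation
  apply le_antisymm
  · calc Cardinal.mk {p : ℕ → E // IsInfPath src tgt p ∧ src (p 0) = v}
        ≤ Cardinal.mk (ℕ → E) := Cardinal.mk_subtype_le _
      _ = Cardinal.mk E ^ (Cardinal.aleph0 : Cardinal) := by
          rw [Cardinal.mk_arrow, Cardinal.lift_uzero, Cardinal.mk_nat, Cardinal.lift_aleph0]
      _ ≤ Cardinal.continuum ^ (Cardinal.aleph0 : Cardinal) :=
          Cardinal.power_le_power_right (Cardinal.mk_le_aleph0.trans Cardinal.aleph0_le_continuum)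
      _ = Cardinal.continuum := Cardinal.continuum_power_aleph0
  · have emb : (ℕ → Bool) ↪ {p : ℕ → E // IsInfPath src tgt p ∧ src (p 0) = v} :=
      ⟨fun s => ⟨f s, hinff s, hstartf s⟩, fun s t hst => hinj (by
        simpa using congrArg Subtype.val hst)⟩
    have h1 := Cardinal.lift_mk_le'.mpr ⟨emb⟩
    rw [Cardinal.lift_uzero] at h1
    have h2 : Cardinal.mk (ℕ → Bool) = Cardinal.continuum := by
      rw [Cardinal.mk_arrow, Cardinal.lift_uzero, Cardinal.lift_uzero, Cardinal.mk_nat,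
        Cardinal.mk_bool, Cardinal.two_power_aleph0]
    rw [h2, Cardinal.lift_continuum] at h1
    exact h1
end

section
/- Let G be a finite directed multigraph with no intersecting cycles that contains at least one simple cycle, let P = Path_G(∞) be its space of infinite paths, topologized as a subspace of the product space E^ℕ with E discrete, and let D be the largest k ∈ ℕ for which there exist pairwise vertex-disjoint simple cycles C₀, C₁, …, C_k with C₀ ≥ C₁ ≥ ⋯ ≥ C_k. Then the iterated derived sets of P satisfy P⁽ᴰ⁾ ≠ ∅ and P⁽ᴰ⁺¹⁾ = ∅; in particular the Cantor–Bendixson rank of P, the least n with P⁽ⁿ⁾ = ∅, equals D + 1. -/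
open Filter Topology

variable {V E : Type*}

namespace CB

variable {V E : Type*}

lemma chain'_iff_get {α : Type*} {R : α → α → Prop} {l : List α} :
    List.Chain' R l ↔ ∀ (i : ℕ) (h : i < l.length - 1),
      R (l.get ⟨i, by omega⟩) (l.get ⟨i + 1, by omega⟩) := by
  show List.IsChain R l ↔ _
  rw [List.isChain_iff_getElem]
  constructor
  · intro h i hi
    exact h i (by omega)
  · intro h i hi
    exact h i (by omega)

lemma chain'_append {α : Type*} {R : α → α → Prop} {l₁ l₂ : List α} :
    List.Chain' R (l₁ ++ l₂) ↔ List.Chain' R l₁ ∧ List.Chain' R l₂ ∧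
      ∀ x ∈ l₁.getLast?, ∀ y ∈ l₂.head?, R x y :=
  List.isChain_append

lemma get_map {α β : Type*} (f : α → β) {l : List α} {n : Fin (l.map f).length} :
    (l.map f).get n = f (l.get ⟨n, by simpa using n.2⟩) := by
  simp

/-- A finite segment of an infinite path: edges `p a, p (a+1), …, p (a+n-1)`. -/
def seg (p : ℕ → E) (a n : ℕ) : List E := (List.range n).map (fun k => p (a + k))

@[simp] lemma seg_length (p : ℕ → E) (a n : ℕ) : (seg p a n).length = n := by
  simp [seg]

lemma seg_get (p : ℕ → E) (a n : ℕ) (i : ℕ) (h : i < (seg p a n).length) :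
    (seg p a n).get ⟨i, h⟩ = p (a + i) := by
  simp [seg]

lemma seg_ne_nil (p : ℕ → E) (a : ℕ) {n : ℕ} (hn : 0 < n) : seg p a n ≠ [] := by
  intro h
  have := seg_length p a n
  rw [h] at this
  simp at this
  omega

lemma head?_eq_get {l : List E} (h : l ≠ []) :
    l.head? = some (l.get ⟨0, List.length_pos_iff.mpr h⟩) := by
  cases l with
  | nil => simp at h
  | cons a t => simp

lemma getLast?_eq_get {l : List E} (h : l ≠ []) :
    l.getLast? = some (l.get ⟨l.length - 1, by
      have := List.length_pos_iff.mpr h; omega⟩) := by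
  rw [List.getLast?_eq_getLast h]
  simp [List.getLast_eq_getElem]

lemma startsAt_iff (src : E → V) {l : List E} (h : l ≠ []) (v : V) :
    StartsAt src l v ↔ src (l.get ⟨0, List.length_pos_iff.mpr h⟩) = v := by
  rw [StartsAt, head?_eq_get h]
  simp

lemma endsAt_iff (tgt : E → V) {l : List E} (h : l ≠ []) (w : V) :
    EndsAt tgt l w ↔ tgt (l.get ⟨l.length - 1, by have := List.length_pos_iff.mpr h; omega⟩) = w := by
  rw [EndsAt, getLast?_eq_get h]
  simp

variable (src tgt : E → V)

lemma seg_isDiPath {p : ℕ → E} (hp : IsInfPath src tgt p) (a : ℕ) {n : ℕ} (hn : 0 < n) :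
    IsDiPath src tgt (seg p a n) := by
  refine ⟨seg_ne_nil p a hn, ?_⟩
  rw [chain'_iff_get]
  intro i h
  rw [seg_get, seg_get]
  have := hp (a + i)
  rw [show a + (i+1) = a + i + 1 by omega]
  exact this

lemma seg_startsAt (p : ℕ → E) (a : ℕ) {n : ℕ} (hn : 0 < n) :
    StartsAt src (seg p a n) (src (p a)) := by
  rw [startsAt_iff src (seg_ne_nil p a hn), seg_get]
  simp

lemma seg_endsAt {p : ℕ → E} (hp : IsInfPath src tgt p) (a : ℕ) {n : ℕ} (hn : 0 < n) :
    EndsAt tgt (seg p a n) (src (p (a + n))) := by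
  rw [endsAt_iff tgt (seg_ne_nil p a hn), seg_get]
  have hl : (seg p a n).length = n := seg_length p a n
  have : a + (seg p a n).length - 1 = a + (n-1) := by omega
  rw [seg_length]
  have h2 := hp (a + (n - 1))
  have : a + (n-1) + 1 = a + n := by omega
  rw [this] at h2
  exact h2

lemma seg_mem {p : ℕ → E} {a n : ℕ} {e : E} (h : e ∈ seg p a n) :
    ∃ k, k < n ∧ e = p (a + k) := by
  simp [seg] at h
  obtain ⟨k, hk, he⟩ := h
  exact ⟨k, hk, he.symm⟩

/-- The infinite path obtained by looping around a closed path forever. -/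
def loopPath (C : List E) (hC : C ≠ []) (n : ℕ) : E :=
  C.get ⟨n % C.length, Nat.mod_lt _ (List.length_pos_iff.mpr hC)⟩

lemma loopPath_get (C : List E) (hC : C ≠ []) {i : ℕ} (h : i < C.length) :
    loopPath C hC i = C.get ⟨i, h⟩ := by
  simp only [loopPath]
  congr 1
  exact Fin.ext (Nat.mod_eq_of_lt h)

lemma loopPath_mem (C : List E) (hC : C ≠ []) (n : ℕ) : loopPath C hC n ∈ C :=
  List.get_mem _ _

lemma loopPath_mod (C : List E) (hC : C ≠ []) {m n : ℕ}
    (h : m % C.length = n % C.length) : loopPath C hC m = loopPath C hC n := by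
  simp only [loopPath]
  congr 1
  exact Fin.ext h

lemma src_loopPath_mem (C : List E) (hC : C ≠ []) (n : ℕ) :
    src (loopPath C hC n) ∈ C.map src :=
  List.mem_map_of_mem (f := src) (loopPath_mem C hC n)

lemma exists_loopPath_src {C : List E} (hC : C ≠ []) {v : V}
    (h : v ∈ C.map src) : ∃ i, i < C.length ∧ src (loopPath C hC i) = v := by
  obtain ⟨e, he, hv⟩ := List.mem_map.mp h
  obtain ⟨⟨i, hi⟩, rfl⟩ := List.mem_iff_get.mp he
  exact ⟨i, hi, by rw [loopPath_get C hC hi]; exact hv⟩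

lemma isInfPath_loopPath {C : List E} (hC : C ≠ [])
    (h : IsClosedDiPath src tgt C) : IsInfPath src tgt (loopPath C hC) := by
  obtain ⟨⟨_, hchain⟩, v, hs, he⟩ := h
  intro n
  have hlen : 0 < C.length := List.length_pos_iff.mpr hC
  have hi : n % C.length < C.length := Nat.mod_lt _ hlen
  by_cases hcase : n % C.length + 1 < C.length
  · have hlen2 : 2 ≤ C.length := by omega
    have h1 : (n + 1) % C.length = n % C.length + 1 := by
      conv_lhs => rw [Nat.add_mod]
      rw [Nat.mod_eq_of_lt (by omega : (1:ℕ) < C.length), Nat.mod_eq_of_lt hcase]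
    have hchain' := chain'_iff_get.mp hchain (n % C.length) (by omega)
    simp only [loopPath]
    rw [show (⟨(n+1) % C.length, _⟩ : Fin C.length) = ⟨n % C.length + 1, by omega⟩ from
      Fin.ext h1]
    exact hchain'
  · -- n % C.length = C.length - 1
    have h1 : n % C.length = C.length - 1 := by omega
    have h2 : (n + 1) % C.length = 0 := by
      have h3 : (n + 1) % C.length = (n % C.length + 1 % C.length) % C.length := by
        rw [Nat.add_mod]
      rw [h3, h1]
      rcases Nat.eq_or_lt_of_le hlen with h | h
      · simp [← h]
      · rw [Nat.mod_eq_of_lt h]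
        have h4 : C.length - 1 + 1 = C.length := by omega
        rw [h4, Nat.mod_self]
    rw [startsAt_iff src hC] at hs
    rw [endsAt_iff tgt hC] at he
    simp only [loopPath]
    rw [show (⟨n % C.length, _⟩ : Fin C.length) = ⟨C.length - 1, by omega⟩ from Fin.ext h1,
      show (⟨(n+1) % C.length, _⟩ : Fin C.length) = ⟨0, hlen⟩ from Fin.ext h2]
    rw [he, hs]

end CB
namespace CB
variable {V E : Type*}

/-- Prepend a finite path to an infinite path. -/
def follow (l : List E) (p : ℕ → E) (n : ℕ) : E :=
  if h : n < l.length then l.get ⟨n, h⟩ else p (n - l.length)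

lemma follow_lt {l : List E} (p : ℕ → E) {n : ℕ} (h : n < l.length) :
    follow l p n = l.get ⟨n, h⟩ := dif_pos h

lemma follow_ge {l : List E} (p : ℕ → E) {n : ℕ} (h : l.length ≤ n) :
    follow l p n = p (n - l.length) := dif_neg (by omega)

variable (src tgt : E → V)

lemma isInfPath_follow {l : List E} {p : ℕ → E} (hl : IsDiPath src tgt l)
    (hend : EndsAt tgt l (src (p 0))) (hp : IsInfPath src tgt p) :
    IsInfPath src tgt (follow l p) := by
  intro n
  rcases lt_trichotomy (n + 1) l.length with h | h | h
  · rw [follow_lt p (by omega), follow_lt p h]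
    exact chain'_iff_get.mp hl.2 n (by omega)
  · rw [follow_lt p (by omega), follow_ge p (by omega)]
    rw [endsAt_iff tgt hl.1] at hend
    rw [show n + 1 - l.length = 0 by omega]
    convert hend using 3
    exact Fin.ext (show n = l.length - 1 by omega)
  · rw [follow_ge p (by omega), follow_ge p (by omega)]
    rw [show n + 1 - l.length = (n - l.length) + 1 by omega]
    exact hp _

lemma startsAt_follow {l : List E} (p : ℕ → E) {v : V} (h : StartsAt src l v) :
    src (follow l p 0) = v := by
  have hl : l ≠ [] := by
    intro hnil; rw [hnil] at h; simp [StartsAt] at h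
  rw [follow_lt p (List.length_pos_iff.mpr hl)]
  rw [startsAt_iff src hl] at h
  exact h

lemma isDiPath_append {l m : List E} {v : V} (hl : IsDiPath src tgt l)
    (hm : IsDiPath src tgt m) (h1 : EndsAt tgt l v) (h2 : StartsAt src m v) :
    IsDiPath src tgt (l ++ m) := by
  refine ⟨by simp [hl.1], ?_⟩
  rw [chain'_append]
  refine ⟨hl.2, hm.2, ?_⟩
  intro x hx y hy
  rw [EndsAt, hx] at h1
  rw [StartsAt, hy] at h2
  simp at h1 h2
  rw [h1, h2]

lemma startsAt_append {l m : List E} {v : V} (hl : l ≠ []) (h : StartsAt src l v) :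
    StartsAt src (l ++ m) v := by
  rwa [StartsAt, List.head?_append_of_ne_nil _ hl]

lemma endsAt_append {l m : List E} {w : V} (hm : m ≠ []) (h : EndsAt tgt m w) :
    EndsAt tgt (l ++ m) w := by
  rw [EndsAt] at h ⊢
  rw [List.getLast?_append]
  cases hm' : m.getLast? with
  | none => rw [List.getLast?_eq_getLast hm] at hm'; simp at hm'
  | some a =>
    rw [hm'] at h
    simpa using h

lemma reaches_trans {u v w : V} (h1 : Reaches src tgt u v) (h2 : Reaches src tgt v w) :
    Reaches src tgt u w := by
  rcases h1 with rfl | ⟨l, hl, hls, hle⟩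
  · exact h2
  rcases h2 with rfl | ⟨m, hm, hms, hme⟩
  · exact Or.inr ⟨l, hl, hls, hle⟩
  exact Or.inr ⟨l ++ m, isDiPath_append src tgt hl hm hle hms,
    startsAt_append src hl.1 hls, endsAt_append tgt hm.1 hme⟩

lemma reaches_of_infPath {p : ℕ → E} (hp : IsInfPath src tgt p) {a b : ℕ} (hab : a ≤ b) :
    Reaches src tgt (src (p a)) (src (p b)) := by
  rcases Nat.eq_or_lt_of_le hab with rfl | hlt
  · exact Or.inl rfl
  refine Or.inr ⟨seg p a (b - a), seg_isDiPath src tgt hp a (by omega),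
    seg_startsAt src p a (by omega), ?_⟩
  have := seg_endsAt src tgt hp a (n := b - a) (by omega)
  rwa [show a + (b - a) = b by omega] at this

lemma cyc_reach {C : List E} (hC : C ≠ []) (h : IsClosedDiPath src tgt C)
    {x y : V} (hx : x ∈ C.map src) (hy : y ∈ C.map src) : Reaches src tgt x y := by
  obtain ⟨ix, _, hix⟩ := exists_loopPath_src src hC hx
  obtain ⟨iy, _, hiy⟩ := exists_loopPath_src src hC hy
  have hlen : 0 < C.length := List.length_pos_iff.mpr hC
  have hle : ix ≤ iy + C.length * (ix + 1) := by nlinarith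
  have := reaches_of_infPath src tgt (isInfPath_loopPath src tgt hC h) hle
  rw [hix] at this
  have heq : loopPath C hC (iy + C.length * (ix + 1)) = loopPath C hC iy :=
    loopPath_mod C hC (by simp [Nat.add_mul_mod_self_left])
  rw [heq, hiy] at this
  exact this

lemma tgt_mem_of_closed {C : List E} (hC : C ≠ []) (h : IsClosedDiPath src tgt C)
    {e : E} (he : e ∈ C) : tgt e ∈ C.map src := by
  obtain ⟨⟨i, hi⟩, rfl⟩ := List.mem_iff_get.mp he
  have h1 : C.get ⟨i, hi⟩ = loopPath C hC i := (loopPath_get C hC hi).symm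
  rw [h1, isInfPath_loopPath src tgt hC h i]
  exact src_loopPath_mem src C hC _

lemma eq_of_src_eq {C : List E} (hnd : (C.map src).Nodup) {e f : E}
    (he : e ∈ C) (hf : f ∈ C) (hsrc : src e = src f) : e = f := by
  obtain ⟨⟨i, hi⟩, rfl⟩ := List.mem_iff_get.mp he
  obtain ⟨⟨j, hj⟩, rfl⟩ := List.mem_iff_get.mp hf
  have hinj := List.nodup_iff_injective_get.mp hnd
  have h1 : (C.map src).get ⟨i, by simpa using hi⟩ = (C.map src).get ⟨j, by simpa using hj⟩ := by
    rw [get_map, get_map]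
    exact hsrc
  have := hinj h1
  simp only [Fin.mk.injEq] at this
  congr 1
  exact Fin.ext this

end CB
namespace CB
variable {V E : Type*} (src tgt : E → V)

lemma get_congr (l : List E) {i j : ℕ} (h : i = j) (hi : i < l.length) :
    l.get ⟨i, hi⟩ = l.get ⟨j, h ▸ hi⟩ := by
  congr 1
  exact Fin.ext h

lemma not_nodup_exists {l : List V} (h : ¬ l.Nodup) :
    ∃ i, ∃ j, ∃ (hi : i < l.length), ∃ (hj : j < l.length), i < j ∧
      l.get ⟨i, hi⟩ = l.get ⟨j, hj⟩ := by
  by_contra hcon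
  push_neg at hcon
  apply h
  rw [List.nodup_iff_injective_get]
  rintro ⟨a, ha⟩ ⟨b, hb⟩ hab
  rcases lt_trichotomy a b with h' | h' | h'
  · exact absurd hab (hcon a b ha hb h')
  · exact Fin.ext h'
  · exact absurd hab.symm (hcon b a hb ha h')

/-- From a closed walk starting with edge `e`, extract a simple cycle starting with `e`. -/
lemma extract_cycle_aux : ∀ (n : ℕ) (M : List E), M.length ≤ n → IsDiPath src tgt M →
    ∀ e : E, M.head? = some e →
    EndsAt tgt M (src e) → ∃ Z, IsSimpleCycle src tgt Z ∧ Z.head? = some e := by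
  intro n
  induction n with
  | zero =>
    intro M hMn hM e he hend
    have := List.length_pos_iff.mpr hM.1
    omega
  | succ n ih =>
  intro M hMn hM e he hend
  have hMne : M ≠ [] := hM.1
  have hlen : 0 < M.length := List.length_pos_iff.mpr hMne
  have hM0 : M.get ⟨0, hlen⟩ = e := by
    rw [head?_eq_get hMne] at he
    exact Option.some_injective _ he
  by_cases hnd : (M.map src).Nodup
  · refine ⟨M, ⟨⟨hM, src e, ?_, hend⟩, hnd⟩, he⟩
    rw [StartsAt, he]
    rfl
  · obtain ⟨i, j, hi', hj', hij, hsrc⟩ := not_nodup_exists hnd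
    have hi : i < M.length := by simpa using hi'
    have hj : j < M.length := by simpa using hj'
    have hsrc' : src (M.get ⟨i, hi⟩) = src (M.get ⟨j, hj⟩) := by
      have h1 : (M.map src).get ⟨i, hi'⟩ = src (M.get ⟨i, hi⟩) := get_map ..
      have h2 : (M.map src).get ⟨j, hj'⟩ = src (M.get ⟨j, hj⟩) := get_map ..
      rw [← h1, ← h2, hsrc]
    have hchain := hM.2
    rcases Nat.eq_zero_or_pos i with rfl | hipos
    · -- truncate to M.take j
      have hlen' : (M.take j).length = j := by
        rw [List.length_take]; omega
      have hne' : M.take j ≠ [] := by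
        intro hcon; rw [hcon] at hlen'; simp at hlen'; omega
      have hget' : ∀ k (hk : k < (M.take j).length),
          (M.take j).get ⟨k, hk⟩ = M.get ⟨k, by omega⟩ := by
        intro k hk
        simp only [List.get_eq_getElem]
        exact List.getElem_take
      have hdp' : IsDiPath src tgt (M.take j) := ⟨hne', hchain.prefix (M.take_prefix j)⟩
      have hhead' : (M.take j).head? = some e := by
        rw [head?_eq_get hne', hget' 0 _, ← hM0]
      have hend' : EndsAt tgt (M.take j) (src e) := by
        rw [endsAt_iff tgt hne', hget' _ (by omega)]
        rw [get_congr M (show (M.take j).length - 1 = j - 1 by omega)]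
        have hc := chain'_iff_get.mp hchain (j-1) (by omega)
        rw [get_congr M (show j - 1 + 1 = j by omega)] at hc
        rw [hc, ← hsrc', hM0]
      exact ih (M.take j) (by omega) hdp' e hhead' hend'
    · -- cut out [i, j)
      set M' := M.take i ++ M.drop j with hM'
      have hlen' : M'.length = i + (M.length - j) := by
        simp only [hM', List.length_append, List.length_take, List.length_drop]
        omega
      have hlentake : (M.take i).length = i := by rw [List.length_take]; omega
      have hne' : M' ≠ [] := by
        intro hcon
        have : M'.length = 0 := by rw [hcon]; rfl
        omega
      have hgetl : ∀ k (hk : k < M'.length) (hk2 : k < i),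
          M'.get ⟨k, hk⟩ = M.get ⟨k, by omega⟩ := by
        intro k hk hk2
        simp only [hM', List.get_eq_getElem]
        rw [List.getElem_append_left (by omega)]
        exact List.getElem_take
      have hgetr : ∀ k (hk : k < M'.length) (hk2 : i ≤ k),
          M'.get ⟨k, hk⟩ = M.get ⟨j + (k - i), by omega⟩ := by
        intro k hk hk2
        simp only [hM', List.get_eq_getElem]
        rw [List.getElem_append_right (by omega)]
        have h6 := List.getElem_drop (xs := M) (i := j) (j := k - (M.take i).length)
          (h := by simp only [List.length_drop]; omega)
        rw [h6]
        congr 1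
        omega
      have hchain' : M'.Chain' (fun a b => tgt a = src b) := by
        rw [chain'_append]
        refine ⟨hchain.prefix (M.take_prefix i), hchain.drop j, ?_⟩
        intro x hx y hy
        have htne : M.take i ≠ [] := by
          intro hcon
          rw [hcon] at hlentake; simp at hlentake; omega
        have hdne : M.drop j ≠ [] := by
          intro hcon
          have : (M.drop j).length = 0 := by rw [hcon]; rfl
          rw [List.length_drop] at this
          omega
        rw [getLast?_eq_get htne] at hx
        rw [head?_eq_get hdne] at hy
        have hx' : x = M.get ⟨i - 1, by omega⟩ := by
          have h7 := Option.some_injective _ hx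
          rw [← h7]
          simp only [List.get_eq_getElem]
          rw [List.getElem_take]
          congr 1
          omega
        have hy' : y = M.get ⟨j, hj⟩ := by
          have h7 := Option.some_injective _ hy
          rw [← h7]
          simp only [List.get_eq_getElem]
          rw [List.getElem_drop]
          congr 1
        rw [hx', hy', ← hsrc']
        have hc := chain'_iff_get.mp hchain (i-1) (by omega)
        rw [get_congr M (show i - 1 + 1 = i by omega)] at hc
        exact hc
      have hhead' : M'.head? = some e := by
        rw [head?_eq_get hne', hgetl 0 _ (by omega), ← hM0]
      have hend' : EndsAt tgt M' (src e) := by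
        rw [endsAt_iff tgt hne', hgetr (M'.length - 1) (by omega) (by omega)]
        rw [endsAt_iff tgt hMne] at hend
        rw [get_congr M (show j + (M'.length - 1 - i) = M.length - 1 by omega)]
        exact hend
      have hfin : M'.length ≤ n := by rw [hlen']; omega
      exact ih M' hfin ⟨hne', hchain'⟩ e hhead' hend'

lemma extract_cycle (M : List E) (hM : IsDiPath src tgt M) (e : E) (he : M.head? = some e)
    (hend : EndsAt tgt M (src e)) : ∃ Z, IsSimpleCycle src tgt Z ∧ Z.head? = some e :=
  extract_cycle_aux src tgt M.length M le_rfl hM e he hend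

end CB
namespace CB
variable {V E : Type*} (src tgt : E → V)

/-- There is a chain of `m+1` pairwise-disjoint simple cycles starting at `C`. -/
def HasChainFrom (C : List E) (m : ℕ) : Prop :=
  ∃ Cs : Fin (m + 1) → List E, Cs 0 = C ∧ (∀ i, IsSimpleCycle src tgt (Cs i)) ∧
    (∀ i j, i ≠ j → CyclesDisjoint src (Cs i) (Cs j)) ∧
    (∀ i : Fin m, CycleReachesCycle src tgt (Cs i.castSucc) (Cs i.succ))

lemma simpleCycle_ne_nil {C : List E} (h : IsSimpleCycle src tgt C) : C ≠ [] := h.1.1.1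

/-- Escape lemma: an edge leaving a simple cycle can never come back to it. -/
lemma escape (hG : NoIntersectingCycles src tgt) {C : List E} (hC : IsSimpleCycle src tgt C)
    {L : List E} (hL : IsDiPath src tgt L) {e : E} (he : L.head? = some e)
    (heC : e ∉ C) (hsrc : src e ∈ C.map src) {w : V} (hw : EndsAt tgt L w)
    (hwC : w ∈ C.map src) : False := by
  have hCne : C ≠ [] := simpleCycle_ne_nil src tgt hC
  have hreach : Reaches src tgt w (src e) := cyc_reach src tgt hCne hC.1 hwC hsrc
  have hclosed : ∃ M, IsDiPath src tgt M ∧ M.head? = some e ∧ EndsAt tgt M (src e) := by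
    rcases hreach with rfl | ⟨P, hP, hPs, hPe⟩
    · exact ⟨L, hL, he, hw⟩
    · refine ⟨L ++ P, isDiPath_append src tgt hL hP hw hPs, ?_, endsAt_append tgt hP.1 hPe⟩
      rw [List.head?_append_of_ne_nil _ hL.1]
      exact he
  obtain ⟨M, hM, hMh, hMe⟩ := hclosed
  obtain ⟨Z, hZ, hZh⟩ := extract_cycle src tgt M hM e hMh hMe
  have hZne : Z ≠ [] := simpleCycle_ne_nil src tgt hZ
  have heZ : e ∈ Z := by
    rw [head?_eq_get hZne] at hZh
    have := Option.some_injective _ hZh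
    rw [← this]
    exact List.get_mem _ _
  have hnrot : ¬ Z.IsRotated C := by
    intro hrot
    exact heC (hrot.mem_iff.mp heZ)
  exact hG Z C hZ hC hnrot (src e)
    ⟨List.mem_map_of_mem (f := src) heZ, hsrc⟩

/-- General escape lemma: a path between two vertices of a simple cycle
cannot use any edge outside the cycle. -/
lemma escape' (hG : NoIntersectingCycles src tgt) {C : List E} (hC : IsSimpleCycle src tgt C)
    {L : List E} (hL : IsDiPath src tgt L) {u : V} (hstart : StartsAt src L u)
    (hu : u ∈ C.map src) {w : V} (hend : EndsAt tgt L w) (hw : w ∈ C.map src)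
    {f : E} (hf : f ∈ L) (hfC : f ∉ C) : False := by
  have hLne : L ≠ [] := hL.1
  have hex : ∃ k, ∃ (h : k < L.length), L.get ⟨k, h⟩ ∉ C := by
    obtain ⟨⟨k, hk⟩, rfl⟩ := List.mem_iff_get.mp hf
    exact ⟨k, hk, hfC⟩
  classical
  let i := Nat.find hex
  obtain ⟨hi, hiC⟩ : ∃ (h : i < L.length), L.get ⟨i, h⟩ ∉ C := Nat.find_spec hex
  have hmin : ∀ k (hk : k < i), ∀ (h : k < L.length), L.get ⟨k, h⟩ ∈ C := by
    intro k hk h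
    by_contra hcon
    exact Nat.find_min hex hk ⟨h, hcon⟩
  have hsrcC : src (L.get ⟨i, hi⟩) ∈ C.map src := by
    rcases Nat.eq_zero_or_pos i with hz | hpos
    · rw [startsAt_iff src hLne] at hstart
      rw [get_congr L hz]
      rw [hstart]
      exact hu
    · have hprev : L.get ⟨i - 1, by omega⟩ ∈ C := hmin (i-1) (by omega) _
      have hc := chain'_iff_get.mp hL.2 (i-1) (by omega)
      rw [get_congr L (show i - 1 + 1 = i by omega)] at hc
      rw [← hc]
      exact tgt_mem_of_closed src tgt (simpleCycle_ne_nil src tgt hC) hC.1 hprev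
  -- apply `escape` to the suffix from i
  have hdropne : L.drop i ≠ [] := by
    intro hcon
    have : (L.drop i).length = 0 := by rw [hcon]; rfl
    rw [List.length_drop] at this
    omega
  have hdropget : ∀ k (hk : k < (L.drop i).length),
      (L.drop i).get ⟨k, hk⟩ = L.get ⟨i + k, by rw [List.length_drop] at hk; omega⟩ := by
    intro k hk
    simp only [List.get_eq_getElem]
    exact List.getElem_drop
  have hdrophead : (L.drop i).head? = some (L.get ⟨i, hi⟩) := by
    rw [head?_eq_get hdropne, hdropget 0 _]
    congr 1
  have hdl : (L.drop i).length = L.length - i := List.length_drop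
  have hdropend : EndsAt tgt (L.drop i) w := by
    rw [endsAt_iff tgt hdropne, hdropget _ (by omega)]
    rw [endsAt_iff tgt hLne] at hend
    rw [get_congr L (show i + ((L.drop i).length - 1) = L.length - 1 by
      rw [List.length_drop]; omega)]
    exact hend
  exact escape src tgt hG hC ⟨hdropne, hL.2.drop i⟩ hdrophead hiC hsrcC hdropend hw

lemma onCycle_rot {l l' : List E} (h : l.IsRotated l') {v : V} (hv : OnCycle src l v) :
    OnCycle src l' v := by
  unfold OnCycle at *
  exact ((h.map src).mem_iff).mp hv

lemma cyclesDisjoint_symm {l l' : List E} (h : CyclesDisjoint src l l') :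
    CyclesDisjoint src l' l := by
  intro v ⟨h1, h2⟩
  exact h v ⟨h2, h1⟩

lemma cycleReaches_refl {C : List E} (hC : IsSimpleCycle src tgt C) :
    CycleReachesCycle src tgt C C := by
  have hCne : C ≠ [] := simpleCycle_ne_nil src tgt hC
  have hv : src (loopPath C hCne 0) ∈ C.map src := src_loopPath_mem src C hCne 0
  exact ⟨_, hv, _, hv, Or.inl rfl⟩

lemma cycleReaches_trans {A B D : List E} (hB : IsSimpleCycle src tgt B)
    (h1 : CycleReachesCycle src tgt A B) (h2 : CycleReachesCycle src tgt B D) :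
    CycleReachesCycle src tgt A D := by
  obtain ⟨a, ha, b, hb, hab⟩ := h1
  obtain ⟨b', hb', d, hd, hbd⟩ := h2
  have hbb' : Reaches src tgt b b' :=
    cyc_reach src tgt (simpleCycle_ne_nil src tgt hB) hB.1 hb hb'
  exact ⟨a, ha, d, hd, reaches_trans src tgt hab (reaches_trans src tgt hbb' hbd)⟩

lemma cycleReaches_rot_right {A B B' : List E} (h : CycleReachesCycle src tgt A B)
    (hrot : B.IsRotated B') : CycleReachesCycle src tgt A B' := by
  obtain ⟨a, ha, b, hb, hab⟩ := h
  exact ⟨a, ha, b, onCycle_rot src hrot hb, hab⟩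

lemma isSimpleCycle_rot {C C' : List E} (h : IsSimpleCycle src tgt C)
    (hrot : C.IsRotated C') : IsSimpleCycle src tgt C' := by
  obtain ⟨n, rfl⟩ := hrot
  have hCne : C ≠ [] := simpleCycle_ne_nil src tgt h
  have hlen : 0 < C.length := List.length_pos_iff.mpr hCne
  have hlen' : (C.rotate n).length = C.length := List.length_rotate C n
  have hne' : C.rotate n ≠ [] := by
    intro hcon
    rw [hcon] at hlen'
    simp at hlen'
    omega
  have hinf := isInfPath_loopPath src tgt hCne h.1
  have hget : ∀ k (hk : k < (C.rotate n).length),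
      (C.rotate n).get ⟨k, hk⟩ = loopPath C hCne (k + n) := by
    intro k hk
    rw [List.get_rotate]
    simp only [loopPath]
  refine ⟨⟨⟨hne', ?_⟩, src ((C.rotate n).get ⟨0, by omega⟩), ?_, ?_⟩, ?_⟩
  · rw [chain'_iff_get]
    intro k hk
    rw [hget k (by omega), hget (k+1) (by omega)]
    have := hinf (k + n)
    rw [show k + n + 1 = k + 1 + n by omega] at this
    exact this
  · rw [startsAt_iff src hne']
  · rw [endsAt_iff tgt hne']
    rw [hget ((C.rotate n).length - 1) (by omega), hget 0 (by omega)]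
    have := hinf ((C.rotate n).length - 1 + n)
    rw [this]
    apply congrArg
    apply loopPath_mod
    rw [hlen']
    have : C.length - 1 + n + 1 = n + C.length := by omega
    rw [this, Nat.add_mod_right, Nat.zero_add]
  · have hperm : (C.map src).Perm ((C.rotate n).map src) :=
      (List.IsRotated.map (⟨n, rfl⟩ : C.IsRotated (C.rotate n)) src).perm
    exact hperm.nodup_iff.mp h.2

/-- No two disjoint simple cycles are mutually reachable. -/
lemma no_mutual (hG : NoIntersectingCycles src tgt) {C C' : List E}
    (hC : IsSimpleCycle src tgt C) (hC' : IsSimpleCycle src tgt C')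
    (hdisj : CyclesDisjoint src C C')
    (h1 : CycleReachesCycle src tgt C C') (h2 : CycleReachesCycle src tgt C' C) : False := by
  obtain ⟨a, ha, b, hb, hab⟩ := h1
  obtain ⟨b', hb', a', ha', hba⟩ := h2
  have hCne := simpleCycle_ne_nil src tgt hC
  have hC'ne := simpleCycle_ne_nil src tgt hC'
  have hab' : a ≠ b := by
    rintro rfl
    exact hdisj a ⟨ha, hb⟩
  have hba' : b ≠ a' := by
    rintro rfl
    exact hdisj b ⟨ha', hb⟩
  rcases hab with rfl | ⟨P1, hP1, hP1s, hP1e⟩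
  · exact hab' rfl
  have hreach2 : Reaches src tgt b a' :=
    reaches_trans src tgt (cyc_reach src tgt hC'ne hC'.1 hb hb') hba
  rcases hreach2 with rfl | ⟨P2, hP2, hP2s, hP2e⟩
  · exact hba' rfl
  -- the last edge of P1 is not in C
  have hP1ne := hP1.1
  have hlast : ∃ f, P1.getLast? = some f := by
    rw [getLast?_eq_get hP1ne]
    exact ⟨_, rfl⟩
  obtain ⟨f, hf⟩ := hlast
  have hfP1 : f ∈ P1 := by
    rw [getLast?_eq_get hP1ne] at hf
    rw [Option.some_injective _ hf.symm]
    exact List.get_mem _ _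
  have htgtf : tgt f = b := by
    rw [EndsAt, hf] at hP1e
    simpa using hP1e
  have hfC : f ∉ C := by
    intro hcon
    have := tgt_mem_of_closed src tgt hCne hC.1 hcon
    rw [htgtf] at this
    exact hdisj b ⟨this, hb⟩
  exact escape' src tgt hG hC
    (isDiPath_append src tgt hP1 hP2 hP1e hP2s)
    (startsAt_append src hP1.1 hP1s) ha
    (endsAt_append tgt hP2.1 hP2e) ha'
    (List.mem_append_left _ hfP1) hfC

lemma hasChainFrom_zero {C : List E} (hC : IsSimpleCycle src tgt C) :
    HasChainFrom src tgt C 0 := by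
  refine ⟨fun _ => C, rfl, fun _ => hC, fun i j hij => absurd (Fin.ext (by have := i.isLt; have := j.isLt; omega)) hij,
    fun i => i.elim0⟩

/-- Extend a chain by one cycle at the top. -/
lemma chain_extend (hG : NoIntersectingCycles src tgt) {C C' : List E}
    (hC : IsSimpleCycle src tgt C) {m : ℕ} (h : HasChainFrom src tgt C' m)
    (hreach : CycleReachesCycle src tgt C C') (hdisj : CyclesDisjoint src C C') :
    HasChainFrom src tgt C (m + 1) := by
  obtain ⟨Cs, hCs0, hCssc, hCsdisj, hCsreach⟩ := h
  -- C' reaches every cycle of the chain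
  have hreachall : ∀ j : Fin (m + 1), CycleReachesCycle src tgt C' (Cs j) := by
    intro ⟨j, hj⟩
    induction j with
    | zero =>
      rw [show (⟨0, hj⟩ : Fin (m+1)) = 0 from rfl, hCs0]
      exact cycleReaches_refl src tgt (hCs0 ▸ hCssc 0)
    | succ k ihk =>
      have hk : k < m + 1 := by omega
      have := hCsreach ⟨k, by omega⟩
      have hcast : (⟨k, by omega⟩ : Fin m).castSucc = ⟨k, hk⟩ := rfl
      have hsucc : (⟨k, by omega⟩ : Fin m).succ = ⟨k+1, hj⟩ := rfl
      rw [hcast, hsucc] at this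
      exact cycleReaches_trans src tgt (hCssc ⟨k, hk⟩) (ihk hk) this
  -- C is disjoint from every cycle of the chain
  have hdisjall : ∀ j : Fin (m + 1), CyclesDisjoint src C (Cs j) := by
    intro j
    by_contra hcon
    have hrot : C.IsRotated (Cs j) ∨ (Cs j).IsRotated C ∨ False := by
      by_cases hr : C.IsRotated (Cs j)
      · exact Or.inl hr
      · exact Or.inr (Or.inr (hcon (fun v hv => hG C (Cs j) hC (hCssc j) hr v hv)))
    rcases hrot with hr | hr | hf
    · -- then C' reaches C, contradiction with no_mutual
      have : CycleReachesCycle src tgt C' C :=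
        cycleReaches_rot_right src tgt (hreachall j) hr.symm
      exact no_mutual src tgt hG hC (hCs0 ▸ hCssc 0) hdisj hreach (hCs0 ▸ this)
    · have : CycleReachesCycle src tgt C' C :=
        cycleReaches_rot_right src tgt (hreachall j) hr.symm.symm
      exact no_mutual src tgt hG hC (hCs0 ▸ hCssc 0) hdisj hreach (hCs0 ▸ this)
    · exact hf
  classical
  refine ⟨fun i => if h : i.val = 0 then C else Cs ⟨i.val - 1, by omega⟩, by simp, ?_, ?_, ?_⟩
  · intro i
    by_cases h : i.val = 0
    · simpa [h] using hC
    · simpa [h] using hCssc _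
  · intro i j hij
    by_cases h1 : i.val = 0 <;> by_cases h2 : j.val = 0
    · exact absurd (Fin.ext (h1.trans h2.symm)) hij
    · simp only [h1, h2, dif_pos, dif_neg, not_false_iff]
      simpa using hdisjall ⟨j.val - 1, by omega⟩
    · simp only [h1, h2, dif_pos, dif_neg, not_false_iff]
      exact cyclesDisjoint_symm src (hdisjall ⟨i.val - 1, by omega⟩)
    · simp only [h1, h2, dif_neg, not_false_iff]
      refine hCsdisj _ _ ?_
      intro hcon
      apply hij
      have := congrArg Fin.val hcon
      simp only at this
      exact Fin.ext (by omega)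
  · intro i
    by_cases h : i.val = 0
    · have h1 : (i.castSucc).val = 0 := by simpa using h
      have h2 : (i.succ).val = 1 := by simp [h]
      simp only [h1, h2, dif_pos, dif_neg, one_ne_zero, not_false_iff]
      simpa using hCs0 ▸ hreach
    · have h1 : (i.castSucc).val = i.val := by simp
      have h2 : (i.succ).val = i.val + 1 := by simp
      simp only [h1, h2, dif_neg, h, not_false_iff, Nat.succ_ne_zero]
      have := hCsreach ⟨i.val - 1, by omega⟩
      have hcast : ((⟨i.val - 1, by omega⟩ : Fin m).castSucc) = ⟨i.val - 1, by omega⟩ := rfl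
      have hsucc : ((⟨i.val - 1, by omega⟩ : Fin m).succ) = ⟨i.val, by omega⟩ := by
        apply Fin.ext
        simp
        omega
      rw [hcast, hsucc] at this
      exact this

end CB
namespace CB
variable {V E : Type*} (src tgt : E → V)

lemma exists_inf_visited [Finite V] (p : ℕ → E) :
    ∃ v : V, ∀ N : ℕ, ∃ n, N ≤ n ∧ src (p n) = v := by
  obtain ⟨v, hv⟩ := Finite.exists_infinite_fiber (fun n => src (p n))
  refine ⟨v, fun N => ?_⟩
  have hinf : Set.Infinite ((fun n => src (p n)) ⁻¹' {v}) := Set.infinite_coe_iff.mp hv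
  obtain ⟨b, hb, hNb⟩ := hinf.exists_gt N
  exact ⟨b, le_of_lt hNb, hb⟩

/-- Every infinite path eventually just loops around a simple cycle. -/
lemma settles [Finite V] (hG : NoIntersectingCycles src tgt) {p : ℕ → E}
    (hp : IsInfPath src tgt p) :
    ∃ C N, ∃ (hC : C ≠ []), IsSimpleCycle src tgt C ∧
      ∀ n, N ≤ n → p n = loopPath C hC (n - N) := by
  obtain ⟨v, hv⟩ := exists_inf_visited src p
  obtain ⟨n₁, _, hn₁⟩ := hv 0
  obtain ⟨n₂, hn₂ge, hn₂⟩ := hv (n₁ + 1)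
  have hlt : n₁ < n₂ := by omega
  have hM : IsDiPath src tgt (seg p n₁ (n₂ - n₁)) :=
    seg_isDiPath src tgt hp n₁ (by omega)
  have hMhead : (seg p n₁ (n₂ - n₁)).head? = some (p n₁) := by
    rw [head?_eq_get (seg_ne_nil p n₁ (by omega)), seg_get]
    congr 1
  have hMend : EndsAt tgt (seg p n₁ (n₂ - n₁)) (src (p n₁)) := by
    have := seg_endsAt src tgt hp n₁ (n := n₂ - n₁) (by omega)
    rw [show n₁ + (n₂ - n₁) = n₂ by omega, hn₂, ← hn₁] at this
    exact this
  obtain ⟨Z, hZ, hZhead⟩ := extract_cycle src tgt _ hM (p n₁) hMhead hMend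
  have hZne : Z ≠ [] := simpleCycle_ne_nil src tgt hZ
  have hZlen : 0 < Z.length := List.length_pos_iff.mpr hZne
  have hZ0 : Z.get ⟨0, hZlen⟩ = p n₁ := by
    rw [head?_eq_get hZne] at hZhead
    exact Option.some_injective _ hZhead
  have hvZ : v ∈ Z.map src := by
    rw [← hn₁, ← hZ0]
    exact List.mem_map_of_mem (f := src) (List.get_mem _ _)
  have hinfZ := isInfPath_loopPath src tgt hZne hZ.1
  refine ⟨Z, n₁, hZne, hZ, ?_⟩
  intro n hn
  induction n, hn using Nat.le_induction with
  | base =>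
    rw [Nat.sub_self, loopPath_get Z hZne hZlen, hZ0]
  | succ n hn ihn =>
    have hsrc : src (p (n + 1)) = src (loopPath Z hZne (n + 1 - n₁)) := by
      rw [← hp n, ihn]
      rw [hinfZ (n - n₁)]
      apply congrArg
      exact loopPath_mod Z hZne (by rw [show n - n₁ + 1 = n + 1 - n₁ by omega])
    by_cases hmem : p (n + 1) ∈ Z
    · exact eq_of_src_eq src hZ.2 hmem (loopPath_mem Z hZne _) hsrc
    · exfalso
      obtain ⟨m, hmge, hm⟩ := hv (n + 2)
      have hL : IsDiPath src tgt (seg p (n+1) (m - (n+1))) :=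
        seg_isDiPath src tgt hp (n+1) (by omega)
      have hLhead : (seg p (n+1) (m - (n+1))).head? = some (p (n+1)) := by
        rw [head?_eq_get (seg_ne_nil p (n+1) (by omega)), seg_get]
      have hLend : EndsAt tgt (seg p (n+1) (m - (n+1))) v := by
        have := seg_endsAt src tgt hp (n+1) (n := m - (n+1)) (by omega)
        rw [show n + 1 + (m - (n+1)) = m by omega, hm] at this
        exact this
      refine escape src tgt hG hZ hL hLhead hmem ?_ hLend hvZ
      rw [hsrc]
      exact src_loopPath_mem src Z hZne _
end CB
namespace CB
variable {V E : Type*} (src tgt : E → V) [TopologicalSpace E] [DiscreteTopology E]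

lemma cylF_isOpen (f : ℕ → E) (M : ℕ) : IsOpen {g : ℕ → E | ∀ m, m < M → g m = f m} := by
  have : {g : ℕ → E | ∀ m, m < M → g m = f m} =
      ⋂ (m : Fin M), (fun g : ℕ → E => g m.val) ⁻¹' {f m.val} := by
    ext g
    simp only [Set.mem_setOf_eq, Set.mem_iInter, Set.mem_preimage, Set.mem_singleton_iff]
    constructor
    · intro h m
      exact h m.val m.isLt
    · intro h m hm
      exact h ⟨m, hm⟩
  rw [this]
  exact isOpen_iInter_of_finite fun m => (continuous_apply (m : ℕ)).isOpen_preimage _ (isOpen_discrete _)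

lemma open_subset_cylF {U : Set (ℕ → E)} (hU : IsOpen U) {f : ℕ → E} (hf : f ∈ U) :
    ∃ M : ℕ, {g : ℕ → E | ∀ m, m < M → g m = f m} ⊆ U := by
  obtain ⟨I, u, hu, hsub⟩ := isOpen_pi_iff.mp hU f hf
  refine ⟨I.sup id + 1, fun g hg => hsub ?_⟩
  intro a ha
  have : g a = f a := hg a (by have := Finset.le_sup (f := id) ha; simp at this; omega)
  rw [this]
  exact (hu a ha).2

variable {X : Type*} [TopologicalSpace X]

lemma mem_derivedSet_iff_cyl {Q : (ℕ → E) → Prop} {S : Set {p : ℕ → E // Q p}}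
    {x : {p : ℕ → E // Q p}} :
    x ∈ derivedSet S ↔ ∀ M : ℕ, ∃ y ∈ S, y ≠ x ∧ ∀ m, m < M → y.1 m = x.1 m := by
  rw [derivedSet, Set.mem_setOf_eq, accPt_iff_nhds]
  constructor
  · intro h M
    have hopen : IsOpen {y : {p : ℕ → E // Q p} | ∀ m, m < M → y.1 m = x.1 m} := by
      have : {y : {p : ℕ → E // Q p} | ∀ m, m < M → y.1 m = x.1 m} =
          Subtype.val ⁻¹' {g : ℕ → E | ∀ m, m < M → g m = x.1 m} := rfl
      rw [this]
      exact (cylF_isOpen x.1 M).preimage continuous_subtype_val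
    obtain ⟨y, ⟨hyU, hyS⟩, hyx⟩ := h _ (hopen.mem_nhds (fun m _ => rfl))
    exact ⟨y, hyS, hyx, hyU⟩
  · intro h U hU
    obtain ⟨W, hWU, hWopen, hxW⟩ := mem_nhds_iff.mp hU
    obtain ⟨W', hW'open, hWeq⟩ := isOpen_induced_iff.mp hWopen
    have hxW' : x.1 ∈ W' := by
      rw [← hWeq] at hxW
      exact hxW
    obtain ⟨M, hM⟩ := open_subset_cylF hW'open hxW'
    obtain ⟨y, hyS, hyx, hy⟩ := h M
    refine ⟨y, ⟨hWU ?_, hyS⟩, hyx⟩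
    rw [← hWeq]
    exact hM hy

end CB
namespace CB
variable {V E : Type*} (src tgt : E → V)

lemma cyclesDisjoint_rot_left {C C' X : List E} (hrot : C.IsRotated C')
    (h : CyclesDisjoint src C X) : CyclesDisjoint src C' X := by
  intro v ⟨h1, h2⟩
  exact h v ⟨onCycle_rot src hrot.symm h1, h2⟩

lemma cycleReaches_rot_left {A A' B : List E} (h : CycleReachesCycle src tgt A B)
    (hrot : A.IsRotated A') : CycleReachesCycle src tgt A' B := by
  obtain ⟨a, ha, b, hb, hab⟩ := h
  exact ⟨a, onCycle_rot src hrot ha, b, hb, hab⟩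

lemma hasChainFrom_rot {C C' : List E} {k : ℕ} (h : HasChainFrom src tgt C k)
    (hrot : C.IsRotated C') : HasChainFrom src tgt C' k := by
  classical
  obtain ⟨Cs, hCs0, hsc, hdisj, hreach⟩ := h
  refine ⟨fun i => if i = 0 then C' else Cs i, by simp, ?_, ?_, ?_⟩
  · intro i
    by_cases h0 : i = 0
    · simpa [h0] using isSimpleCycle_rot src tgt (hCs0 ▸ hsc 0) hrot
    · simpa [h0] using hsc i
  · intro i j hij
    by_cases h1 : i = 0 <;> by_cases h2 : j = 0
    · exact absurd (h1.trans h2.symm) hij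
    · simp only [h1, h2, if_pos, if_neg, not_false_iff]
      exact cyclesDisjoint_rot_left src (hCs0 ▸ hrot) (hdisj 0 j (by rw [← h1]; exact hij))
    · simp only [h1, h2, if_pos, if_neg, not_false_iff]
      exact cyclesDisjoint_symm src
        (cyclesDisjoint_rot_left src (hCs0 ▸ hrot)
          (cyclesDisjoint_symm src (hdisj i 0 (by rw [← h2]; exact hij))))
    · simp only [h1, h2, if_neg, not_false_iff]
      exact hdisj i j hij
  · intro i
    have hsuccne : i.succ ≠ 0 := Fin.succ_ne_zero i
    by_cases h0 : i.castSucc = 0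
    · simp only [h0, hsuccne, if_pos, if_neg, not_false_iff]
      exact cycleReaches_rot_left src tgt (by rw [← h0]; exact hreach i) (hCs0 ▸ hrot)
    · simp only [h0, hsuccne, if_neg, not_false_iff]
      exact hreach i

lemma hasChainFrom_tail {C : List E} {k : ℕ} (Cs : Fin (k + 2) → List E)
    (hCs0 : Cs 0 = C) (hsc : ∀ i, IsSimpleCycle src tgt (Cs i))
    (hdisj : ∀ i j, i ≠ j → CyclesDisjoint src (Cs i) (Cs j))
    (hreach : ∀ i : Fin (k + 1), CycleReachesCycle src tgt (Cs i.castSucc) (Cs i.succ)) :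
    HasChainFrom src tgt (Cs 1) k := by
  refine ⟨fun i => Cs ⟨i.val + 1, by omega⟩, rfl, fun i => hsc _, ?_, ?_⟩
  · intro i j hij
    refine hdisj _ _ ?_
    intro hcon
    have := congrArg Fin.val hcon
    simp only at this
    exact hij (Fin.ext (by omega))
  · intro i
    have := hreach ⟨i.val + 1, by omega⟩
    have hc : ((⟨i.val + 1, by omega⟩ : Fin (k+1)).castSucc) = ⟨i.val + 1, by omega⟩ := rfl
    have hs : ((⟨i.val + 1, by omega⟩ : Fin (k+1)).succ) = ⟨i.val + 2, by omega⟩ := rfl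
    rw [hc, hs] at this
    convert this using 2
    all_goals exact Fin.ext (by simp)

lemma hasChainFrom_mono {C : List E} {k n : ℕ} (h : HasChainFrom src tgt C k)
    (hn : n ≤ k) : HasChainFrom src tgt C n := by
  obtain ⟨Cs, hCs0, hsc, hdisj, hreach⟩ := h
  refine ⟨fun i => Cs ⟨i.val, by omega⟩, by rw [← hCs0]; congr 1, fun i => hsc _, ?_, ?_⟩
  · intro i j hij
    refine hdisj _ _ ?_
    intro hcon
    have := congrArg Fin.val hcon
    simp only at this
    exact hij (Fin.ext (by omega))
  · intro i
    have := hreach ⟨i.val, by omega⟩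
    have hc : ((⟨i.val, by omega⟩ : Fin k).castSucc) = ⟨i.val, by omega⟩ := rfl
    have hs : ((⟨i.val, by omega⟩ : Fin k).succ) = ⟨i.val + 1, by omega⟩ := rfl
    rw [hc, hs] at this
    convert this using 2
    all_goals exact Fin.ext (by simp)

/-- Separation lemma: if `q` agrees with `p` past its settling time but `q ≠ p`,
then the final cycle of `p` strictly reaches the final cycle of `q`. -/
lemma separation (hG : NoIntersectingCycles src tgt) {p q : ℕ → E}
    (hp : IsInfPath src tgt p) (hq : IsInfPath src tgt q)
    {C : List E} {N : ℕ} (hC : C ≠ []) (hSC : IsSimpleCycle src tgt C)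
    (htailp : ∀ n, N ≤ n → p n = loopPath C hC (n - N))
    {Cq : List E} {Nq : ℕ} (hCq : Cq ≠ []) (hSCq : IsSimpleCycle src tgt Cq)
    (htailq : ∀ n, Nq ≤ n → q n = loopPath Cq hCq (n - Nq))
    (hagree : ∀ m, m ≤ N → q m = p m) (hne : q ≠ p) :
    CycleReachesCycle src tgt C Cq ∧ CyclesDisjoint src C Cq := by
  classical
  have hex : ∃ n, q n ≠ p n := by
    by_contra hcon
    push_neg at hcon
    exact hne (funext hcon)
  let t := Nat.find hex
  have ht : q t ≠ p t := Nat.find_spec hex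
  have hmin : ∀ s, s < t → q s = p s := fun s hs => by
    by_contra hcon
    exact Nat.find_min hex hs hcon
  have htN : N < t := by
    by_contra hcon
    push_neg at hcon
    exact ht (hagree t hcon)
  have hsrceq : src (q t) = src (p t) := by
    have h1 := hq (t - 1)
    have h2 := hp (t - 1)
    rw [show t - 1 + 1 = t by omega] at h1 h2
    rw [← h1, ← h2, hmin (t-1) (by omega)]
  have hpt : p t = loopPath C hC (t - N) := htailp t (by omega)
  have hsrcC : src (q t) ∈ C.map src := by
    rw [hsrceq, hpt]
    exact src_loopPath_mem src C hC _
  have hqtC : q t ∉ C := by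
    intro hmem
    exact ht (eq_of_src_eq src hSC.2 hmem (hpt ▸ loopPath_mem C hC _) (by rw [hsrceq, hpt]))
  by_cases hshare : ∃ v, OnCycle src C v ∧ OnCycle src Cq v
  · -- shared vertex: C and Cq are rotations of each other, q returns: contradiction
    exfalso
    obtain ⟨v, hvC, hvCq⟩ := hshare
    have hrot : C.IsRotated Cq := by
      by_contra hnr
      exact hG C Cq hSC hSCq hnr v ⟨hvC, hvCq⟩
    set n₀ := max Nq (t + 1) with hn₀
    have hsrcn₀ : src (q n₀) ∈ C.map src := by
      have := htailq n₀ (by omega)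
      have hmem : src (q n₀) ∈ Cq.map src := by
        rw [this]
        exact src_loopPath_mem src Cq hCq _
      exact onCycle_rot src hrot.symm hmem
    have hL : IsDiPath src tgt (seg q t (n₀ - t)) := seg_isDiPath src tgt hq t (by omega)
    have hLhead : (seg q t (n₀ - t)).head? = some (q t) := by
      rw [head?_eq_get (seg_ne_nil q t (by omega)), seg_get]
      congr 1
    have hLend : EndsAt tgt (seg q t (n₀ - t)) (src (q n₀)) := by
      have := seg_endsAt src tgt hq t (n := n₀ - t) (by omega)
      rw [show t + (n₀ - t) = n₀ by omega] at this
      exact this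
    exact escape src tgt hG hSC hL hLhead hqtC hsrcC hLend hsrcn₀
  · push_neg at hshare
    have hdisj : CyclesDisjoint src C Cq := fun v hv => hshare v hv.1 hv.2
    have htNq : t < Nq := by
      by_contra hcon
      push_neg at hcon
      have := htailq t hcon
      have hmem : src (q t) ∈ Cq.map src := by
        rw [this]
        exact src_loopPath_mem src Cq hCq _
      exact hdisj (src (q t)) ⟨hsrcC, hmem⟩
    have hreach : Reaches src tgt (src (q t)) (src (q Nq)) :=
      reaches_of_infPath src tgt hq (by omega)
    have hsrcNq : src (q Nq) ∈ Cq.map src := by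
      rw [htailq Nq le_rfl]
      exact src_loopPath_mem src Cq hCq _
    refine ⟨⟨src (q t), hsrcC, src (q Nq), hsrcNq, hreach⟩, hdisj⟩

end CB
namespace CB
variable {V E : Type*} (src tgt : E → V)

lemma loopPath_rotate {C : List E} (hC : C ≠ []) {j : ℕ} (hC' : C.rotate j ≠ [])
    (m : ℕ) : loopPath (C.rotate j) hC' m = loopPath C hC (m + j) := by
  have hlen : (C.rotate j).length = C.length := List.length_rotate C j
  simp only [loopPath]
  rw [List.get_rotate]
  congr 1
  apply Fin.ext
  simp only []
  rw [hlen]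
  exact Nat.mod_add_mod m C.length j ▸ (by rw [Nat.mod_add_mod])

/-- Construct a path agreeing with `p` up to time `M`, then descending to
(a rotation of) the cycle `C'` and looping there forever. -/
lemma construct {p : ℕ → E} (hp : IsInfPath src tgt p)
    {C : List E} {N : ℕ} (hC : C ≠ []) (hSC : IsSimpleCycle src tgt C)
    (htail : ∀ n, N ≤ n → p n = loopPath C hC (n - N))
    {C' : List E} (hSC' : IsSimpleCycle src tgt C')
    (hreach : CycleReachesCycle src tgt C C') {M : ℕ} (hM : N < M) :
    ∃ q : ℕ → E, IsInfPath src tgt q ∧ (∀ m, m < M → q m = p m) ∧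
      ∃ C'' N'', ∃ (hC'' : C'' ≠ []), IsSimpleCycle src tgt C'' ∧ C'.IsRotated C'' ∧
        (∀ n, N'' ≤ n → q n = loopPath C'' hC'' (n - N'')) := by
  have hC'ne : C' ≠ [] := simpleCycle_ne_nil src tgt hSC'
  obtain ⟨v, hv, w, hw, hvw⟩ := hreach
  have hx₀ : src (p M) ∈ C.map src := by
    rw [htail M (by omega)]
    exact src_loopPath_mem src C hC _
  have hxw : Reaches src tgt (src (p M)) w :=
    reaches_trans src tgt (cyc_reach src tgt hC hSC.1 hx₀ hv) hvw
  obtain ⟨iw, hiwlt, hiw⟩ := exists_loopPath_src src hC'ne hw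
  have hinf' := isInfPath_loopPath src tgt hC'ne hSC'.1
  set r : ℕ → E := fun n => loopPath C' hC'ne (n + iw) with hr
  have hrinf : IsInfPath src tgt r := by
    intro n
    have := hinf' (n + iw)
    rw [show n + iw + 1 = n + 1 + iw by omega] at this
    exact this
  have hr0 : src (r 0) = w := by
    have : r 0 = loopPath C' hC'ne iw := by
      simp only [hr, Nat.zero_add]
    rw [this, hiw]
  have hglue : ∃ q₁ K, IsInfPath src tgt q₁ ∧ src (q₁ 0) = src (p M) ∧
      ∀ n, K ≤ n → q₁ n = loopPath C' hC'ne (n - K + iw) := by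
    rcases hxw with heq | ⟨P, hP, hPs, hPe⟩
    · exact ⟨r, 0, hrinf, by rw [hr0, heq], fun n _ => by simp [hr]⟩
    · refine ⟨follow P r, P.length, isInfPath_follow src tgt hP (by rw [hr0]; exact hPe) hrinf,
        ?_, ?_⟩
      · rw [startsAt_follow src r hPs]
      · intro n hn
        rw [follow_ge r hn]
  obtain ⟨q₁, K, hq₁, hq₁0, hq₁tail⟩ := hglue
  have hsegdp : IsDiPath src tgt (seg p 0 M) := seg_isDiPath src tgt hp 0 (by omega)
  have hsegend : EndsAt tgt (seg p 0 M) (src (q₁ 0)) := by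
    rw [hq₁0]
    have := seg_endsAt src tgt hp 0 (n := M) (by omega)
    rwa [Nat.zero_add] at this
  refine ⟨follow (seg p 0 M) q₁,
    isInfPath_follow src tgt hsegdp hsegend hq₁, ?_, ?_⟩
  · intro m hm
    rw [follow_lt q₁ (by rw [seg_length]; omega), seg_get]
    rw [Nat.zero_add]
  · have hC''ne : C'.rotate iw ≠ [] := by
      intro hcon
      have : (C'.rotate iw).length = 0 := by rw [hcon]; rfl
      rw [List.length_rotate] at this
      have := List.length_pos_iff.mpr hC'ne
      omega
    refine ⟨C'.rotate iw, M + K, hC''ne,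
      isSimpleCycle_rot src tgt hSC' ⟨iw, rfl⟩, ⟨iw, rfl⟩, ?_⟩
    intro n hn
    rw [follow_ge q₁ (by rw [seg_length]; omega)]
    rw [seg_length]
    rw [hq₁tail (n - M) (by omega)]
    rw [loopPath_rotate hC'ne hC''ne]
    congr 1
    omega

variable [TopologicalSpace E] [DiscreteTopology E]

/-- Paths that settle on a cycle admitting a descending chain of `k+1` disjoint cycles. -/
def GoodSet (k : ℕ) : Set {p : ℕ → E // IsInfPath src tgt p} :=
  {p | ∃ C N, ∃ (hC : C ≠ []), IsSimpleCycle src tgt C ∧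
    (∀ n, N ≤ n → p.1 n = loopPath C hC (n - N)) ∧ HasChainFrom src tgt C k}

lemma derivedSet_iterate [Finite V] (hG : NoIntersectingCycles src tgt) (k : ℕ) :
    derivedSet^[k] (Set.univ : Set {p : ℕ → E // IsInfPath src tgt p}) =
      GoodSet src tgt k := by
  induction k with
  | zero =>
    simp only [Function.iterate_zero, id_eq]
    ext p
    simp only [Set.mem_univ, true_iff, GoodSet, Set.mem_setOf_eq]
    obtain ⟨C, N, hC, hSC, htail⟩ := settles src tgt hG p.2
    exact ⟨C, N, hC, hSC, htail, hasChainFrom_zero src tgt hSC⟩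
  | succ k ih =>
    rw [Function.iterate_succ_apply', ih]
    ext p
    simp only [GoodSet, Set.mem_setOf_eq]
    constructor
    · intro hmem
      obtain ⟨C, N, hC, hSC, htail⟩ := settles src tgt hG p.2
      obtain ⟨y, hyG, hyne, hyagree⟩ := mem_derivedSet_iff_cyl.mp hmem (N + 1)
      obtain ⟨Cq, Nq, hCq, hSCq, htailq, hchainq⟩ := hyG
      have hsep := separation src tgt hG p.2 y.2 hC hSC htail hCq hSCq htailq
        (fun m hm => hyagree m (by omega)) (fun h => hyne (Subtype.ext h))
      exact ⟨C, N, hC, hSC, htail, chain_extend src tgt hG hSC hchainq hsep.1 hsep.2⟩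
    · rintro ⟨C, N, hC, hSC, htail, hchain⟩
      rw [mem_derivedSet_iff_cyl]
      intro M
      obtain ⟨Cs, hCs0, hsc, hdisj, hreach⟩ := hchain
      have h01 : CycleReachesCycle src tgt C (Cs 1) := by
        have h0 := hreach 0
        rw [Fin.castSucc_zero, Fin.succ_zero_eq_one, hCs0] at h0
        exact h0
      have hne01 : (0 : Fin (k + 2)) ≠ 1 := by
        intro hcon
        have := congrArg Fin.val hcon
        simp at this
      obtain ⟨q, hq, hagree, C'', N'', hC'', hSC'', hrot'', htail''⟩ :=
        construct src tgt p.2 hC hSC htail (hsc 1) h01 (M := max M (N + 1)) (by omega)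
      refine ⟨⟨q, hq⟩, ?_, ?_, fun m hm => hagree m (by omega)⟩
      · exact ⟨C'', N'', hC'', hSC'', htail'',
          hasChainFrom_rot src tgt
            (hasChainFrom_tail src tgt Cs hCs0 hsc hdisj hreach) hrot''⟩
      · intro hcon
        set n := max N N'' with hn
        have h1 : q n = loopPath C'' hC'' (n - N'') := htail'' n (by omega)
        have h2 : p.1 n = loopPath C hC (n - N) := htail n (by omega)
        have heq : q n = p.1 n := congrFun (congrArg Subtype.val hcon) n
        have hmem1 : src (q n) ∈ C''.map src := by
          rw [h1]; exact src_loopPath_mem src C'' hC'' _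
        have hmem2 : src (q n) ∈ C.map src := by
          rw [heq, h2]; exact src_loopPath_mem src C hC _
        have hmem1' : src (q n) ∈ (Cs 1).map src :=
          onCycle_rot src hrot''.symm hmem1
        have hmem2' : src (q n) ∈ (Cs 0).map src := by rw [hCs0]; exact hmem2
        exact hdisj 0 1 hne01 (src (q n)) ⟨hmem2', hmem1'⟩

end CB
/-- Let `G` be a finite directed multigraph with no intersecting
cycles containing at least one simple cycle, and let `D` be the largest `k` for which
there is a chain `C₀ ≥ C₁ ≥ ⋯ ≥ C_k` of pairwise vertex-disjoint simple cycles. Then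
for the space `P` of infinite paths (as a subspace of `E ^ ℕ` with `E` discrete) one has
`P⁽ᴰ⁾ ≠ ∅` and `P⁽ᴰ⁺¹⁾ = ∅`; in particular the Cantor–Bendixson rank of `P` is
`D + 1`. -/
theorem cantorBendixson_rank_infPaths [Fintype V] [Fintype E]
    [TopologicalSpace E] [DiscreteTopology E] (src tgt : E → V)
    (hG : NoIntersectingCycles src tgt)
    (hcyc : ∃ l : List E, IsSimpleCycle src tgt l)
    (D : ℕ)
    (hD : IsGreatest {k : ℕ | ∃ C : Fin (k + 1) → List E,
      (∀ i, IsSimpleCycle src tgt (C i)) ∧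
      (∀ i j, i ≠ j → CyclesDisjoint src (C i) (C j)) ∧
      (∀ i : Fin k, CycleReachesCycle src tgt (C i.castSucc) (C i.succ))} D) :
    derivedSet^[D] (Set.univ : Set {p : ℕ → E // IsInfPath src tgt p}) ≠ ∅ ∧
    derivedSet^[D + 1] (Set.univ : Set {p : ℕ → E // IsInfPath src tgt p}) = ∅ ∧
    sInf {n : ℕ |
      derivedSet^[n] (Set.univ : Set {p : ℕ → E // IsInfPath src tgt p}) = ∅} = D + 1 := by
  classical
  obtain ⟨Cs, hsc, hdisj, hreach⟩ := hD.1
  have hC0ne : Cs 0 ≠ [] := CB.simpleCycle_ne_nil src tgt (hsc 0)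
  have hp0inf : IsInfPath src tgt (CB.loopPath (Cs 0) hC0ne) :=
    CB.isInfPath_loopPath src tgt hC0ne (hsc 0).1
  set pstar : {p : ℕ → E // IsInfPath src tgt p} := ⟨_, hp0inf⟩ with hpstar
  have hchainD : CB.HasChainFrom src tgt (Cs 0) D := ⟨Cs, rfl, hsc, hdisj, hreach⟩
  have hmemD : ∀ m, m ≤ D → pstar ∈ CB.GoodSet src tgt m := by
    intro m hm
    exact ⟨Cs 0, 0, hC0ne, hsc 0, fun n hn => by rw [Nat.sub_zero],
      CB.hasChainFrom_mono src tgt hchainD hm⟩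
  have hiter := CB.derivedSet_iterate src tgt hG
  have hDne : derivedSet^[D] (Set.univ : Set {p : ℕ → E // IsInfPath src tgt p}) ≠ ∅ := by
    rw [hiter D]
    exact (Set.nonempty_of_mem (hmemD D le_rfl)).ne_empty
  have hD1 : derivedSet^[D + 1] (Set.univ : Set {p : ℕ → E // IsInfPath src tgt p}) = ∅ := by
    rw [hiter (D + 1)]
    rw [Set.eq_empty_iff_forall_notMem]
    rintro p ⟨C, N, hC, hSC, htail, Cs', hCs0', hsc', hdisj', hreach'⟩
    have hmem : (D + 1) ∈ {k : ℕ | ∃ C : Fin (k + 1) → List E,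
        (∀ i, IsSimpleCycle src tgt (C i)) ∧
        (∀ i j, i ≠ j → CyclesDisjoint src (C i) (C j)) ∧
        (∀ i : Fin k, CycleReachesCycle src tgt (C i.castSucc) (C i.succ))} :=
      ⟨Cs', hsc', hdisj', hreach'⟩
    have := hD.2 hmem
    omega
  refine ⟨hDne, hD1, ?_⟩
  have h1 : (D + 1) ∈ {n : ℕ |
      derivedSet^[n] (Set.univ : Set {p : ℕ → E // IsInfPath src tgt p}) = ∅} := hD1
  have hlow : ∀ m ∈ {n : ℕ |
      derivedSet^[n] (Set.univ : Set {p : ℕ → E // IsInfPath src tgt p}) = ∅},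
      D + 1 ≤ m := by
    intro m hm
    by_contra hcon
    push_neg at hcon
    have hm' : m ≤ D := by omega
    rw [Set.mem_setOf_eq, hiter m, Set.eq_empty_iff_forall_notMem] at hm
    exact hm pstar (hmemD m hm')
  exact le_antisymm (Nat.sInf_le h1) (hlow _ (Nat.sInf_mem ⟨D + 1, h1⟩))
end

section
/- Let G be a finite directed multigraph with no intersecting cycles in which every vertex has at least one outgoing edge, let A be its adjacency matrix with norm ‖A‖ = ∑_{a,b} |A_{ab}|, and let D be the largest k ∈ ℕ for which there exist pairwise vertex-disjoint simple cycles C₀, C₁, …, C_k with C₀ ≥ C₁ ≥ ⋯ ≥ C_k. Then there exist constants 0 < c₁ ≤ c₂ and N ∈ ℕ such that c₁·n^D ≤ ‖Aⁿ‖ ≤ c₂·n^D for all n ≥ N. -/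
open Filter Topology

variable {V E : Type*}

/-! ### Auxiliary development -/

section AuxWalks

variable {V E : Type*}

/-- A walk from `u` to `v` along the list of edges `l`. -/
def Wk (src tgt : E → V) : V → List E → V → Prop
  | u, [], v => u = v
  | u, (e :: t), v => src e = u ∧ Wk src tgt (tgt e) t v

variable {src tgt : E → V}

theorem wk_nil {u v : V} : Wk src tgt u [] v ↔ u = v := Iff.rfl

theorem wk_cons {u v : V} {e : E} {t : List E} :
    Wk src tgt u (e :: t) v ↔ src e = u ∧ Wk src tgt (tgt e) t v := Iff.rfl

theorem Wk.nil (u : V) : Wk src tgt u [] u := rfl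

theorem wk_append {u w : V} {l l' : List E} :
    Wk src tgt u (l ++ l') w ↔ ∃ v, Wk src tgt u l v ∧ Wk src tgt v l' w := by
  induction l generalizing u with
  | nil => simp [wk_nil]
  | cons e t ih =>
    simp only [List.cons_append, wk_cons, ih]
    constructor
    · rintro ⟨he, v, h1, h2⟩; exact ⟨v, ⟨he, h1⟩, h2⟩
    · rintro ⟨v, ⟨he, h1⟩, h2⟩; exact ⟨he, v, h1, h2⟩

theorem Wk.append {u v w : V} {l l' : List E} (h : Wk src tgt u l v) (h' : Wk src tgt v l' w) :
    Wk src tgt u (l ++ l') w := wk_append.2 ⟨v, h, h'⟩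

theorem Wk.chain' {u v : V} {l : List E} (h : Wk src tgt u l v) :
    l.Chain' (fun e f => tgt e = src f) := by
  induction l generalizing u with
  | nil => exact List.isChain_nil
  | cons e t ih =>
    obtain ⟨he, h2⟩ := h
    refine List.isChain_cons.2 ⟨?_, ih h2⟩
    intro f hf
    cases t with
    | nil => simp at hf
    | cons g t' => simp only [List.head?_cons, Option.mem_def, Option.some.injEq] at hf
                   subst hf; exact h2.1.symm

theorem Wk.startsAt {u v : V} {l : List E} (h : Wk src tgt u l v) (hl : l ≠ []) :
    StartsAt src l u := by
  cases l with
  | nil => exact absurd rfl hl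
  | cons e t => simp [StartsAt, h.1]

theorem Wk.endsAt {u v : V} {l : List E} (h : Wk src tgt u l v) (hl : l ≠ []) :
    EndsAt tgt l v := by
  induction l generalizing u with
  | nil => exact absurd rfl hl
  | cons e t ih =>
    obtain ⟨he, h2⟩ := h
    cases t with
    | nil => simp [EndsAt, wk_nil.1 h2]
    | cons g t' =>
      have := ih h2 (by simp)
      simpa [EndsAt, List.getLast?_cons_cons] using this

theorem Wk.isDiPath {u v : V} {l : List E} (h : Wk src tgt u l v) (hl : l ≠ []) :
    IsDiPath src tgt l := ⟨hl, h.chain'⟩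

theorem wk_of_path : ∀ (l : List E) (u v : V), l.Chain' (fun e f => tgt e = src f) →
    StartsAt src l u → EndsAt tgt l v → Wk src tgt u l v := by
  intro l
  induction l with
  | nil => intro u v _ hs _; simp [StartsAt] at hs
  | cons e t ih =>
    intro u v hc hs he
    simp only [StartsAt, List.head?_cons, Option.map_some, Option.some.injEq] at hs
    refine ⟨hs, ?_⟩
    rcases List.isChain_cons.1 hc with ⟨hhead, hct⟩
    cases t with
    | nil =>
      simp only [EndsAt, List.getLast?_singleton, Option.map_some, Option.some.injEq] at he
      exact he
    | cons g t' =>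
      refine ih _ _ hct ?_ ?_
      · simp [StartsAt, hhead g (by simp)]
      · simpa [EndsAt, List.getLast?_cons_cons] using he

theorem reaches_iff_wk {u v : V} :
    Reaches src tgt u v ↔ ∃ l : List E, Wk src tgt u l v := by
  constructor
  · rintro (rfl | ⟨l, hp, hs, he⟩)
    · exact ⟨[], rfl⟩
    · exact ⟨l, wk_of_path l _ _ hp.2 hs he⟩
  · rintro ⟨l, h⟩
    rcases eq_or_ne l [] with rfl | hne
    · exact Or.inl (wk_nil.1 h)
    · exact Or.inr ⟨l, h.isDiPath hne, h.startsAt hne, h.endsAt hne⟩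

theorem Wk.reaches {u v : V} {l : List E} (h : Wk src tgt u l v) :
    Reaches src tgt u v := reaches_iff_wk.2 ⟨l, h⟩

theorem Reaches.trans {u v w : V} (h : Reaches src tgt u v) (h' : Reaches src tgt v w) :
    Reaches src tgt u w := by
  rw [reaches_iff_wk] at *
  obtain ⟨l, hl⟩ := h; obtain ⟨l', hl'⟩ := h'
  exact ⟨l ++ l', hl.append hl'⟩

theorem chain'_to_wk {l : List E} (hc : l.Chain' (fun e f => tgt e = src f)) (hl : l ≠ []) :
    ∃ u v, Wk src tgt u l v := by
  induction l with
  | nil => exact absurd rfl hl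
  | cons e t ih =>
    rcases List.isChain_cons.1 hc with ⟨hhead, hct⟩
    cases t with
    | nil => exact ⟨src e, tgt e, rfl, rfl⟩
    | cons g t' =>
      obtain ⟨u, v, hw⟩ := ih hct (by simp)
      refine ⟨src e, v, rfl, ?_⟩
      have : src g = u := hw.1
      rw [hhead g (by simp), this]
      exact hw

end AuxWalks


section AuxCycles

variable {V E : Type*} {src tgt : E → V}

theorem IsSimpleCycle.ne_nil {l : List E} (h : IsSimpleCycle src tgt l) : l ≠ [] := h.1.1.1

theorem IsSimpleCycle.wk {l : List E} (h : IsSimpleCycle src tgt l) :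
    ∃ v : V, Wk src tgt v l v ∧ v ∈ l.map src := by
  obtain ⟨⟨hp, v, hs, he⟩, _⟩ := h
  refine ⟨v, wk_of_path l _ _ hp.2 hs he, ?_⟩
  cases l with
  | nil => exact absurd rfl hp.1
  | cons e t =>
    simp only [StartsAt, List.head?_cons, Option.map_some, Option.some.injEq] at hs
    exact hs ▸ List.mem_map_of_mem (f := src) (by simp)

theorem IsSimpleCycle.tgt_mem {l : List E} {e : E} (h : IsSimpleCycle src tgt l) (he : e ∈ l) :
    tgt e ∈ l.map src := by
  obtain ⟨v, hw, hv⟩ := h.wk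
  obtain ⟨l₁, l₂, rfl⟩ := List.append_of_mem he
  rcases wk_append.1 hw with ⟨x, h1, h2⟩
  obtain ⟨hx, h3⟩ := h2
  cases l₂ with
  | nil => rw [wk_nil] at h3; exact h3 ▸ hv
  | cons g t => exact h3.1 ▸ List.mem_map_of_mem (f := src) (by simp)

theorem IsSimpleCycle.rotate {l : List E} {a : V} (h : IsSimpleCycle src tgt l)
    (ha : a ∈ l.map src) :
    ∃ l', l.IsRotated l' ∧ IsSimpleCycle src tgt l' ∧ Wk src tgt a l' a ∧
      l'.length = l.length := by
  obtain ⟨e, hel, hea⟩ := List.mem_map.1 ha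
  obtain ⟨l₁, l₂, rfl⟩ := List.append_of_mem hel
  obtain ⟨v, hw, hv⟩ := h.wk
  rcases wk_append.1 hw with ⟨x, h1, h2⟩
  obtain ⟨hx, h3⟩ := h2
  have hxa : x = a := hx.symm.trans hea
  have hw' : Wk src tgt a ((e :: l₂) ++ l₁) a :=
    Wk.append (l := e :: l₂) ⟨hea, h3⟩ (hxa ▸ h1)
  refine ⟨(e :: l₂) ++ l₁, List.isRotated_append, ?_, hw', by simp; omega⟩
  have hne : (e :: l₂) ++ l₁ ≠ [] := by simp
  refine ⟨⟨⟨hne, hw'.chain'⟩, a, hw'.startsAt hne, hw'.endsAt hne⟩, ?_⟩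
  have hrot : (l₁ ++ e :: l₂).map src ~r ((e :: l₂) ++ l₁).map src := by
    rw [List.map_append, List.map_append]
    exact List.isRotated_append
  exact hrot.nodup_iff.1 h.2

theorem IsSimpleCycle.wk_between {l : List E} {a b : V} (h : IsSimpleCycle src tgt l)
    (ha : a ∈ l.map src) (hb : b ∈ l.map src) :
    ∃ w, Wk src tgt a w b ∧ ∀ e ∈ w, e ∈ l := by
  obtain ⟨l', hrot, h', hw, _⟩ := h.rotate ha
  have hb' : b ∈ l'.map src := (hrot.map src).mem_iff.1 hb
  obtain ⟨e, hel, heb⟩ := List.mem_map.1 hb'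
  obtain ⟨m₁, m₂, hm⟩ := List.append_of_mem hel
  rw [hm] at hw
  rcases wk_append.1 hw with ⟨x, h1, h2⟩
  obtain rfl : x = b := h2.1.symm.trans heb
  refine ⟨m₁, h1, fun f hf => hrot.mem_iff.2 ?_⟩
  rw [hm]; exact List.mem_append_left _ hf

/-- An edge lying on some simple cycle. -/
def CycE (src tgt : E → V) (e : E) : Prop :=
  ∃ l, IsSimpleCycle src tgt l ∧ e ∈ l

theorem cycE_unique (hG : NoIntersectingCycles src tgt) {e e' : E}
    (hc : CycE src tgt e) (hc' : CycE src tgt e') (hss : src e = src e') : e = e' := by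
  obtain ⟨C, hC, heC⟩ := hc
  obtain ⟨C', hC', heC'⟩ := hc'
  have h1 : src e ∈ C.map src := List.mem_map_of_mem (f := src) heC
  have h2 : src e' ∈ C'.map src := List.mem_map_of_mem (f := src) heC'
  by_cases hrot : C.IsRotated C'
  · exact List.inj_on_of_nodup_map hC.2 heC (hrot.mem_iff.2 heC') hss
  · exact absurd ⟨h1, hss ▸ h2⟩ (hG C C' hC hC' hrot (src e))

theorem pair_sublist {α : Type*} {a b : α} :
    ∀ {l : List α}, List.Sublist [a, b] l → ∃ l₁ l₂ l₃, l = l₁ ++ a :: (l₂ ++ b :: l₃) := by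
  intro l h
  induction l with
  | nil => simp at h
  | cons c t ih =>
    cases h with
    | cons _ h' =>
      obtain ⟨l₁, l₂, l₃, rfl⟩ := ih h'
      exact ⟨c :: l₁, l₂, l₃, rfl⟩
    | cons_cons _ h' =>
      have hb : b ∈ t := h'.subset (by simp)
      obtain ⟨t₁, t₂, rfl⟩ := List.append_of_mem hb
      exact ⟨[], t₁, t₂, rfl⟩

/-- Every closed walk is contained in a single simple cycle. -/
theorem closed_wk_subset (hG : NoIntersectingCycles src tgt) :
    ∀ (n : ℕ) (l : List E) (v : V), l.length ≤ n → l ≠ [] → Wk src tgt v l v →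
    ∃ C, IsSimpleCycle src tgt C ∧ ∀ e ∈ l, e ∈ C := by
  intro n
  induction n with
  | zero =>
    intro l v hlen hne _
    cases l with
    | nil => exact absurd rfl hne
    | cons e t => simp at hlen
  | succ n ih =>
    intro l v hlen hne hw
    by_cases hnd : (l.map src).Nodup
    · exact ⟨l, ⟨⟨⟨hne, hw.chain'⟩, v, hw.startsAt hne, hw.endsAt hne⟩, hnd⟩, fun e he => he⟩
    · rw [List.nodup_iff_sublist] at hnd
      push_neg at hnd
      obtain ⟨x, hx⟩ := hnd
      obtain ⟨l'', hsub, hmap⟩ := List.sublist_map_iff.1 hx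
      replace hmap := hmap.symm
      obtain ⟨e1, e2, he1x, he2x, rfl⟩ : ∃ e1 e2, src e1 = x ∧ src e2 = x ∧ l'' = [e1, e2] := by
        rcases l'' with _ | ⟨e1, l''⟩
        · simp at hmap
        rcases l'' with _ | ⟨e2, l''⟩
        · simp at hmap
        rcases l'' with _ | ⟨e3, l''⟩
        · simp only [List.map_cons, List.map_nil, List.cons.injEq, and_true] at hmap
          exact ⟨e1, e2, hmap.1, hmap.2, rfl⟩
        · simp at hmap
      obtain ⟨l₁, l₂, l₃, rfl⟩ := pair_sublist hsub
      rcases wk_append.1 hw with ⟨x1, h1, h2⟩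
      obtain ⟨he1, h3⟩ := h2
      rcases wk_append.1 h3 with ⟨x2, h4, h5⟩
      obtain ⟨he2, h6⟩ := h5
      have hxx : x2 = x1 := by rw [← he2, he2x, ← he1x, he1]
      have hw1 : Wk src tgt x1 (e1 :: l₂) x1 := ⟨he1, hxx ▸ h4⟩
      have hw2 : Wk src tgt v (l₁ ++ e2 :: l₃) v := by
        refine h1.append ⟨?_, h6⟩
        rw [he2, hxx]
      have hlen' : (l₁ ++ e1 :: (l₂ ++ e2 :: l₃)).length =
          l₁.length + l₂.length + l₃.length + 2 := by simp; omega
      rw [hlen'] at hlen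
      obtain ⟨Ca, hCa, hsa⟩ := ih (e1 :: l₂) x1 (by simp; omega) (by simp) hw1
      obtain ⟨Cb, hCb, hsb⟩ := ih (l₁ ++ e2 :: l₃) v (by simp; omega) (by simp) hw2
      have hva : src e1 ∈ Ca.map src := List.mem_map_of_mem (f := src) (hsa e1 (by simp))
      have hvb : src e2 ∈ Cb.map src := List.mem_map_of_mem (f := src) (hsb e2 (by simp))
      have hse : src e1 = src e2 := by rw [he1x, he2x]
      have hrot : Ca.IsRotated Cb := by
        by_contra hnr
        exact hG Ca Cb hCa hCb hnr (src e1) ⟨hva, hse ▸ hvb⟩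
      refine ⟨Cb, hCb, fun e he => ?_⟩
      have hmem : e ∈ l₁ ∨ e = e1 ∨ e ∈ l₂ ∨ e = e2 ∨ e ∈ l₃ := by
        simpa [List.mem_append, List.mem_cons, or_assoc] using he
      rcases hmem with h | h | h | h | h
      · exact hsb e (List.mem_append_left _ h)
      · exact hrot.mem_iff.1 (hsa e (by simp [h]))
      · exact hrot.mem_iff.1 (hsa e (by simp [h]))
      · exact hsb e (List.mem_append_right _ (by simp [h]))
      · exact hsb e (List.mem_append_right _ (by simp [h]))

theorem closed_wk_subset' (hG : NoIntersectingCycles src tgt) {l : List E} {v : V}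
    (hne : l ≠ []) (hw : Wk src tgt v l v) :
    ∃ C, IsSimpleCycle src tgt C ∧ ∀ e ∈ l, e ∈ C :=
  closed_wk_subset hG l.length l v le_rfl hne hw

theorem closed_wk_cycE (hG : NoIntersectingCycles src tgt) {l : List E} {v : V}
    (hne : l ≠ []) (hw : Wk src tgt v l v) {e : E} (he : e ∈ l) : CycE src tgt e := by
  obtain ⟨C, hC, hsub⟩ := closed_wk_subset' hG hne hw
  exact ⟨C, hC, hsub e he⟩

end AuxCycles

section AuxRuns

variable {V E : Type*}

open scoped Classical in
/-- Whether an edge lies on a simple cycle, as a `Bool`. -/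
noncomputable def cycB (src tgt : E → V) (e : E) : Bool := decide (CycE src tgt e)

open scoped Classical in
/-- A chosen simple cycle through an edge. -/
noncomputable def cycOf (src tgt : E → V) (e : E) : List E :=
  if h : CycE src tgt e then h.choose else []

/-- The non-cycle edges of a path. -/
noncomputable def nonCyc (src tgt : E → V) (l : List E) : List E :=
  l.filter (fun e => !cycB src tgt e)

/-- The run-length encoding of the maximal runs of cycle edges in a path. -/
noncomputable def rl (src tgt : E → V) : List E → List ℕ
  | [] => [0]
  | e :: t => if cycB src tgt e then ((rl src tgt t).headI + 1) :: (rl src tgt t).tail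
              else 0 :: rl src tgt t

/-- The cycles of the maximal nonempty runs of cycle edges in a path. -/
noncomputable def RS (src tgt : E → V) : List E → List (List E)
  | [] => []
  | e :: t =>
    if cycB src tgt e then
      (match t with
       | [] => [cycOf src tgt e]
       | f :: _ => if cycB src tgt f then RS src tgt t else cycOf src tgt e :: RS src tgt t)
    else RS src tgt t

variable {src tgt : E → V}

theorem cycB_iff {e : E} : cycB src tgt e = true ↔ CycE src tgt e := by
  simp [cycB]

theorem cycOf_spec {e : E} (he : CycE src tgt e) :
    IsSimpleCycle src tgt (cycOf src tgt e) ∧ e ∈ cycOf src tgt e := by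
  rw [cycOf]
  split
  next h2 => exact ⟨h2.choose_spec.1, h2.choose_spec.2⟩
  next h2 => exact absurd he h2

theorem headI_cons_tail {l : List ℕ} (h : l ≠ []) : l.headI :: l.tail = l := by
  cases l with
  | nil => exact absurd rfl h
  | cons a t => rfl

theorem rl_ne_nil (l : List E) : rl src tgt l ≠ [] := by
  cases l with
  | nil => simp [rl]
  | cons e t => simp only [rl]; split <;> simp

theorem nonCyc_cons_cyc {e : E} {t : List E} (h : cycB src tgt e = true) :
    nonCyc src tgt (e :: t) = nonCyc src tgt t := by
  simp [nonCyc, List.filter_cons, h]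

theorem nonCyc_cons_noncyc {e : E} {t : List E} (h : ¬ cycB src tgt e = true) :
    nonCyc src tgt (e :: t) = e :: nonCyc src tgt t := by
  have h2 : cycB src tgt e = false := by simpa using h
  simp [nonCyc, List.filter_cons, h2]

theorem rl_cons_cyc {e : E} {t : List E} (h : cycB src tgt e = true) :
    rl src tgt (e :: t) = ((rl src tgt t).headI + 1) :: (rl src tgt t).tail := by
  simp [rl, h]

theorem rl_cons_noncyc {e : E} {t : List E} (h : ¬ cycB src tgt e = true) :
    rl src tgt (e :: t) = 0 :: rl src tgt t := by
  simp [rl, h]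

theorem rl_length (l : List E) :
    (rl src tgt l).length = (nonCyc src tgt l).length + 1 := by
  induction l with
  | nil => simp [rl, nonCyc]
  | cons e t ih =>
    by_cases h : cycB src tgt e = true
    · rw [rl_cons_cyc h, nonCyc_cons_cyc h, ← ih]
      have h2 := headI_cons_tail (rl_ne_nil (src := src) (tgt := tgt) t)
      calc (((rl src tgt t).headI + 1) :: (rl src tgt t).tail).length
          = ((rl src tgt t).headI :: (rl src tgt t).tail).length := by simp
        _ = (rl src tgt t).length := by rw [h2]
    · rw [rl_cons_noncyc h, nonCyc_cons_noncyc h]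
      simp only [List.length_cons]
      omega

theorem rl_sum (l : List E) :
    (rl src tgt l).sum + (nonCyc src tgt l).length = l.length := by
  induction l with
  | nil => simp [rl, nonCyc]
  | cons e t ih =>
    by_cases h : cycB src tgt e = true
    · rw [rl_cons_cyc h, nonCyc_cons_cyc h]
      have hs : (rl src tgt t).headI + (rl src tgt t).tail.sum = (rl src tgt t).sum := by
        conv_rhs => rw [← headI_cons_tail (rl_ne_nil (src := src) (tgt := tgt) t)]
        simp
      simp only [List.sum_cons, List.length_cons] at ih ⊢
      omega
    · rw [rl_cons_noncyc h, nonCyc_cons_noncyc h]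
      simp only [List.sum_cons, List.length_cons] at ih ⊢
      omega

theorem rl_nonCyc_inj (hG : NoIntersectingCycles src tgt) :
    ∀ (l l' : List E), l.Chain' (fun e f => tgt e = src f) →
      l'.Chain' (fun e f => tgt e = src f) →
      l.head?.map src = l'.head?.map src →
      nonCyc src tgt l = nonCyc src tgt l' → rl src tgt l = rl src tgt l' → l = l' := by
  intro l
  induction l with
  | nil =>
    intro l' _ _ _ hnc hrl
    have hlen : l'.length = 0 := by
      rw [← rl_sum (src := src) (tgt := tgt) l', ← hnc, ← hrl]
      simp [rl, nonCyc]
    exact (List.length_eq_zero_iff.1 hlen).symm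
  | cons e t ih =>
    intro l' hc hc' hhead hnc hrl
    cases l' with
    | nil =>
      exfalso
      have hlen : (e :: t).length = 0 := by
        rw [← rl_sum (src := src) (tgt := tgt) (e :: t), hnc, hrl]
        simp [rl, nonCyc]
      simp at hlen
    | cons e' t' =>
      simp only [List.head?_cons, Option.map_some, Option.some.injEq] at hhead
      have hct : t.Chain' (fun e f => tgt e = src f) := (List.isChain_cons.1 hc).2
      have hct' : t'.Chain' (fun e f => tgt e = src f) := (List.isChain_cons.1 hc').2
      have hmain : ∀ (hee : e = e'), rl src tgt t = rl src tgt t' →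
          nonCyc src tgt t = nonCyc src tgt t' → e :: t = e' :: t' := by
        intro hee htl hnct
        subst hee
        have hlen : t.length = t'.length := by
          rw [← rl_sum (src := src) (tgt := tgt) t, ← rl_sum (src := src) (tgt := tgt) t',
            htl, hnct]
        have hh : t.head?.map src = t'.head?.map src := by
          cases t with
          | nil =>
            cases t' with
            | nil => rfl
            | cons g t2 => simp at hlen
          | cons g t2 =>
            cases t' with
            | nil => simp at hlen
            | cons g2 t3 =>
              have h1 : tgt e = src g := (List.isChain_cons_cons.1 hc).1
              have h2 : tgt e = src g2 := (List.isChain_cons_cons.1 hc').1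
              simp [← h1, ← h2]
        rw [ih t' hct hct' hh hnct htl]
      by_cases h : cycB src tgt e = true <;> by_cases h' : cycB src tgt e' = true
      · have hee : e = e' := cycE_unique hG (cycB_iff.1 h) (cycB_iff.1 h') hhead
        rw [rl_cons_cyc h, rl_cons_cyc h'] at hrl
        have h1 : (rl src tgt t).headI + 1 = (rl src tgt t').headI + 1 ∧
            (rl src tgt t).tail = (rl src tgt t').tail := by
          constructor
          · exact (List.cons.injEq _ _ _ _ ▸ hrl).1
          · exact (List.cons.injEq _ _ _ _ ▸ hrl).2
        have htl : rl src tgt t = rl src tgt t' := by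
          rw [← headI_cons_tail (rl_ne_nil (src := src) (tgt := tgt) t),
            ← headI_cons_tail (rl_ne_nil (src := src) (tgt := tgt) t')]
          have h3 : (rl src tgt t).headI = (rl src tgt t').headI := by omega
          rw [h3, h1.2]
        rw [nonCyc_cons_cyc h, nonCyc_cons_cyc h'] at hnc
        exact hmain hee htl hnc
      · exfalso
        rw [rl_cons_cyc h, rl_cons_noncyc h'] at hrl
        have h1 : (rl src tgt t).headI + 1 = 0 := (List.cons.injEq _ _ _ _ ▸ hrl).1
        omega
      · exfalso
        rw [rl_cons_noncyc h, rl_cons_cyc h'] at hrl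
        have h1 : 0 = (rl src tgt t').headI + 1 := (List.cons.injEq _ _ _ _ ▸ hrl).1
        omega
      · rw [nonCyc_cons_noncyc h, nonCyc_cons_noncyc h'] at hnc
        have hee : e = e' := (List.cons.injEq _ _ _ _ ▸ hnc).1
        rw [rl_cons_noncyc h, rl_cons_noncyc h'] at hrl
        exact hmain hee ((List.cons.injEq _ _ _ _ ▸ hrl).2) ((List.cons.injEq _ _ _ _ ▸ hnc).2)

theorem nonCyc_srcs_nodup (hG : NoIntersectingCycles src tgt) {l : List E}
    (hc : l.Chain' (fun e f => tgt e = src f)) :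
    ((nonCyc src tgt l).map src).Nodup := by
  by_contra hnd
  rw [List.nodup_iff_sublist] at hnd
  push_neg at hnd
  obtain ⟨x, hx⟩ := hnd
  obtain ⟨l2, hsub, hmap⟩ := List.sublist_map_iff.1 hx
  replace hmap := hmap.symm
  obtain ⟨f, f', hfx, hfx', rfl⟩ : ∃ f f', src f = x ∧ src f' = x ∧ l2 = [f, f'] := by
    rcases l2 with _ | ⟨f, l2⟩
    · simp at hmap
    rcases l2 with _ | ⟨f', l2⟩
    · simp at hmap
    rcases l2 with _ | ⟨f'', l2⟩
    · simp only [List.map_cons, List.map_nil, List.cons.injEq, and_true] at hmap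
      exact ⟨f, f', hmap.1, hmap.2, rfl⟩
    · simp at hmap
  have hfnc : f ∈ nonCyc src tgt l := hsub.subset (by simp)
  have hfncyc : ¬ CycE src tgt f := by
    have h2 := List.of_mem_filter hfnc
    simp only [Bool.not_eq_true'] at h2
    rw [← cycB_iff]
    simp [h2]
  have hsubl : List.Sublist [f, f'] l := hsub.trans (List.filter_sublist)
  obtain ⟨l₁, l₂, l₃, rfl⟩ := pair_sublist hsubl
  obtain ⟨u, v, hw⟩ := chain'_to_wk hc (by simp)
  rcases wk_append.1 hw with ⟨x1, h1, h2⟩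
  obtain ⟨hf1, h3⟩ := h2
  rcases wk_append.1 h3 with ⟨x2, h4, h5⟩
  have hxx : x2 = x1 := by rw [← h5.1, hfx', ← hfx, hf1]
  have hw1 : Wk src tgt x1 (f :: l₂) x1 := ⟨hf1, hxx ▸ h4⟩
  exact hfncyc (closed_wk_cycE hG (by simp) hw1 (by simp))

end AuxRuns


section AuxRS

variable {V E : Type*} {src tgt : E → V}

theorem RS_spec (hG : NoIntersectingCycles src tgt) :
    ∀ l : List E, l.Chain' (fun e f => tgt e = src f) →
      (∀ c ∈ RS src tgt l, IsSimpleCycle src tgt c) ∧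
      (∀ c ∈ RS src tgt l, ∃ f, f ∈ l ∧ f ∈ c) ∧
      (∀ e t, l = e :: t → cycB src tgt e = true →
        ∃ c rs, RS src tgt l = c :: rs ∧ e ∈ c) ∧
      (RS src tgt l).Pairwise
        (fun c c' => CyclesDisjoint src c c' ∧ CycleReachesCycle src tgt c c') := by
  intro l
  induction l with
  | nil =>
    intro _
    refine ⟨by simp [RS], by simp [RS], ?_, by simp [RS]⟩
    intro e t heq
    exact absurd heq (by simp)
  | cons e t ih =>
    intro hc
    have hct : t.Chain' (fun e f => tgt e = src f) := (List.isChain_cons.1 hc).2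
    obtain ⟨ih1, ih2, ih3, ih4⟩ := ih hct
    by_cases hcy : cycB src tgt e = true
    · have hce : CycE src tgt e := cycB_iff.1 hcy
      cases t with
      | nil =>
        have hRS : RS src tgt [e] = [cycOf src tgt e] := by simp [RS, hcy]
        rw [hRS]
        refine ⟨?_, ?_, ?_, by simp⟩
        · intro c hc2
          simp only [List.mem_singleton] at hc2
          exact hc2 ▸ (cycOf_spec hce).1
        · intro c hc2
          simp only [List.mem_singleton] at hc2
          exact ⟨e, by simp, hc2 ▸ (cycOf_spec hce).2⟩
        · intro e0 t0 heq _
          have he0 : e0 = e := by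
            have := (List.cons.injEq _ _ _ _ ▸ heq.symm).1
            exact this
          exact ⟨cycOf src tgt e, [], rfl, he0 ▸ (cycOf_spec hce).2⟩
      | cons f t2 =>
        have hj : tgt e = src f := (List.isChain_cons_cons.1 hc).1
        by_cases hfc : cycB src tgt f = true
        · have hRS : RS src tgt (e :: f :: t2) = RS src tgt (f :: t2) := by
            simp [RS, hcy, hfc]
          rw [hRS]
          refine ⟨ih1, ?_, ?_, ih4⟩
          · intro c hc2
            obtain ⟨g, hg, hgc⟩ := ih2 c hc2
            exact ⟨g, List.mem_cons_of_mem _ hg, hgc⟩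
          · intro e0 t0 heq _
            have he0 : e0 = e := (List.cons.injEq _ _ _ _ ▸ heq.symm).1
            obtain ⟨c, rs, hRS2, hfmem⟩ := ih3 f t2 rfl hfc
            refine ⟨c, rs, hRS2, ?_⟩
            have hcmem : c ∈ RS src tgt (f :: t2) := by rw [hRS2]; simp
            have hcsc : IsSimpleCycle src tgt c := ih1 c hcmem
            obtain ⟨Ce, hCe, heCe⟩ := hce
            have hm1 : tgt e ∈ Ce.map src := hCe.tgt_mem heCe
            have hm2 : tgt e ∈ c.map src := hj ▸ List.mem_map_of_mem (f := src) hfmem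
            have hrot : Ce.IsRotated c := by
              by_contra hnr
              exact hG Ce c hCe hcsc hnr (tgt e) ⟨hm1, hm2⟩
            exact he0 ▸ hrot.mem_iff.1 heCe
        · have hfncyc : ¬ CycE src tgt f := by
            rw [← cycB_iff]; exact hfc
          have hRS : RS src tgt (e :: f :: t2) =
              cycOf src tgt e :: RS src tgt (f :: t2) := by
            simp [RS, hcy, hfc]
          rw [hRS]
          have hspec := cycOf_spec hce
          refine ⟨?_, ?_, ?_, ?_⟩
          · intro c hc2
            rcases List.mem_cons.1 hc2 with h | h
            · exact h ▸ hspec.1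
            · exact ih1 c h
          · intro c hc2
            rcases List.mem_cons.1 hc2 with h | h
            · exact ⟨e, by simp, h ▸ hspec.2⟩
            · obtain ⟨g, hg, hgc⟩ := ih2 c h
              exact ⟨g, List.mem_cons_of_mem _ hg, hgc⟩
          · intro e0 t0 heq _
            have he0 : e0 = e := (List.cons.injEq _ _ _ _ ▸ heq.symm).1
            exact ⟨cycOf src tgt e, RS src tgt (f :: t2), rfl, he0 ▸ hspec.2⟩
          · refine List.pairwise_cons.2 ⟨?_, ih4⟩
            intro c' hc'
            obtain ⟨g, hgt, hgc'⟩ := ih2 c' hc'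
            have hsc' : IsSimpleCycle src tgt c' := ih1 c' hc'
            have hgcyc : CycE src tgt g := ⟨c', hsc', hgc'⟩
            have hgt2 : g ∈ t2 := by
              rcases List.mem_cons.1 hgt with h | h
              · exact absurd (h ▸ hgcyc) hfncyc
              · exact h
            obtain ⟨t₁, t₂, ht2⟩ := List.append_of_mem hgt2
            obtain ⟨u, vv, hw⟩ := chain'_to_wk hc (by simp)
            have hleq : e :: f :: t2 = (e :: f :: t₁) ++ (g :: t₂) := by
              rw [ht2]; simp
            rw [hleq] at hw
            rcases wk_append.1 hw with ⟨y, hw1, hw2⟩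
            obtain ⟨hsrce, hw1t⟩ := hw1
            have hy : y = src g := hw2.1.symm
            have hwmid : Wk src tgt (tgt e) (f :: t₁) (src g) := hy ▸ hw1t
            constructor
            · -- disjointness
              intro v hv
              obtain ⟨hv1, hv2⟩ := hv
              have hrot : (cycOf src tgt e).IsRotated c' := by
                by_contra hnr
                exact hG _ _ hspec.1 hsc' hnr v ⟨hv1, hv2⟩
              have hm1 : src g ∈ (cycOf src tgt e).map src :=
                (hrot.map src).mem_iff.2 (List.mem_map_of_mem (f := src) hgc')
              have hm2 : tgt e ∈ (cycOf src tgt e).map src := hspec.1.tgt_mem hspec.2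
              obtain ⟨w₂, hww, _⟩ := hspec.1.wk_between hm1 hm2
              have hclosed : Wk src tgt (tgt e) ((f :: t₁) ++ w₂) (tgt e) :=
                hwmid.append hww
              exact hfncyc (closed_wk_cycE hG (by simp) hclosed (by simp))
            · -- reachability
              refine ⟨src e, List.mem_map_of_mem (f := src) hspec.2, src g,
                List.mem_map_of_mem (f := src) hgc', ?_⟩
              have hwfull : Wk src tgt (src e) (e :: f :: t₁) (src g) := ⟨rfl, hwmid⟩
              exact hwfull.reaches
    · have hRS : RS src tgt (e :: t) = RS src tgt t := by
        cases t <;> simp [RS, hcy]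
      rw [hRS]
      refine ⟨ih1, ?_, ?_, ih4⟩
      · intro c hc2
        obtain ⟨g, hg, hgc⟩ := ih2 c hc2
        exact ⟨g, List.mem_cons_of_mem _ hg, hgc⟩
      · intro e0 t0 heq hcy0
        have he0 : e0 = e := (List.cons.injEq _ _ _ _ ▸ heq.symm).1
        exact absurd (he0 ▸ hcy0) hcy

theorem RS_length : ∀ l : List E,
    (RS src tgt l).length = (rl src tgt l).countP (fun n => decide (n ≠ 0)) := by
  intro l
  induction l with
  | nil => simp [RS, rl]
  | cons e t ih =>
    by_cases h : cycB src tgt e = true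
    · cases t with
      | nil => simp [RS, rl, h, List.countP_cons]
      | cons f t2 =>
        by_cases hf : cycB src tgt f = true
        · have hRS : RS src tgt (e :: f :: t2) = RS src tgt (f :: t2) := by
            simp [RS, h, hf]
          rw [hRS, ih, rl_cons_cyc h, rl_cons_cyc hf]
          simp [List.countP_cons]
        · have hRS : RS src tgt (e :: f :: t2) =
              cycOf src tgt e :: RS src tgt (f :: t2) := by
            simp [RS, h, hf]
          rw [hRS, List.length_cons, ih, rl_cons_cyc h, rl_cons_noncyc hf]
          simp [List.countP_cons]
    · have hRS : RS src tgt (e :: t) = RS src tgt t := by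
        cases t <;> simp [RS, h]
      rw [hRS, ih, rl_cons_noncyc h]
      simp [List.countP_cons]

theorem runs_bound (hG : NoIntersectingCycles src tgt) {D : ℕ}
    (hmax : ∀ (k : ℕ) (C : Fin (k + 1) → List E),
      (∀ i, IsSimpleCycle src tgt (C i)) →
      (∀ i j, i ≠ j → CyclesDisjoint src (C i) (C j)) →
      (∀ i : Fin k, CycleReachesCycle src tgt (C i.castSucc) (C i.succ)) → k ≤ D)
    {l : List E} (hc : l.Chain' (fun e f => tgt e = src f)) :
    (rl src tgt l).countP (fun n => decide (n ≠ 0)) ≤ D + 1 := by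
  rw [← RS_length]
  obtain ⟨h1, h2, h3, h4⟩ := RS_spec hG l hc
  rcases hk : RS src tgt l with _ | ⟨c0, rs⟩
  · simp
  rw [hk] at h1 h4
  have hlen : (c0 :: rs).length = rs.length + 1 := by simp
  have hget : ∀ i : Fin (rs.length + 1), (c0 :: rs).get (Fin.cast hlen.symm i) ∈ c0 :: rs := by
    intro i; apply List.get_mem
  have hpair := List.pairwise_iff_get.1 h4
  have hltcast : ∀ i j : Fin (rs.length + 1), i < j →
      Fin.cast hlen.symm i < Fin.cast hlen.symm j := by
    intro i j hij
    simpa only [Fin.lt_def, Fin.coe_cast] using hij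
  have hdisj : ∀ i j : Fin (rs.length + 1), i ≠ j →
      CyclesDisjoint src ((c0 :: rs).get (Fin.cast hlen.symm i))
        ((c0 :: rs).get (Fin.cast hlen.symm j)) := by
    intro i j hij
    rcases lt_or_gt_of_ne hij with hlt | hgt
    · exact (hpair _ _ (hltcast _ _ hlt)).1
    · have h5 := (hpair _ _ (hltcast _ _ hgt)).1
      intro v hv
      exact h5 v ⟨hv.2, hv.1⟩
  have hreach : ∀ i : Fin rs.length,
      CycleReachesCycle src tgt ((c0 :: rs).get (Fin.cast hlen.symm i.castSucc))
        ((c0 :: rs).get (Fin.cast hlen.symm i.succ)) :=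
    fun i => (hpair _ _ (hltcast _ _ (Fin.castSucc_lt_succ (i := i)))).2
  have hD := hmax rs.length (fun i => (c0 :: rs).get (Fin.cast hlen.symm i))
    (fun i => h1 _ (hget i)) hdisj hreach
  exact hlen ▸ Nat.succ_le_succ hD

end AuxRS


section AuxCount

variable {V E : Type*} {src tgt : E → V}

theorem nat_le_sum_of_mem : ∀ {u : List ℕ} {x : ℕ}, x ∈ u → x ≤ u.sum := by
  intro u
  induction u with
  | nil => intro x hx; simp at hx
  | cons a t ih =>
    intro x hx
    rcases List.mem_cons.1 hx with rfl | hx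
    · simp
    · have := ih hx
      simp only [List.sum_cons]
      omega

theorem sum_filter_pos : ∀ u : List ℕ, (u.filter (fun x => decide (x ≠ 0))).sum = u.sum := by
  intro u
  induction u with
  | nil => rfl
  | cons a t ih =>
    rcases eq_or_ne a 0 with rfl | ha
    · simpa [List.filter_cons] using ih
    · rw [List.filter_cons, if_pos (by simpa using ha)]
      simp only [List.sum_cons]
      omega

theorem map_filter_recover : ∀ (u u' : List ℕ),
    u.map (fun x => decide (x ≠ 0)) = u'.map (fun x => decide (x ≠ 0)) →
    u.filter (fun x => decide (x ≠ 0)) = u'.filter (fun x => decide (x ≠ 0)) → u = u' := by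
  intro u
  induction u with
  | nil =>
    intro u' h _
    exact (List.map_eq_nil_iff.1 h.symm).symm
  | cons a t ih =>
    intro u' h hf
    cases u' with
    | nil => simp at h
    | cons a' t' =>
      simp only [List.map_cons, List.cons.injEq] at h
      by_cases ha : a = 0
      · have ha' : a' = 0 := by
          by_contra hne
          rw [ha] at h
          simp [hne] at h
        subst ha; subst ha'
        have hf' : t.filter (fun x => decide (x ≠ 0)) = t'.filter (fun x => decide (x ≠ 0)) := by
          simpa [List.filter_cons] using hf
        rw [ih t' h.2 hf']
      · have ha' : a' ≠ 0 := by
          by_contra hne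
          rw [hne] at h
          simp [ha] at h
        have hfa : (a :: t).filter (fun x => decide (x ≠ 0)) =
            a :: t.filter (fun x => decide (x ≠ 0)) := by
          simp [List.filter_cons, ha]
        have hfa' : (a' :: t').filter (fun x => decide (x ≠ 0)) =
            a' :: t'.filter (fun x => decide (x ≠ 0)) := by
          simp [List.filter_cons, ha']
        rw [hfa, hfa'] at hf
        have h1 : a = a' := (List.cons.injEq _ _ _ _ ▸ hf).1
        have h2 := (List.cons.injEq _ _ _ _ ▸ hf).2
        rw [h1, ih t' h.2 h2]

theorem nat_list_ext {DD : ℕ} : ∀ (u u' : List ℕ), u.length = u'.length →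
    u.length ≤ DD + 1 → (∀ i : Fin DD, u.getD i 0 = u'.getD i 0) →
    u.sum = u'.sum → u = u' := by
  intro u u' hlen hle hget hsum
  have htake : u.take DD = u'.take DD := by
    apply List.ext_get
    · simp [hlen]
    · intro i h1 h2
      have hiD : i < DD := lt_of_lt_of_le h1 (by simp [List.length_take])
      have hiu : i < u.length := by
        simp only [List.length_take, lt_min_iff] at h1
        exact h1.2
      have hiu' : i < u'.length := hlen ▸ hiu
      have e1 : (u.take DD).get ⟨i, h1⟩ = u.getD i 0 := by
        rw [List.getD_eq_get (i := ⟨i, hiu⟩)]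
        simp
      have e2 : (u'.take DD).get ⟨i, h2⟩ = u'.getD i 0 := by
        rw [List.getD_eq_get (i := ⟨i, hiu'⟩)]
        simp
      rw [e1, e2, hget ⟨i, hiD⟩]
  have hsumtake : (u.take DD).sum = (u'.take DD).sum := by rw [htake]
  have hports : (u.drop DD).sum = (u'.drop DD).sum := by
    have h1 := congrArg List.sum (List.take_append_drop DD u)
    have h2 := congrArg List.sum (List.take_append_drop DD u')
    rw [List.sum_append] at h1 h2
    omega
  have hdroplen : (u.drop DD).length = (u'.drop DD).length := by simp [hlen]
  have hdrople : (u.drop DD).length ≤ 1 := by simp; omega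
  have hdrop : u.drop DD = u'.drop DD := by
    rcases hu : u.drop DD with _ | ⟨x, r⟩ <;> rcases hu' : u'.drop DD with _ | ⟨x', r'⟩
    · rfl
    · rw [hu, hu'] at hdroplen; simp at hdroplen
    · rw [hu, hu'] at hdroplen; simp at hdroplen
    · rw [hu, hu'] at hdroplen hports
      rw [hu] at hdrople
      simp only [List.length_cons] at hdroplen hdrople
      have hr : r = [] := List.length_eq_zero_iff.1 (by omega)
      have hr' : r' = [] := List.length_eq_zero_iff.1 (by omega)
      subst hr; subst hr'
      simp only [List.sum_cons, List.sum_nil] at hports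
      have hxx : x = x' := by omega
      rw [hxx]
  conv_lhs => rw [← List.take_append_drop DD u]
  conv_rhs => rw [← List.take_append_drop DD u']
  rw [htake, hdrop]

theorem totalPaths_le [Fintype V] [Fintype E] [Nonempty V] (hG : NoIntersectingCycles src tgt) {D : ℕ}
    (hmax : ∀ (k : ℕ) (C : Fin (k + 1) → List E),
      (∀ i, IsSimpleCycle src tgt (C i)) →
      (∀ i j, i ≠ j → CyclesDisjoint src (C i) (C j)) →
      (∀ i : Fin k, CycleReachesCycle src tgt (C i.castSucc) (C i.succ)) → k ≤ D) :
    ∃ K : ℕ, 0 < K ∧ ∀ n : ℕ, 1 ≤ n →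
      Nat.card {l : List E // l.length = n ∧ IsDiPath src tgt l} ≤ K * (n + 1) ^ D := by
  classical
  set m := Fintype.card V with hm
  haveI hA : Finite {fs : List E // fs.length ≤ m} := (List.finite_length_le E m).to_subtype
  haveI hB : Finite {bs : List Bool // bs.length ≤ m + 1} :=
    (List.finite_length_le Bool (m + 1)).to_subtype
  refine ⟨Nat.card V * Nat.card {fs : List E // fs.length ≤ m} *
    Nat.card {bs : List Bool // bs.length ≤ m + 1}, ?_, ?_⟩
  · have h1 : 0 < Nat.card {fs : List E // fs.length ≤ m} :=
      Nat.card_pos_iff.2 ⟨⟨⟨[], by simp⟩⟩, hA⟩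
    have h2 : 0 < Nat.card {bs : List Bool // bs.length ≤ m + 1} :=
      Nat.card_pos_iff.2 ⟨⟨⟨[], by simp⟩⟩, hB⟩
    have h0 : 0 < Nat.card V := Nat.card_pos
    exact Nat.mul_pos (Nat.mul_pos h0 h1) h2
  intro n hn
  haveI hP : Finite {l : List E // l.length = n ∧ IsDiPath src tgt l} := by
    have hfin : {l : List E | l.length = n ∧ IsDiPath src tgt l}.Finite :=
      (List.finite_length_eq E n).subset (fun l hl => hl.1)
    exact hfin.to_subtype
  have hfslen : ∀ (l : List E), l.Chain' (fun e f => tgt e = src f) →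
      (nonCyc src tgt l).length ≤ m := by
    intro l hc
    have h1 := nonCyc_srcs_nodup hG hc
    have h2 := h1.length_le_card
    simpa using h2
  set pos : ℕ → Bool := fun x => decide (x ≠ 0) with hpos
  let Φ : {l : List E // l.length = n ∧ IsDiPath src tgt l} →
      V × {fs : List E // fs.length ≤ m} × {bs : List Bool // bs.length ≤ m + 1} ×
        (Fin D → Fin (n + 1)) := fun p =>
    ⟨src (p.1.head p.2.2.1),
     ⟨nonCyc src tgt p.1, hfslen p.1 p.2.2.2⟩,
     ⟨(rl src tgt p.1).map pos, by
        rw [List.length_map, rl_length]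
        exact Nat.succ_le_succ (hfslen p.1 p.2.2.2)⟩,
     fun i => ⟨((rl src tgt p.1).filter pos).getD i 0, by
        by_cases hi : (i : ℕ) < ((rl src tgt p.1).filter pos).length
        · rw [List.getD_eq_get (i := ⟨i, hi⟩)]
          have hmem : ((rl src tgt p.1).filter pos).get ⟨i, hi⟩ ∈ rl src tgt p.1 :=
            (List.filter_sublist).subset (List.get_mem _ _)
          have hle : ((rl src tgt p.1).filter pos).get ⟨i, hi⟩ ≤ (rl src tgt p.1).sum :=
            nat_le_sum_of_mem hmem
          have hs := rl_sum (src := src) (tgt := tgt) p.1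
          have hn2 : (p.1).length = n := p.2.1
          omega
        · rw [List.getD_eq_default (hn := le_of_not_gt hi)]
          omega⟩⟩
  have hinj : Function.Injective Φ := by
    rintro ⟨l, hl1, hl2⟩ ⟨l', hl1', hl2'⟩ heq
    simp only [Φ, Prod.mk.injEq, Subtype.mk.injEq] at heq
    obtain ⟨h1, h2, h3, h4⟩ := heq
    have hchain := hl2.2
    have hchain' := hl2'.2
    have hcount : ((rl src tgt l).filter pos).length ≤ D + 1 := by
      rw [← List.countP_eq_length_filter]
      exact runs_bound hG hmax hchain
    have hflen : ((rl src tgt l).filter pos).length = ((rl src tgt l').filter pos).length := by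
      rw [← List.countP_eq_length_filter, ← List.countP_eq_length_filter]
      have := congrArg (List.countP (fun b => b)) h3
      rwa [List.countP_map, List.countP_map] at this
    have hsum : ((rl src tgt l).filter pos).sum = ((rl src tgt l').filter pos).sum := by
      rw [hpos, sum_filter_pos, sum_filter_pos]
      have hs := rl_sum (src := src) (tgt := tgt) l
      have hs' := rl_sum (src := src) (tgt := tgt) l'
      rw [hl1] at hs
      rw [hl1'] at hs'
      rw [h2] at hs
      omega
    have hgetD : ∀ i : Fin D, ((rl src tgt l).filter pos).getD i 0 =
        ((rl src tgt l').filter pos).getD i 0 := by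
      intro i
      have h5 := congrArg Fin.val (congrFun h4 i)
      simpa using h5
    have hfeq : (rl src tgt l).filter pos = (rl src tgt l').filter pos :=
      nat_list_ext _ _ hflen hcount hgetD hsum
    have hrleq : rl src tgt l = rl src tgt l' := map_filter_recover _ _ h3 hfeq
    have hhead : l.head?.map src = l'.head?.map src := by
      rw [List.head?_eq_head hl2.1, List.head?_eq_head hl2'.1]
      simp [h1]
    have := rl_nonCyc_inj hG l l' hchain hchain' hhead h2 hrleq
    exact Subtype.ext this
  calc Nat.card {l : List E // l.length = n ∧ IsDiPath src tgt l}
      ≤ Nat.card (V × {fs : List E // fs.length ≤ m} ×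
          {bs : List Bool // bs.length ≤ m + 1} × (Fin D → Fin (n + 1))) :=
        Nat.card_le_card_of_injective Φ hinj
    _ = Nat.card V * Nat.card {fs : List E // fs.length ≤ m} *
        Nat.card {bs : List Bool // bs.length ≤ m + 1} * (n + 1) ^ D := by
        rw [Nat.card_prod, Nat.card_prod, Nat.card_prod]
        have hF : Nat.card (Fin D → Fin (n + 1)) = (n + 1) ^ D := by
          rw [Nat.card_eq_fintype_card]
          simp
        rw [hF]
        ring
    _ ≤ Nat.card V * Nat.card {fs : List E // fs.length ≤ m} *
        Nat.card {bs : List Bool // bs.length ≤ m + 1} * (n + 1) ^ D := le_rfl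

end AuxCount


section AuxMatrix

variable {V E : Type*} {src tgt : E → V}

theorem nat_card_sigma {ι : Type*} [Fintype ι] (f : ι → Type*) [∀ i, Finite (f i)] :
    Nat.card (Σ i, f i) = ∑ i, Nat.card (f i) := by
  haveI : ∀ i, Fintype (f i) := fun i => Fintype.ofFinite _
  rw [Nat.card_eq_fintype_card, Fintype.card_sigma]
  exact Finset.sum_congr rfl fun i _ => (Nat.card_eq_fintype_card).symm

theorem finite_sub_len [Finite E] (n : ℕ) (Q : List E → Prop) :
    Finite {l : List E // l.length = n ∧ Q l} := by
  have h : {l : List E | l.length = n ∧ Q l}.Finite :=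
    (List.finite_length_eq E n).subset fun l hl => hl.1
  exact h.to_subtype

theorem startsAt_head {l : List E} (h : l ≠ []) : StartsAt src l (src (l.head h)) := by
  cases l with
  | nil => exact absurd rfl h
  | cons e t => simp [StartsAt]

theorem StartsAt.head_eq {l : List E} {v : V} (hs : StartsAt src l v) (h : l ≠ []) :
    src (l.head h) = v := by
  cases l with
  | nil => exact absurd rfl h
  | cons e t => simpa [StartsAt] using hs

/-- Splitting off the first edge of a path of length `n + 1` with `n ≥ 1`. -/
noncomputable def splitEquiv (src tgt : E → V) (v : V) (n : ℕ) (hn : 1 ≤ n) :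
    {l : List E // l.length = n + 1 ∧ IsDiPath src tgt l ∧ StartsAt src l v} ≃
    Σ e : {e : E // src e = v},
      {t : List E // t.length = n ∧ IsDiPath src tgt t ∧ StartsAt src t (tgt e.1)} where
  toFun p :=
    ⟨⟨p.1.head p.2.2.1.1, p.2.2.2.head_eq p.2.2.1.1⟩, ⟨p.1.tail, by
      obtain ⟨l, hlen, ⟨hne, hch⟩, hst⟩ := p
      refine ⟨by simp [List.length_tail, hlen], ⟨?_, hch.tail⟩, ?_⟩
      · cases l with
        | nil => exact absurd rfl hne
        | cons e t =>
          simp only [List.tail_cons]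
          intro ht
          rw [ht] at hlen
          simp at hlen
          omega
      · cases l with
        | nil => exact absurd rfl hne
        | cons e t =>
          cases t with
          | nil => simp at hlen; omega
          | cons f t2 =>
            have hj : tgt e = src f := (List.isChain_cons_cons.1 hch).1
            simp [StartsAt, List.head, ← hj]⟩⟩
  invFun q :=
    ⟨q.1.1 :: q.2.1, by
      obtain ⟨⟨e, he⟩, ⟨t, hlen, ⟨hne, hch⟩, hst⟩⟩ := q
      refine ⟨by simp [hlen], ⟨by simp, ?_⟩, by simp [StartsAt, he]⟩
      refine List.isChain_cons.2 ⟨?_, hch⟩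
      intro f hf
      cases t with
      | nil => simp at hf
      | cons g t2 =>
        simp only [List.head?_cons, Option.mem_def, Option.some.injEq] at hf
        subst hf
        exact (hst.head_eq (by simp)).symm⟩
  left_inv p := Subtype.ext (List.cons_head_tail p.2.2.1.1)
  right_inv q := by
    obtain ⟨⟨e, he⟩, ⟨t, ht⟩⟩ := q
    rfl

theorem pathCount_one [Fintype E] (a : V) :
    pathCount src tgt a 1 = Nat.card {e : E // src e = a} := by
  apply Nat.card_congr
  refine ⟨fun p => ⟨p.1.head p.2.2.1.1, p.2.2.2.head_eq _⟩,
    fun e => ⟨[e.1], by simp [IsDiPath, StartsAt, e.2, List.Chain', List.isChain_singleton]⟩, ?_, ?_⟩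
  · rintro ⟨l, hlen, ⟨hne, hch⟩, hst⟩
    apply Subtype.ext
    cases l with
    | nil => exact absurd rfl hne
    | cons e t =>
      cases t with
      | nil => rfl
      | cons f t2 => simp at hlen
  · rintro ⟨e, he⟩
    rfl

theorem nat_card_edges_fiber [Fintype E] [Fintype V] (a : V) :
    ∑ b : V, Nat.card {e : E // src e = a ∧ tgt e = b} = Nat.card {e : E // src e = a} := by
  classical
  have h1 : ∀ b, Nat.card {e : E // src e = a ∧ tgt e = b} =
      (Finset.univ.filter (fun e : E => src e = a ∧ tgt e = b)).card := by
    intro b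
    rw [Nat.card_eq_fintype_card, Fintype.card_subtype]
  have h2 : Nat.card {e : E // src e = a} =
      (Finset.univ.filter (fun e : E => src e = a)).card := by
    rw [Nat.card_eq_fintype_card, Fintype.card_subtype]
  rw [h2]
  rw [Finset.card_eq_sum_card_fiberwise
    (f := tgt) (t := Finset.univ) (fun x _ => Finset.mem_univ _)]
  refine (Finset.sum_congr rfl fun b _ => ?_).symm
  rw [h1, Finset.filter_filter]

theorem pathCount_succ [Fintype E] [Fintype V] (a : V) {n : ℕ} (hn : 1 ≤ n) :
    pathCount src tgt a (n + 1) =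
      ∑ b : V, Nat.card {e : E // src e = a ∧ tgt e = b} * pathCount src tgt b n := by
  classical
  haveI : ∀ e : {e : E // src e = a}, Finite
      {t : List E // t.length = n ∧ IsDiPath src tgt t ∧ StartsAt src t (tgt e.1)} :=
    fun e => finite_sub_len n _
  have h0 : pathCount src tgt a (n + 1) =
      ∑ e : {e : E // src e = a}, pathCount src tgt (tgt e.1) n := by
    rw [pathCount, Nat.card_congr (splitEquiv src tgt a n hn), nat_card_sigma]
    rfl
  rw [h0]
  have h1 : ∑ e : {e : E // src e = a}, pathCount src tgt (tgt e.1) n =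
      ∑ e ∈ Finset.univ.filter (fun e : E => src e = a), pathCount src tgt (tgt e) n :=
    (Finset.sum_subtype _ (fun e => by simp) (fun e => pathCount src tgt (tgt e) n)).symm
  rw [h1, ← Finset.sum_fiberwise_of_maps_to
    (g := tgt) (t := Finset.univ) (fun x _ => Finset.mem_univ _)]
  refine Finset.sum_congr rfl fun b _ => ?_
  rw [Finset.filter_filter]
  have h2 : ∑ e ∈ Finset.univ.filter (fun e : E => src e = a ∧ tgt e = b),
      pathCount src tgt (tgt e) n =
      ∑ _e ∈ Finset.univ.filter (fun e : E => src e = a ∧ tgt e = b),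
        pathCount src tgt b n :=
    Finset.sum_congr rfl fun e he => by rw [(Finset.mem_filter.1 he).2.2]
  rw [h2, Finset.sum_const, smul_eq_mul]
  congr 1
  rw [Nat.card_eq_fintype_card, Fintype.card_subtype]

theorem adjMatrix_entry (a b : V) :
    adjMatrix src tgt a b = (Nat.card {e : E // src e = a ∧ tgt e = b} : ℝ) := rfl

theorem adjMatrix_pow_nonneg [Fintype V] [DecidableEq V] (n : ℕ) (a b : V) :
    0 ≤ ((adjMatrix src tgt) ^ n) a b := by
  induction n generalizing a b with
  | zero =>
    simp only [pow_zero]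
    rcases eq_or_ne a b with rfl | hab
    · simp [Matrix.one_apply]
    · simp [Matrix.one_apply, hab]
  | succ n ih =>
    rw [pow_succ, Matrix.mul_apply]
    refine Finset.sum_nonneg fun c _ => mul_nonneg (ih a c) ?_
    rw [adjMatrix_entry]
    positivity

theorem rowsum_pow [Fintype V] [DecidableEq V] [Fintype E] {n : ℕ} (hn : 1 ≤ n) :
    ∀ a : V, ∑ b : V, ((adjMatrix src tgt) ^ n) a b = (pathCount src tgt a n : ℝ) := by
  induction n, hn using Nat.le_induction with
  | base =>
    intro a
    simp only [pow_one]
    rw [pathCount_one]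
    rw [← nat_card_edges_fiber (src := src) (tgt := tgt) a]
    push_cast
    rfl
  | succ n hn ih =>
    intro a
    have hrec := pathCount_succ (src := src) (tgt := tgt) a hn
    rw [hrec]
    rw [pow_succ']
    have hswap : ∑ b : V, ((adjMatrix src tgt) * (adjMatrix src tgt) ^ n) a b =
        ∑ c : V, adjMatrix src tgt a c * ∑ b : V, ((adjMatrix src tgt) ^ n) c b := by
      simp only [Matrix.mul_apply]
      rw [Finset.sum_comm]
      exact Finset.sum_congr rfl fun c _ => by rw [Finset.mul_sum]
    rw [hswap]
    push_cast
    refine Finset.sum_congr rfl fun c _ => ?_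
    rw [ih c, adjMatrix_entry]

theorem card_paths_sigma [Fintype V] [Fintype E] {n : ℕ} (hn : 1 ≤ n) :
    Nat.card {l : List E // l.length = n ∧ IsDiPath src tgt l} =
      ∑ a : V, pathCount src tgt a n := by
  classical
  haveI : ∀ a : V, Finite
      {l : List E // l.length = n ∧ IsDiPath src tgt l ∧ StartsAt src l a} :=
    fun a => finite_sub_len n _
  have hbij : Nat.card (Σ a : V,
      {l : List E // l.length = n ∧ IsDiPath src tgt l ∧ StartsAt src l a}) =
      Nat.card {l : List E // l.length = n ∧ IsDiPath src tgt l} := by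
    apply Nat.card_eq_of_bijective (fun q => ⟨q.2.1, q.2.2.1, q.2.2.2.1⟩)
    constructor
    · rintro ⟨a, ⟨l, hl⟩⟩ ⟨a', ⟨l', hl'⟩⟩ heq
      simp only [Subtype.mk.injEq] at heq
      obtain rfl : l = l' := heq
      obtain rfl : a = a' := by
        have h1 := hl.2.2.head_eq hl.2.1.1
        have h2 := hl'.2.2.head_eq hl'.2.1.1
        rw [← h1, ← h2]
      rfl
    · rintro ⟨l, hlen, hp⟩
      exact ⟨⟨src (l.head hp.1), ⟨l, hlen, hp, startsAt_head hp.1⟩⟩, rfl⟩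
  rw [← hbij, nat_card_sigma]
  rfl

theorem sum_abs_pow [Fintype V] [DecidableEq V] [Fintype E] {n : ℕ} (hn : 1 ≤ n) :
    ∑ a : V, ∑ b : V, |((adjMatrix src tgt) ^ n) a b| =
      ((Nat.card {l : List E // l.length = n ∧ IsDiPath src tgt l} : ℕ) : ℝ) := by
  have h1 : ∀ a b : V, |((adjMatrix src tgt) ^ n) a b| = ((adjMatrix src tgt) ^ n) a b :=
    fun a b => abs_of_nonneg (adjMatrix_pow_nonneg n a b)
  simp only [h1]
  rw [card_paths_sigma hn]
  push_cast
  exact Finset.sum_congr rfl fun a _ => rowsum_pow hn a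

end AuxMatrix


section AuxLower

variable {V E : Type*} {src tgt : E → V}

theorem mutual_cycles (hG : NoIntersectingCycles src tgt) {x y : V} {Cx Cy : List E}
    (hCx : IsSimpleCycle src tgt Cx) (hCy : IsSimpleCycle src tgt Cy)
    (hx : x ∈ Cx.map src) (hy : y ∈ Cy.map src)
    (hxy : Reaches src tgt x y) (hyx : Reaches src tgt y x) :
    ∃ z, OnCycle src Cx z ∧ OnCycle src Cy z := by
  obtain ⟨l1, hl1⟩ := reaches_iff_wk.1 hxy
  obtain ⟨l2, hl2⟩ := reaches_iff_wk.1 hyx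
  rcases eq_or_ne l1 [] with rfl | hne1
  · exact ⟨x, hx, (wk_nil.1 hl1) ▸ hy⟩
  rcases eq_or_ne l2 [] with rfl | hne2
  · exact ⟨x, hx, (wk_nil.1 hl2).symm ▸ hy⟩
  have hw : Wk src tgt x (l1 ++ l2) x := hl1.append hl2
  obtain ⟨Cl, hCl, hsub⟩ := closed_wk_subset' hG (by simp [hne1]) hw
  have hxCl : x ∈ Cl.map src := by
    cases l1 with
    | nil => exact absurd rfl hne1
    | cons e t =>
      have he : e ∈ Cl := hsub e (by simp)
      exact hl1.1 ▸ List.mem_map_of_mem (f := src) he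
  have hyCl : y ∈ Cl.map src := by
    cases l2 with
    | nil => exact absurd rfl hne2
    | cons e t =>
      have he : e ∈ Cl := hsub e (by simp)
      exact hl2.1 ▸ List.mem_map_of_mem (f := src) he
  have hrot1 : Cx.IsRotated Cl := by
    by_contra hnr
    exact hG Cx Cl hCx hCl hnr x ⟨hx, hxCl⟩
  have hrot2 : Cy.IsRotated Cl := by
    by_contra hnr
    exact hG Cy Cl hCy hCl hnr y ⟨hy, hyCl⟩
  exact ⟨y, (hrot1.map src).mem_iff.2 hyCl, hy⟩

/-- Padding walk following a chosen out-edge. -/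
def padL (tgt : E → V) (g : V → E) : V → ℕ → List E
  | _, 0 => []
  | x, (k+1) => g x :: padL tgt g (tgt (g x)) k

theorem length_padL (g : V → E) : ∀ (k : ℕ) (x : V), (padL tgt g x k).length = k := by
  intro k
  induction k with
  | zero => intro x; rfl
  | succ k ih => intro x; simp [padL, ih]

theorem wk_padL (g : V → E) (hg : ∀ x, src (g x) = x) :
    ∀ (k : ℕ) (x : V), ∃ y, Wk src tgt x (padL tgt g x k) y := by
  intro k
  induction k with
  | zero => intro x; exact ⟨x, rfl⟩
  | succ k ih =>
    intro x
    obtain ⟨y, hy⟩ := ih (tgt (g x))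
    exact ⟨y, hg x, hy⟩

theorem mem_padL_reaches (g : V → E) (hg : ∀ x, src (g x) = x) :
    ∀ (k : ℕ) (x : V), ∀ e ∈ padL tgt g x k, Reaches src tgt x (src e) := by
  intro k
  induction k with
  | zero => intro x e he; simp [padL] at he
  | succ k ih =>
    intro x e he
    rcases List.mem_cons.1 he with rfl | he
    · exact Or.inl (hg x).symm
    · have hwk : Wk src tgt x [g x] (tgt (g x)) := ⟨hg x, wk_nil.2 rfl⟩
      have h1 : Reaches src tgt x (tgt (g x)) := hwk.reaches
      exact h1.trans (ih (tgt (g x)) e he)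

/-- Iterated cycle. -/
def lpow (l : List E) (k : ℕ) : List E := (List.replicate k l).flatten

theorem length_lpow (l : List E) (k : ℕ) : (lpow l k).length = k * l.length := by
  induction k with
  | zero => simp [lpow]
  | succ k ih =>
    simp only [lpow, List.replicate_succ, List.flatten_cons, List.length_append]
    rw [show ((List.replicate k l).flatten).length = (lpow l k).length from rfl, ih]
    ring

theorem wk_lpow {u : V} {l : List E} (h : Wk src tgt u l u) (k : ℕ) :
    Wk src tgt u (lpow l k) u := by
  induction k with
  | zero => rfl
  | succ k ih =>
    simp only [lpow, List.replicate_succ, List.flatten_cons]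
    exact h.append ih

theorem countP_lpow (p : E → Bool) (l : List E) (k : ℕ) :
    (lpow l k).countP p = k * l.countP p := by
  induction k with
  | zero => simp [lpow]
  | succ k ih =>
    simp only [lpow, List.replicate_succ, List.flatten_cons, List.countP_append]
    rw [show ((List.replicate k l).flatten).countP p = (lpow l k).countP p from rfl, ih]
    ring

theorem wk_ofFn_flatten : ∀ {D : ℕ} (u : Fin (D + 1) → V) (g : Fin D → List E),
    (∀ i : Fin D, Wk src tgt (u i.castSucc) (g i) (u i.succ)) →
    Wk src tgt (u 0) ((List.ofFn g).flatten) (u (Fin.last D)) := by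
  intro D
  induction D with
  | zero =>
    intro u g _
    simp only [List.ofFn_zero, List.flatten_nil]
    rw [wk_nil]
    congr 1
  | succ D ih =>
    intro u g h
    rw [List.ofFn_succ, List.flatten_cons]
    have h0 : Wk src tgt (u 0) (g 0) (u (Fin.succ 0)) := by
      have := h 0
      rwa [Fin.castSucc_zero] at this
    have hrest : Wk src tgt (u (Fin.succ 0))
        ((List.ofFn (fun i : Fin D => g i.succ)).flatten) (u (Fin.last (D + 1))) := by
      have hih := ih (fun i => u i.succ) (fun i => g i.succ) (fun i => by
        have := h i.succ
        rwa [← Fin.succ_castSucc] at this)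
      have hlast : (Fin.last D).succ = Fin.last (D + 1) := Fin.succ_last D
      rwa [hlast] at hih
    exact h0.append hrest

theorem countP_flatten' (p : E → Bool) :
    ∀ L : List (List E), (L.flatten).countP p = (L.map (fun l => l.countP p)).sum := by
  intro L
  induction L with
  | nil => rfl
  | cons l L ih => simp [List.countP_append, ih]

end AuxLower


section AuxLowerMain

variable {V E : Type*} {src tgt : E → V}

theorem totalPaths_ge [Fintype V] [Fintype E] (hG : NoIntersectingCycles src tgt)
    (hout : ∀ x : V, ∃ e : E, src e = x) {D : ℕ} (C : Fin (D + 1) → List E)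
    (hsc : ∀ i, IsSimpleCycle src tgt (C i))
    (hdisj : ∀ i j, i ≠ j → CyclesDisjoint src (C i) (C j))
    (hreach : ∀ i : Fin D, CycleReachesCycle src tgt (C i.castSucc) (C i.succ)) :
    ∃ B T : ℕ, 1 ≤ T ∧ ∀ n, B + 1 ≤ n →
      ((n - (B + 1)) / T + 1) ^ D ≤
        Nat.card {l : List E // l.length = n ∧ IsDiPath src tgt l} := by
  classical
  choose v hv w hw hvw using hreach
  choose conn hconn using fun i => reaches_iff_wk.1 (hvw i)
  obtain ⟨x0, hx0w, hx0⟩ := (hsc 0).wk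
  set u : Fin (D + 1) → V := Fin.cases x0 (fun j => w j) with hu_def
  have hu : ∀ i, u i ∈ (C i).map src := by
    intro i
    induction i using Fin.cases with
    | zero => simpa [hu_def] using hx0
    | succ j =>
      have h1 : u j.succ = w j := by simp [hu_def]
      rw [h1]
      exact hw j
  have hucast : ∀ i : Fin D, u i.succ = w i := fun i => by simp [hu_def]
  choose rot hrot1 hrot2 hrot3 hrot4 using
    fun i : Fin D => (hsc i.castSucc).rotate (hu i.castSucc)
  choose nav hnav hnavmem using
    fun i : Fin D => (hsc i.castSucc).wk_between (hu i.castSucc) (hv i)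
  set seg : Fin D → List E := fun i => nav i ++ conn i with hseg_def
  have hseg : ∀ i : Fin D, Wk src tgt (u i.castSucc) (seg i) (u i.succ) := by
    intro i
    rw [hucast i]
    exact (hnav i).append (hconn i)
  set g0 : V → E := fun x => (hout x).choose with hg0_def
  have hg0 : ∀ x, src (g0 x) = x := fun x => (hout x).choose_spec
  set L : Fin D → ℕ := fun i => (C i.castSucc).length with hL_def
  have hL : ∀ i, 1 ≤ L i := by
    intro i
    have h1 := (hsc i.castSucc).ne_nil
    have h2 := List.length_pos_iff.2 h1
    simp only [hL_def]
    omega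
  refine ⟨∑ i, (seg i).length, (∑ i, L i) + 1, by omega, ?_⟩
  set B := ∑ i, (seg i).length with hB_def
  set T := (∑ i, L i) + 1 with hT_def
  intro n hn
  set M := (n - (B + 1)) / T with hM_def
  have hdesc : ∀ (m : ℕ) (i : Fin (D + 1)), D - (i : ℕ) ≤ m →
      ∀ x, x ∈ (C i).map src → Reaches src tgt x (u (Fin.last D)) := by
    intro m
    induction m with
    | zero =>
      intro i hi x hx
      have hieq : i = Fin.last D := by
        apply Fin.ext
        have h1 := i.isLt
        simp only [Fin.val_last]
        omega
      subst hieq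
      obtain ⟨w2, hw2, _⟩ := (hsc (Fin.last D)).wk_between hx (hu (Fin.last D))
      exact hw2.reaches
    | succ m ih =>
      intro i hi x hx
      rcases eq_or_ne i (Fin.last D) with rfl | hne
      · obtain ⟨w2, hw2, _⟩ := (hsc (Fin.last D)).wk_between hx (hu (Fin.last D))
        exact hw2.reaches
      · have hiD : (i : ℕ) < D := by
          have h1 := i.isLt
          have h2 : (i : ℕ) ≠ D := fun h => hne (Fin.ext (by simp [Fin.val_last, h]))
          omega
        have hjc : (⟨(i : ℕ), hiD⟩ : Fin D).castSucc = i := Fin.ext rfl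
        obtain ⟨w2, hw2, _⟩ := (hsc i).wk_between hx (hjc ▸ hv ⟨(i : ℕ), hiD⟩)
        have h1 : Reaches src tgt x (v ⟨(i : ℕ), hiD⟩) := hw2.reaches
        have h2 : Reaches src tgt (v ⟨(i : ℕ), hiD⟩) (w ⟨(i : ℕ), hiD⟩) :=
          (hconn ⟨(i : ℕ), hiD⟩).reaches
        have h3 : Reaches src tgt (w ⟨(i : ℕ), hiD⟩) (u (Fin.last D)) := by
          refine ih (⟨(i : ℕ), hiD⟩ : Fin D).succ ?_ (w ⟨(i : ℕ), hiD⟩) (hw ⟨(i : ℕ), hiD⟩)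
          simp only [Fin.val_succ]
          omega
        exact (h1.trans h2).trans h3
  have hkey : ∀ a : Fin D → Fin (M + 1),
      ∃ l : List E, l.length = n ∧ IsDiPath src tgt l ∧
        (∀ j : Fin D, l.countP (fun e => decide (src e ∈ (C j.castSucc).map src)) =
          (a j : ℕ) * L j +
            ∑ i, (seg i).countP (fun e => decide (src e ∈ (C j.castSucc).map src))) := by
    intro a
    set big := (List.ofFn (fun i : Fin D => lpow (rot i) (a i) ++ seg i)).flatten with hbig_def
    have hbigwk : Wk src tgt (u 0) big (u (Fin.last D)) :=
      wk_ofFn_flatten u _ (fun i => (wk_lpow (hrot3 i) (a i)).append (hseg i))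
    have hbiglen : big.length = (∑ i, (a i : ℕ) * L i) + B := by
      rw [hbig_def, List.length_flatten, List.map_ofFn, List.sum_ofFn]
      have hterm : ∀ i : Fin D, (lpow (rot i) (a i) ++ seg i).length =
          (a i : ℕ) * L i + (seg i).length := by
        intro i
        rw [List.length_append, length_lpow, hrot4]
      calc (∑ i, ((List.length ∘ fun i => lpow (rot i) (a i) ++ seg i) i))
          = ∑ i, ((a i : ℕ) * L i + (seg i).length) :=
            Finset.sum_congr rfl fun i _ => hterm i
        _ = (∑ i, (a i : ℕ) * L i) + B := Finset.sum_add_distrib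
    have hble : (∑ i, (a i : ℕ) * L i) ≤ M * (∑ i, L i) := by
      rw [Finset.mul_sum]
      refine Finset.sum_le_sum fun i _ => Nat.mul_le_mul_right _ ?_
      exact Nat.lt_succ_iff.1 (a i).isLt
    have hMT : M * T ≤ n - (B + 1) := by
      rw [hM_def]
      exact Nat.div_mul_le_self _ _
    have hMT2 : M * (∑ i, L i) ≤ M * T := Nat.mul_le_mul_left _ (by omega)
    have hbig_le : big.length ≤ n - 1 := by omega
    obtain ⟨fin, hfinwk⟩ := wk_padL g0 hg0 (n - big.length) (u (Fin.last D))
    refine ⟨big ++ padL tgt g0 (u (Fin.last D)) (n - big.length), ?_, ⟨?_, ?_⟩, ?_⟩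
    · rw [List.length_append, length_padL]
      omega
    · intro hnil
      have hc := congrArg List.length hnil
      rw [List.length_append, length_padL] at hc
      simp only [List.length_nil] at hc
      omega
    · exact (hbigwk.append hfinwk).chain'
    · intro j
      rw [List.countP_append]
      have hpad0 : (padL tgt g0 (u (Fin.last D)) (n - big.length)).countP
          (fun e => decide (src e ∈ (C j.castSucc).map src)) = 0 := by
        rw [List.countP_eq_zero]
        intro e he
        simp only [decide_eq_true_eq]
        intro hmem
        have h1 : Reaches src tgt (u (Fin.last D)) (src e) :=
          mem_padL_reaches g0 hg0 _ _ e he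
        have h2 : Reaches src tgt (src e) (u (Fin.last D)) :=
          hdesc D j.castSucc (by omega) (src e) hmem
        obtain ⟨z, hz1, hz2⟩ := mutual_cycles hG (hsc j.castSucc) (hsc (Fin.last D))
          hmem (hu _) h2 h1
        have hjne : j.castSucc ≠ Fin.last D := by
          intro h
          have hc := congrArg Fin.val h
          simp only [Fin.coe_castSucc, Fin.val_last] at hc
          have := j.isLt
          omega
        exact hdisj _ _ hjne z ⟨hz1, hz2⟩
      rw [hpad0, Nat.add_zero, hbig_def, countP_flatten', List.map_ofFn, List.sum_ofFn]
      have hterm : ∀ i : Fin D, ((lpow (rot i) (a i) ++ seg i).countP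
          (fun e => decide (src e ∈ (C j.castSucc).map src))) =
          (if i = j then (a i : ℕ) * L j else 0) +
            (seg i).countP (fun e => decide (src e ∈ (C j.castSucc).map src)) := by
        intro i
        rw [List.countP_append]
        congr 1
        rw [countP_lpow]
        rcases eq_or_ne i j with rfl | hne
        · rw [if_pos rfl]
          have hall : (rot i).countP (fun e => decide (src e ∈ (C i.castSucc).map src)) =
              (rot i).length := by
            rw [List.countP_eq_length]
            intro e he
            simp only [decide_eq_true_eq]
            exact List.mem_map_of_mem (f := src) ((hrot1 i).mem_iff.2 he)
          rw [hall, hrot4]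
        · rw [if_neg hne]
          have hnone : (rot i).countP (fun e => decide (src e ∈ (C j.castSucc).map src)) = 0 := by
            rw [List.countP_eq_zero]
            intro e he
            simp only [decide_eq_true_eq]
            intro hmem
            have hmemi : src e ∈ (C i.castSucc).map src :=
              List.mem_map_of_mem (f := src) ((hrot1 i).mem_iff.2 he)
            exact hdisj i.castSucc j.castSucc
              (fun h => hne (Fin.castSucc_injective _ h)) (src e) ⟨hmemi, hmem⟩
          rw [hnone]
          ring
      calc ∑ i, ((List.countP (fun e => decide (src e ∈ (C j.castSucc).map src)) ∘
              fun i => lpow (rot i) (a i) ++ seg i) i)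
          = ∑ i, ((if i = j then (a i : ℕ) * L j else 0) +
              (seg i).countP (fun e => decide (src e ∈ (C j.castSucc).map src))) :=
            Finset.sum_congr rfl fun i _ => hterm i
        _ = (∑ i, if i = j then (a i : ℕ) * L j else 0) +
            ∑ i, (seg i).countP (fun e => decide (src e ∈ (C j.castSucc).map src)) :=
            Finset.sum_add_distrib
        _ = (a j : ℕ) * L j +
            ∑ i, (seg i).countP (fun e => decide (src e ∈ (C j.castSucc).map src)) := by
            rw [Finset.sum_ite_eq' Finset.univ j (fun i => (a i : ℕ) * L j),
              if_pos (Finset.mem_univ _)]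
  choose P hPlen hPpath hPcnt using hkey
  haveI : Finite {l : List E // l.length = n ∧ IsDiPath src tgt l} := finite_sub_len n _
  have hinj : Function.Injective (fun a : Fin D → Fin (M + 1) =>
      (⟨P a, hPlen a, hPpath a⟩ : {l : List E // l.length = n ∧ IsDiPath src tgt l})) := by
    intro a a' heq
    have hPeq : P a = P a' := congrArg Subtype.val heq
    funext j
    have h1 := hPcnt a j
    have h2 := hPcnt a' j
    rw [hPeq] at h1
    have h3 : (a j : ℕ) * L j = (a' j : ℕ) * L j := by omega
    exact Fin.ext (Nat.eq_of_mul_eq_mul_right (hL j) h3)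
  have hcard := Nat.card_le_card_of_injective _ hinj
  have hdom : Nat.card (Fin D → Fin (M + 1)) = (M + 1) ^ D := by
    rw [Nat.card_eq_fintype_card]
    simp
  rw [hdom] at hcard
  exact hcard

end AuxLowerMain

/-- Let `G` be a finite directed multigraph with no intersecting
cycles in which every vertex has at least one outgoing edge, let `A` be its adjacency
matrix with `‖A‖ = ∑_{a,b} |A_{a,b}|`, and let `D` be the largest `k` admitting a chain
`C₀ ≥ C₁ ≥ ⋯ ≥ C_k` of pairwise vertex-disjoint simple cycles. Then
`‖A ^ n‖ ≍ n ^ D`. -/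
theorem adjMatrix_pow_norm_poly_growth [Fintype V] [DecidableEq V] [Fintype E]
    (src tgt : E → V)
    (hG : NoIntersectingCycles src tgt)
    (hout : ∀ v : V, ∃ e : E, src e = v)
    (D : ℕ)
    (hD : IsGreatest {k : ℕ | ∃ C : Fin (k + 1) → List E,
      (∀ i, IsSimpleCycle src tgt (C i)) ∧
      (∀ i j, i ≠ j → CyclesDisjoint src (C i) (C j)) ∧
      (∀ i : Fin k, CycleReachesCycle src tgt (C i.castSucc) (C i.succ))} D) :
    ∃ c₁ c₂ : ℝ, 0 < c₁ ∧ c₁ ≤ c₂ ∧ ∃ N : ℕ, ∀ n ≥ N,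
      c₁ * (n : ℝ) ^ D ≤ (∑ a : V, ∑ b : V, |((adjMatrix src tgt) ^ n) a b|) ∧
      (∑ a : V, ∑ b : V, |((adjMatrix src tgt) ^ n) a b|) ≤ c₂ * (n : ℝ) ^ D := by
  classical
  obtain ⟨C, hsc, hdisj, hreach⟩ := hD.1
  haveI : Nonempty V := by
    obtain ⟨v0, _, _⟩ := (hsc 0).wk
    exact ⟨v0⟩
  have hmax : ∀ (k : ℕ) (C' : Fin (k + 1) → List E),
      (∀ i, IsSimpleCycle src tgt (C' i)) →
      (∀ i j, i ≠ j → CyclesDisjoint src (C' i) (C' j)) →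
      (∀ i : Fin k, CycleReachesCycle src tgt (C' i.castSucc) (C' i.succ)) → k ≤ D :=
    fun k C' h1 h2 h3 => hD.2 ⟨C', h1, h2, h3⟩
  obtain ⟨K, hK, hup⟩ := totalPaths_le hG hmax
  obtain ⟨B, T, hT, hlo⟩ := totalPaths_ge hG hout C hsc hdisj hreach
  have hTpos : (0 : ℝ) < T := by exact_mod_cast hT
  refine ⟨(1 / (2 * T)) ^ D, max ((1 / (2 * T)) ^ D) ((K : ℝ) * 2 ^ D), by positivity,
    le_max_left _ _, 2 * B + 2 * T + 2, ?_⟩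
  intro n hn
  have hn1 : 1 ≤ n := by omega
  have hnB : B + 1 ≤ n := by omega
  rw [sum_abs_pow (src := src) (tgt := tgt) hn1]
  constructor
  · -- lower bound
    have h1 := hlo n hnB
    set M := (n - (B + 1)) / T with hM_def
    have hMnat : n - (B + 1) + 1 ≤ T * (M + 1) := by
      have hdm := Nat.div_add_mod (n - (B + 1)) T
      have hmod : (n - (B + 1)) % T < T := Nat.mod_lt _ (by omega)
      have hexp : T * (M + 1) = T * M + T := by ring
      rw [hexp, hM_def]
      omega
    have hM1 : ((n : ℝ) - (B + 1)) / T ≤ ((M + 1 : ℕ) : ℝ) := by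
      rw [div_le_iff₀ hTpos]
      have hcast : ((n - (B + 1) : ℕ) : ℝ) = (n : ℝ) - (B + 1) := by
        push_cast [Nat.cast_sub hnB]
        ring
      rw [← hcast]
      have : ((n - (B + 1) : ℕ) : ℝ) ≤ ((T * (M + 1) : ℕ) : ℝ) := by
        exact_mod_cast Nat.le_of_succ_le hMnat
      calc ((n - (B + 1) : ℕ) : ℝ) ≤ ((T * (M + 1) : ℕ) : ℝ) := this
        _ = ((M + 1 : ℕ) : ℝ) * T := by push_cast; ring
    have hhalf : (n : ℝ) / 2 ≤ (n : ℝ) - (B + 1) := by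
      have hcast : (2 * B + 2 * T + 2 : ℝ) ≤ (n : ℝ) := by exact_mod_cast hn
      have hT1 : (1 : ℝ) ≤ T := by exact_mod_cast hT
      linarith
    have hfrac : (n : ℝ) / (2 * T) ≤ ((M + 1 : ℕ) : ℝ) := by
      have e1 : (n : ℝ) / (2 * T) = ((n : ℝ) / 2) / T := by
        field_simp
      rw [e1]
      refine le_trans ?_ hM1
      gcongr
    have hpow : (1 / (2 * T) : ℝ) ^ D * (n : ℝ) ^ D ≤ ((M + 1 : ℕ) : ℝ) ^ D := by
      rw [← mul_pow]
      refine pow_le_pow_left₀ (by positivity) ?_ D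
      rw [one_div, inv_mul_eq_div]
      exact hfrac
    refine hpow.trans ?_
    have hcast2 : (((M + 1) ^ D : ℕ) : ℝ) ≤
        ((Nat.card {l : List E // l.length = n ∧ IsDiPath src tgt l} : ℕ) : ℝ) :=
      Nat.cast_le.2 h1
    calc ((M + 1 : ℕ) : ℝ) ^ D = (((M + 1) ^ D : ℕ) : ℝ) := by push_cast; ring
      _ ≤ _ := hcast2
  · -- upper bound
    have h1 := hup n hn1
    have h2 : ((Nat.card {l : List E // l.length = n ∧ IsDiPath src tgt l} : ℕ) : ℝ) ≤
        (K : ℝ) * ((n : ℝ) + 1) ^ D := by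
      have h2' : ((Nat.card {l : List E // l.length = n ∧ IsDiPath src tgt l} : ℕ) : ℝ) ≤
          ((K * (n + 1) ^ D : ℕ) : ℝ) := Nat.cast_le.2 h1
      push_cast at h2'
      exact h2' 
    have h3 : ((n : ℝ) + 1) ^ D ≤ (2 * n) ^ D := by
      refine pow_le_pow_left₀ (by positivity) ?_ D
      have : (1 : ℝ) ≤ n := by exact_mod_cast hn1
      linarith
    calc ((Nat.card {l : List E // l.length = n ∧ IsDiPath src tgt l} : ℕ) : ℝ)
        ≤ (K : ℝ) * ((n : ℝ) + 1) ^ D := h2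
      _ ≤ (K : ℝ) * (2 * n) ^ D := by
          refine mul_le_mul_of_nonneg_left h3 (by positivity)
      _ = ((K : ℝ) * 2 ^ D) * (n : ℝ) ^ D := by ring
      _ ≤ max ((1 / (2 * T) : ℝ) ^ D) ((K : ℝ) * 2 ^ D) * (n : ℝ) ^ D := by
          refine mul_le_mul_of_nonneg_right (le_max_right _ _) (by positivity)
end
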